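/- arXiv:1909.04287 — 10 statements merged into one kernel-verified Lean document; each statement's English description precedes it below -/
import Mathlib

section
/- For any prime p ≥ 3, any integer k ≥ 2, and any α, β in the p-adic integers with |α - 1|_p < p^{-1/(p-1)} and |β - 1|_p < p^{-1/(p-1)}, there exists γ ∈ ℚ_p with |γ - 1|_p < p^{-1/(p-1)} such that ∑_{j=0}^{k-1} α^{k-j-1} β^j = k·γ. -/
open Finset

/-- Geometric sum of `(1+x)^j` expressed via binomial coefficients. -/
lemma geom_binom {R : Type*} [CommRing R] (x : R) (k : ℕ) :
    ∑ j ∈ Finset.range k, (1 + x) ^ j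
      = ∑ i ∈ Finset.range k, (k.choose (i + 1) : R) * x ^ i := by
  induction k with
  | zero => simp
  | succ k ih =>
    rw [Finset.sum_range_succ, ih]
    have hpow : (1 + x) ^ k = ∑ i ∈ Finset.range (k + 1), (k.choose i : R) * x ^ i := by
      rw [add_comm (1 : R) x, add_pow]
      simp [mul_comm, mul_assoc, mul_left_comm]
    rw [hpow]
    have h1 : ∑ i ∈ Finset.range k, (k.choose (i + 1) : R) * x ^ i
        = ∑ i ∈ Finset.range (k + 1), (k.choose (i + 1) : R) * x ^ i := by
      rw [Finset.sum_range_succ, Nat.choose_succ_self]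
      simp
    rw [h1, ← Finset.sum_add_distrib]
    refine Finset.sum_congr rfl fun i _ => ?_
    rw [Nat.choose_succ_succ' k i]
    push_cast
    ring

/-- A finite sum of `p`-adic numbers of norm `< ε` has norm `< ε`. -/
lemma padic_norm_sum_lt {p : ℕ} [Fact p.Prime] {ε : ℝ} (hε : 0 < ε)
    {m : ℕ} (f : ℕ → ℚ_[p]) (h : ∀ i ∈ Finset.range m, ‖f i‖ < ε) :
    ‖∑ i ∈ Finset.range m, f i‖ < ε := by
  induction m with
  | zero => simpa using hε
  | succ m ih =>
    rw [Finset.sum_range_succ]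
    refine lt_of_le_of_lt (Padic.nonarchimedean _ _) (max_lt ?_ ?_)
    · exact ih fun i hi => h i (Finset.mem_range.2 (Nat.lt_succ_of_lt (Finset.mem_range.1 hi)))
    · exact h m (Finset.mem_range.2 (Nat.lt_succ_self m))

lemma inv_natCast_le_norm (p : ℕ) [Fact p.Prime] (n : ℕ) (hn : 0 < n) :
    ((n : ℝ))⁻¹ ≤ ‖(n : ℚ_[p])‖ := by
  have hn' : (n : ℚ) ≠ 0 := Nat.cast_ne_zero.2 hn.ne'
  have h1 : ‖(n : ℚ_[p])‖ = ((padicNorm p (n : ℚ) : ℚ) : ℝ) := by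
    rw [← Padic.eq_padicNorm]
    norm_cast
  have h2 : padicNorm p (n : ℚ) = ((p : ℚ) ^ (padicValNat p n))⁻¹ := by
    rw [padicNorm, if_neg hn', padicValRat.of_nat, zpow_neg, zpow_natCast]
  have h3 : (p : ℕ) ^ padicValNat p n ≤ n :=
    Nat.le_of_dvd hn pow_padicValNat_dvd
  have h3' : ((p : ℝ)) ^ padicValNat p n ≤ (n : ℝ) := by exact_mod_cast h3
  have hppos : (0 : ℝ) < (p : ℝ) ^ padicValNat p n := by
    have : 0 < p := (Fact.out : p.Prime).pos
    positivity
  rw [h1, h2]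
  push_cast
  exact inv_anti₀ hppos h3'

lemma pow_sub_one_norm_lt {p : ℕ} [Fact p.Prime] {a : ℚ_[p]} (ha : ‖a - 1‖ < 1) (n : ℕ) :
    ‖a ^ n - 1‖ < 1 := by
  have hna : ‖a‖ ≤ 1 := by
    have h := Padic.nonarchimedean (a - 1) 1
    rw [sub_add_cancel] at h
    exact h.trans (max_le ha.le (by simp))
  induction n with
  | zero => simpa using one_pos
  | succ n ih =>
    have he : a ^ (n + 1) - 1 = a * (a ^ n - 1) + (a - 1) := by ring
    rw [he]
    refine lt_of_le_of_lt (Padic.nonarchimedean _ _) (max_lt ?_ ha)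
    rw [norm_mul]
    calc ‖a‖ * ‖a ^ n - 1‖ ≤ 1 * ‖a ^ n - 1‖ :=
          mul_le_mul_of_nonneg_right hna (norm_nonneg _)
      _ < 1 := by simpa using ih

lemma nat_lt_three_pow (i : ℕ) : i + 2 < 3 ^ (i + 1) := by
  induction i with
  | zero => norm_num
  | succ i ih =>
    have h3 : 3 ^ (i + 2) = 3 * 3 ^ (i + 1) := by ring
    omega

/-- Key lemma: the geometric sum over `t` with `‖t-1‖<1` is `k` modulo `k·(maximal ideal)`. -/
lemma geom_sum_sub_k_lt {p : ℕ} [Fact p.Prime] (hp : 3 ≤ p) {t : ℚ_[p]} (ht : ‖t - 1‖ < 1)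
    {k : ℕ} (hk : 1 ≤ k) :
    ‖(∑ j ∈ Finset.range k, t ^ j) - (k : ℚ_[p])‖ < ‖(k : ℚ_[p])‖ := by
  obtain ⟨m, rfl⟩ : ∃ m, k = m + 1 := ⟨k - 1, by omega⟩
  set x := t - 1 with hx
  have hppos : 0 < p := (Fact.out : p.Prime).pos
  have hkpos : (0 : ℝ) < ‖((m + 1 : ℕ) : ℚ_[p])‖ := by
    rw [norm_pos_iff]
    exact Nat.cast_ne_zero.2 (Nat.succ_ne_zero m)
  have ht' : t = 1 + x := by rw [hx]; ring
  have hgeo := geom_binom x (m + 1)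
  rw [ht', hgeo, Finset.sum_range_succ']
  have h0 : ((m + 1).choose (0 + 1) : ℚ_[p]) * x ^ 0 = ((m + 1 : ℕ) : ℚ_[p]) := by
    simp [Nat.choose_one_right]
  rw [h0, add_sub_cancel_right]
  have hxle : ‖x‖ ≤ (p : ℝ)⁻¹ := by
    have h := (Padic.norm_le_pow_iff_norm_lt_pow_add_one x (-1)).2 (by simpa using ht)
    simpa [zpow_neg, zpow_one] using h
  refine padic_norm_sum_lt hkpos _ fun i _ => ?_
  have hchoose : (i + 2) * (m + 1).choose (i + 2) = (m + 1) * m.choose (i + 1) := by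
    have h := Nat.add_one_mul_choose_eq m (i + 1)
    have h2 : i + 1 + 1 = i + 2 := by omega
    rw [h2] at h
    exact (mul_comm _ _).trans h.symm
  have hcast : (((i + 2) : ℕ) : ℚ_[p]) * ((m + 1).choose (i + 2) : ℚ_[p])
      = ((m + 1 : ℕ) : ℚ_[p]) * (m.choose (i + 1) : ℚ_[p]) := by
    exact_mod_cast hchoose
  have hi2 : (0 : ℝ) < ‖(((i + 2) : ℕ) : ℚ_[p])‖ := by
    rw [norm_pos_iff]
    exact Nat.cast_ne_zero.2 (by omega)
  have h1 : ‖(((i + 2) : ℕ) : ℚ_[p])‖ * ‖((m + 1).choose (i + 2) : ℚ_[p])‖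
      = ‖((m + 1 : ℕ) : ℚ_[p])‖ * ‖(m.choose (i + 1) : ℚ_[p])‖ := by
    rw [← norm_mul, ← norm_mul]
    exact congrArg _ hcast
  have h2 : ‖(m.choose (i + 1) : ℚ_[p])‖ ≤ 1 := by
    have h := Padic.norm_int_le_one (p := p) (m.choose (i + 1) : ℤ)
    exact_mod_cast h
  have hC : ‖((m + 1).choose (i + 2) : ℚ_[p])‖
      = ‖((m + 1 : ℕ) : ℚ_[p])‖ * ‖(m.choose (i + 1) : ℚ_[p])‖ / ‖(((i + 2) : ℕ) : ℚ_[p])‖ := by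
    rw [eq_div_iff hi2.ne']
    linarith [h1]
  have hinv : ‖(((i + 2) : ℕ) : ℚ_[p])‖⁻¹ ≤ ((i + 2 : ℕ) : ℝ) := by
    have hipos : (0 : ℝ) < ((i + 2 : ℕ) : ℝ) := by positivity
    exact (inv_le_comm₀ hipos hi2).1 (inv_natCast_le_norm p (i + 2) (by omega))
  have hkey : ((i + 2 : ℕ) : ℝ) * ((p : ℝ)⁻¹) ^ (i + 1) < 1 := by
    have hnat : i + 2 < p ^ (i + 1) :=
      lt_of_lt_of_le (nat_lt_three_pow i) (Nat.pow_le_pow_left hp _)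
    have hr : ((i + 2 : ℕ) : ℝ) < (p : ℝ) ^ (i + 1) := by exact_mod_cast hnat
    have hppos' : (0 : ℝ) < (p : ℝ) ^ (i + 1) := by positivity
    rw [inv_pow, ← div_eq_mul_inv, div_lt_one hppos']
    exact hr
  have hxpow : ‖x‖ ^ (i + 1) ≤ ((p : ℝ)⁻¹) ^ (i + 1) :=
    pow_le_pow_left₀ (norm_nonneg _) hxle _
  calc ‖((m + 1).choose (i + 2) : ℚ_[p]) * x ^ (i + 1)‖
      = ‖((m + 1).choose (i + 2) : ℚ_[p])‖ * ‖x‖ ^ (i + 1) := by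
        rw [norm_mul, norm_pow]
    _ ≤ (‖((m + 1 : ℕ) : ℚ_[p])‖ * 1 / ‖(((i + 2) : ℕ) : ℚ_[p])‖) * ((p : ℝ)⁻¹) ^ (i + 1) := by
        refine mul_le_mul ?_ hxpow (by positivity) (by positivity)
        rw [hC]
        gcongr
    _ = ‖((m + 1 : ℕ) : ℚ_[p])‖ * (‖(((i + 2) : ℕ) : ℚ_[p])‖⁻¹ * ((p : ℝ)⁻¹) ^ (i + 1)) := by
        ring
    _ ≤ ‖((m + 1 : ℕ) : ℚ_[p])‖ * (((i + 2 : ℕ) : ℝ) * ((p : ℝ)⁻¹) ^ (i + 1)) := by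
        refine mul_le_mul_of_nonneg_left ?_ (norm_nonneg _)
        exact mul_le_mul_of_nonneg_right hinv (by positivity)
    _ < ‖((m + 1 : ℕ) : ℚ_[p])‖ * 1 := mul_lt_mul_of_pos_left hkey hkpos
    _ = ‖((m + 1 : ℕ) : ℚ_[p])‖ := mul_one _

theorem padic_sum_eq_k_mul_gamma (p : ℕ) [Fact p.Prime] (hp : 3 ≤ p)
    (k : ℕ) (hk : 2 ≤ k) (α β : ℚ_[p])
    (hα : ‖α - 1‖ < 1) (hβ : ‖β - 1‖ < 1) :
    ∃ γ : ℚ_[p], ‖γ - 1‖ < 1 ∧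
      ∑ j ∈ Finset.range k, α ^ (k - j - 1) * β ^ j = (k : ℚ_[p]) * γ := by
  have hαnorm : ‖α‖ = 1 := by
    have hne : ‖α - 1‖ ≠ ‖(1 : ℚ_[p])‖ := by rw [norm_one]; exact ne_of_lt hα
    have h := Padic.add_eq_max_of_ne hne
    rw [sub_add_cancel] at h
    rw [h, norm_one, max_eq_right hα.le]
  have hα0 : α ≠ 0 := by
    intro h; rw [h, norm_zero] at hαnorm; norm_num at hαnorm
  set t := β / α with htdef
  have hβα : ‖β - α‖ < 1 := by
    have he : β - α = (β - 1) + (1 - α) := by ring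
    rw [he]
    refine lt_of_le_of_lt (Padic.nonarchimedean _ _) (max_lt hβ ?_)
    rw [show (1 : ℚ_[p]) - α = -(α - 1) by ring, norm_neg]
    exact hα
  have htt : ‖t - 1‖ < 1 := by
    have he : t - 1 = (β - α) / α := by rw [htdef]; field_simp
    rw [he, norm_div, hαnorm, div_one]
    exact hβα
  have hk1 : 1 ≤ k := by omega
  have hG := geom_sum_sub_k_lt hp htt hk1
  set G := ∑ j ∈ Finset.range k, t ^ j with hGdef
  have hknz : ((k : ℚ_[p])) ≠ 0 := Nat.cast_ne_zero.2 (by omega)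
  have hkn : (0 : ℝ) < ‖(k : ℚ_[p])‖ := norm_pos_iff.2 hknz
  refine ⟨α ^ (k - 1) * G / k, ?_, ?_⟩
  · have heq : α ^ (k - 1) * G / k - 1
        = (α ^ (k - 1) * (G - k) + k * (α ^ (k - 1) - 1)) / k := by
      field_simp
      ring
    rw [heq, norm_div, div_lt_one hkn]
    refine lt_of_le_of_lt (Padic.nonarchimedean _ _) (max_lt ?_ ?_)
    · rw [norm_mul, norm_pow, hαnorm, one_pow, one_mul]
      exact hG
    · rw [norm_mul]
      calc ‖(k : ℚ_[p])‖ * ‖α ^ (k - 1) - 1‖ < ‖(k : ℚ_[p])‖ * 1 :=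
            mul_lt_mul_of_pos_left (pow_sub_one_norm_lt hα _) hkn
        _ = ‖(k : ℚ_[p])‖ := mul_one _
  · rw [mul_comm, div_mul_cancel₀ _ hknz, hGdef, Finset.mul_sum]
    refine Finset.sum_congr rfl fun j hj => ?_
    have hjk : j < k := Finset.mem_range.1 hj
    have hsplit : α ^ (k - 1) = α ^ (k - j - 1) * α ^ j := by
      rw [← pow_add]
      congr 1
      omega
    have hαj : α ^ j ≠ 0 := pow_ne_zero _ hα0
    rw [htdef, div_pow, hsplit, mul_assoc, mul_div_assoc', mul_comm (α ^ j),
      mul_div_assoc, div_self hαj, mul_one]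
end

section
/- Let p ≥ 3 be prime and k ≥ 2 an integer. For any x ∈ ℤ_p^* with first canonical digit x₀ ∈ {1,...,p-1} (i.e. |x - x₀|_p < 1), one has |x^k - x₀^k|_p < |k|_p. -/
open Finset in
private lemma aux_inv_le_norm (p : ℕ) [Fact p.Prime] (n : ℕ) (hn : 0 < n) :
    (n : ℝ)⁻¹ ≤ ‖(n : ℚ_[p])‖ := by
  have hv : p ^ padicValNat p n ≤ n := Nat.le_of_dvd hn pow_padicValNat_dvd
  have h1 : ‖(n : ℚ_[p])‖ = ((padicNorm p n : ℚ) : ℝ) := by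
    rw [show ((n : ℚ_[p])) = ((n : ℚ) : ℚ_[p]) by norm_cast]
    exact_mod_cast Padic.eq_padicNorm (n : ℚ)
  have h2 : padicNorm p (n : ℚ) = (p : ℚ) ^ (-(padicValNat p n : ℤ)) := by
    rw [padicNorm.eq_zpow_of_nonzero (by exact_mod_cast hn.ne')]
    congr 1
    simp [padicValRat.of_nat]
  have h3 : padicNorm p (n : ℚ) = (((p ^ padicValNat p n : ℕ) : ℚ))⁻¹ := by
    rw [h2, zpow_neg, zpow_natCast]; push_cast; ring
  rw [h1, h3]
  push_cast
  gcongr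
  · exact pow_pos (by exact_mod_cast (Fact.out : p.Prime).pos) _
  · exact_mod_cast hv

theorem padic_pow_sub_digit_pow (p : ℕ) [Fact p.Prime] (hp : 3 ≤ p)
    (k : ℕ) (hk : 2 ≤ k) (x : ℚ_[p]) (hx : ‖x‖ = 1)
    (x₀ : ℕ) (hx₀ : 1 ≤ x₀) (hx₀' : x₀ ≤ p - 1)
    (hclose : ‖x - (x₀ : ℚ_[p])‖ < 1) :
    ‖x ^ k - (x₀ : ℚ_[p]) ^ k‖ < ‖(k : ℚ_[p])‖ := by
  have hpp : 1 < p := (Fact.out : p.Prime).one_lt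
  have hp1 : (1:ℝ) < (p:ℝ) := by exact_mod_cast hpp
  set t : ℚ_[p] := x - (x₀ : ℚ_[p]) with htdef
  have ht1 : ‖t‖ ≤ (p : ℝ)⁻¹ := by
    have := (Padic.norm_le_pow_iff_norm_lt_pow_add_one t (-1)).2
    simpa using this (by simpa using hclose)
  have hkpos : 0 < k := lt_of_lt_of_le two_pos hk
  have hknorm : 0 < ‖(k : ℚ_[p])‖ := by
    rw [norm_pos_iff]
    exact_mod_cast hkpos.ne'
  -- binomial expansion
  have expand : x ^ k - (x₀ : ℚ_[p]) ^ k =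
      ∑ i ∈ Finset.range k,
        t ^ (i+1) * (x₀ : ℚ_[p]) ^ (k - (i+1)) * (k.choose (i+1) : ℚ_[p]) := by
    have hx' : x = t + (x₀ : ℚ_[p]) := by ring
    rw [hx', add_pow, Finset.sum_range_succ']
    simp [Nat.choose_zero_right]
  rw [expand]
  have hterm : ∀ i ∈ Finset.range k,
      ‖t ^ (i+1) * (x₀ : ℚ_[p]) ^ (k - (i+1)) * (k.choose (i+1) : ℚ_[p])‖
        < ‖(k : ℚ_[p])‖ := by
    intro i _
    set j := i + 1 with hjdef
    have hj : 0 < j := Nat.succ_pos i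
    -- choose identity : k * C(k-1, j-1) = C(k, j) * j
    have hid : (k : ℚ_[p]) * ((k-1).choose (j-1) : ℚ_[p])
        = (k.choose j : ℚ_[p]) * (j : ℚ_[p]) := by
      have := Nat.add_one_mul_choose_eq (k-1) (j-1)
      rw [Nat.sub_add_cancel (le_trans one_le_two hk),
        Nat.sub_add_cancel hj] at this
      exact_mod_cast congrArg (Nat.cast : ℕ → ℚ_[p]) this
    have hjnorm : 0 < ‖(j : ℚ_[p])‖ := by
      rw [norm_pos_iff]; exact_mod_cast hj.ne'
    have hCle : ‖(k.choose j : ℚ_[p])‖ ≤ ‖(k : ℚ_[p])‖ * ‖(j : ℚ_[p])‖⁻¹ := by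
      rw [← div_eq_mul_inv, le_div_iff₀ hjnorm, ← norm_mul, ← hid,
        norm_mul]
      have : ‖(((k-1).choose (j-1) : ℤ) : ℚ_[p])‖ ≤ 1 := Padic.norm_int_le_one _
      calc ‖(k : ℚ_[p])‖ * ‖((k-1).choose (j-1) : ℚ_[p])‖
          ≤ ‖(k : ℚ_[p])‖ * 1 := by
            apply mul_le_mul_of_nonneg_left _ (norm_nonneg _)
            exact_mod_cast this
        _ = ‖(k : ℚ_[p])‖ := mul_one _
    have hx0le : ‖((x₀ : ℚ_[p])) ^ (k - j)‖ ≤ 1 := by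
      rw [norm_pow]
      apply pow_le_one₀ (norm_nonneg _)
      have : ‖(((x₀:ℤ)) : ℚ_[p])‖ ≤ 1 := Padic.norm_int_le_one _
      exact_mod_cast this
    have hjinv : ‖(j : ℚ_[p])‖⁻¹ ≤ (j : ℝ) := by
      rw [inv_le_comm₀ hjnorm (by exact_mod_cast hj)]
      exact aux_inv_le_norm p j hj
    have hlast : (j : ℝ) * ((p:ℝ)⁻¹) ^ j < 1 := by
      rw [inv_pow, mul_inv_lt_iff₀ (by positivity), one_mul]
      exact_mod_cast Nat.lt_pow_self (n := j) hpp
    calc ‖t ^ j * (x₀ : ℚ_[p]) ^ (k - j) * (k.choose j : ℚ_[p])‖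
        = ‖t‖ ^ j * ‖(x₀ : ℚ_[p]) ^ (k - j)‖ * ‖(k.choose j : ℚ_[p])‖ := by
          rw [norm_mul, norm_mul, norm_pow]
      _ ≤ ‖t‖ ^ j * 1 * (‖(k : ℚ_[p])‖ * ‖(j : ℚ_[p])‖⁻¹) := by
          apply mul_le_mul _ hCle (norm_nonneg _) (by positivity)
          exact mul_le_mul_of_nonneg_left hx0le (by positivity)
      _ ≤ ((p:ℝ)⁻¹) ^ j * 1 * (‖(k : ℚ_[p])‖ * (j : ℝ)) := by
          apply mul_le_mul
          · apply mul_le_mul_of_nonneg_right _ one_pos.le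
            exact pow_le_pow_left₀ (norm_nonneg _) ht1 j
          · exact mul_le_mul_of_nonneg_left hjinv hknorm.le
          · positivity
          · positivity
      _ = ‖(k : ℚ_[p])‖ * ((j:ℝ) * ((p:ℝ)⁻¹) ^ j) := by ring
      _ < ‖(k : ℚ_[p])‖ * 1 := by
          exact mul_lt_mul_of_pos_left hlast hknorm
      _ = ‖(k : ℚ_[p])‖ := mul_one _
  obtain ⟨i, hi, hle⟩ := IsUltrametricDist.exists_norm_finset_sum_le_of_nonempty
    (Finset.nonempty_range_iff.2 hkpos.ne')
    (fun i => t ^ (i+1) * (x₀ : ℚ_[p]) ^ (k - (i+1)) * (k.choose (i+1) : ℚ_[p]))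
  exact lt_of_le_of_lt hle (hterm i hi)
end

section
/- Let p ≥ 3 be prime and write k = m·p^s with gcd(m,p) = 1 and s ≥ 0. Let a ∈ ℤ_p^* with first digit a₀ (so 1 ≤ a₀ ≤ p-1 and |a - a₀|_p < 1). If there exists x ∈ ℤ_p^* with x^k = a, then |a - a₀^{p^s}|_p < p^{-s}. -/
open Finset in
private lemma aux_step {p : ℕ} [Fact p.Prime] (x y : ℤ_[p]) (h : (p : ℤ_[p]) ∣ x - y) :
    (p : ℤ_[p]) * (x - y) ∣ x ^ p - y ^ p := by
  have hgeom : (∑ i ∈ range p, x ^ i * y ^ (p - 1 - i)) * (x - y) = x ^ p - y ^ p :=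
    geom_sum₂_mul x y p
  have hdvd : (p : ℤ_[p]) ∣ ∑ i ∈ range p, x ^ i * y ^ (p - 1 - i) := by
    have hsplit : ∑ i ∈ range p, x ^ i * y ^ (p - 1 - i)
        = (∑ i ∈ range p, (x ^ i - y ^ i) * y ^ (p - 1 - i)) + (p : ℤ_[p]) * y ^ (p - 1) := by
      have hcard : ((p : ℤ_[p])) * y ^ (p - 1) = ∑ _i ∈ range p, y ^ (p - 1) := by
        rw [Finset.sum_const, card_range, nsmul_eq_mul]
      rw [hcard, ← Finset.sum_add_distrib]
      refine Finset.sum_congr rfl fun i hi => ?_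
      rw [Finset.mem_range] at hi
      have : y ^ i * y ^ (p - 1 - i) = y ^ (p - 1) := by
        rw [← pow_add]
        congr 1
        omega
      rw [← this]
      ring
    rw [hsplit]
    refine dvd_add (Finset.dvd_sum fun i _ => ?_) (Dvd.intro _ rfl)
    exact Dvd.dvd.mul_right (h.trans (sub_dvd_pow_sub_pow x y i)) _
  rw [← hgeom]
  exact mul_dvd_mul hdvd dvd_rfl

private lemma aux_pow {p : ℕ} [Fact p.Prime] (x y : ℤ_[p]) (h : (p : ℤ_[p]) ∣ x - y) (s : ℕ) :
    (p : ℤ_[p]) ^ (s + 1) ∣ x ^ p ^ s - y ^ p ^ s := by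
  induction s with
  | zero => simpa using h
  | succ s ih =>
    have h1 : (p : ℤ_[p]) ∣ x ^ p ^ s - y ^ p ^ s :=
      (dvd_pow_self (p : ℤ_[p]) (Nat.succ_ne_zero s)).trans ih
    have := aux_step (x ^ p ^ s) (y ^ p ^ s) h1
    rw [← pow_mul, ← pow_mul, ← pow_succ] at this
    refine dvd_trans ?_ this
    rw [pow_succ, mul_comm]
    exact mul_dvd_mul_left _ ih

theorem padic_monomial_necessary (p : ℕ) [Fact p.Prime] (hp : 3 ≤ p)
    (m s k : ℕ) (hm : Nat.Coprime m p) (hkdef : k = m * p ^ s)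
    (a : ℚ_[p]) (ha : ‖a‖ = 1)
    (a₀ : ℕ) (ha₀ : 1 ≤ a₀) (ha₀' : a₀ ≤ p - 1)
    (hclose : ‖a - (a₀ : ℚ_[p])‖ < 1)
    (hsol : ∃ x : ℚ_[p], ‖x‖ = 1 ∧ x ^ k = a) :
    ‖a - (a₀ : ℚ_[p]) ^ (p ^ s)‖ < (p : ℝ) ^ (-(s : ℤ)) := by
  obtain ⟨x, hx, hxk⟩ := hsol
  set A : ℤ_[p] := ⟨a, ha.le⟩ with hA
  set X : ℤ_[p] := ⟨x, hx.le⟩ with hX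
  have hXA : X ^ k = A := by
    apply Subtype.ext
    push_cast [hA, hX]
    exact hxk
  set Y : ℤ_[p] := X ^ m with hY
  have hYA : Y ^ p ^ s = A := by rw [hY, ← pow_mul, ← hkdef, hXA]
  -- p ∣ A - a₀
  have hAa₀ : (p : ℤ_[p]) ∣ A - (a₀ : ℤ_[p]) := by
    rw [← PadicInt.norm_lt_one_iff_dvd]
    have : ((A - (a₀ : ℤ_[p]) : ℤ_[p]) : ℚ_[p]) = a - (a₀ : ℚ_[p]) := by rw [PadicInt.coe_sub, PadicInt.coe_natCast]
    rw [PadicInt.norm_def, this]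
    exact hclose
  -- p ∣ Y - a₀, via ZMod p
  have hYa₀ : (p : ℤ_[p]) ∣ Y - (a₀ : ℤ_[p]) := by
    rw [← Ideal.mem_span_singleton, ← PadicInt.maximalIdeal_eq_span_p,
      ← PadicInt.ker_toZMod, RingHom.mem_ker, map_sub, map_natCast, sub_eq_zero]
    have h1 : (PadicInt.toZMod Y) ^ p ^ s = (a₀ : ZMod p) := by
      rw [← map_pow, hYA]
      have : PadicInt.toZMod (A - (a₀ : ℤ_[p])) = 0 := by
        rw [← RingHom.mem_ker, PadicInt.ker_toZMod, PadicInt.maximalIdeal_eq_span_p,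
          Ideal.mem_span_singleton]
        exact hAa₀
      rw [map_sub, map_natCast, sub_eq_zero] at this
      exact this
    rw [← h1, ZMod.pow_card_pow]
  have hdvd : (p : ℤ_[p]) ^ (s + 1) ∣ A - (a₀ : ℤ_[p]) ^ p ^ s := by
    have := aux_pow Y (a₀ : ℤ_[p]) hYa₀ s
    rwa [hYA] at this
  have hnorm : ‖A - (a₀ : ℤ_[p]) ^ p ^ s‖ ≤ (p : ℝ) ^ (-(s + 1 : ℕ) : ℤ) := by
    rw [PadicInt.norm_le_pow_iff_mem_span_pow, Ideal.mem_span_singleton]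
    exact hdvd
  have hcoe : ((A - (a₀ : ℤ_[p]) ^ p ^ s : ℤ_[p]) : ℚ_[p]) = a - (a₀ : ℚ_[p]) ^ p ^ s := by
    rw [PadicInt.coe_sub, PadicInt.coe_pow, PadicInt.coe_natCast]
  rw [← hcoe, ← PadicInt.norm_def]
  calc ‖A - (a₀ : ℤ_[p]) ^ p ^ s‖ ≤ (p : ℝ) ^ (-(s + 1 : ℕ) : ℤ) := hnorm
    _ < (p : ℝ) ^ (-(s : ℤ)) := by
        apply zpow_lt_zpow_right₀ (by exact_mod_cast (Fact.out : p.Prime).one_lt)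
        omega
end

section
/- Let p ≥ 3 be prime, k = m·p^s with gcd(m,p) = 1, s ≥ 0, and a ∈ ℤ_p^* with first digit a₀. Suppose |a - a₀^{p^s}|_p < p^{-s}. Then for every ξ ∈ {1,...,p-1} with |ξ^k - a|_p < 1, the equation x^k = a has exactly one solution x ∈ ℤ_p with |x - ξ|_p < 1. -/
open Finset

lemma sum_range_peel2 {M : Type*} [AddCommMonoid M] (f : ℕ → M) (n : ℕ) :
    ∑ i ∈ range (n+2), f i = f 0 + f 1 + ∑ i ∈ range n, f (i+2) := by
  rw [Finset.sum_range_succ', Finset.sum_range_succ']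
  abel

lemma norm_nat_le_inv {p : ℕ} [Fact p.Prime] {n : ℕ} (hd : p ∣ n) :
    ‖(n : ℤ_[p])‖ ≤ (p : ℝ)⁻¹ := by
  have h1 : ‖(n : ℤ_[p])‖ < 1 := by
    rw [show ((n : ℤ_[p])) = ((n : ℤ) : ℤ_[p]) by push_cast; ring]
    exact (PadicInt.norm_int_lt_one_iff_dvd _).2 (Int.natCast_dvd_natCast.2 hd)
  have := (PadicInt.norm_le_pow_iff_norm_lt_pow_add_one (n : ℤ_[p]) (-1)).2 (by
    simpa using h1)
  simpa using this

lemma expansion_bound {p : ℕ} [hpp : Fact p.Prime] (hp3 : 3 ≤ p) (c : ℤ_[p])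
    (hc : ‖c‖ ≤ (p:ℝ)⁻¹) : ‖(1+c)^p - 1 - p*c‖ ≤ (p:ℝ)⁻¹ * ‖c‖^2 := by
  have hle1 : ‖c‖ ≤ 1 := PadicInt.norm_le_one c
  have hsplit : p + 1 = (p - 1) + 2 := by omega
  have h2 : (1+c)^p = 1 + p*c + ∑ i ∈ range (p-1), c^(i+2) * ((p.choose (i+2) : ℕ) : ℤ_[p]) := by
    rw [add_comm 1 c, add_pow, hsplit, sum_range_peel2]
    simp [Nat.choose_one_right]
    ring
  rw [h2]
  have h3 : (1 : ℤ_[p]) + ↑p * c + (∑ i ∈ range (p-1), c^(i+2) * ((p.choose (i+2) : ℕ) : ℤ_[p])) - 1 - ↑p*c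
      = ∑ i ∈ range (p-1), c^(i+2) * ((p.choose (i+2) : ℕ) : ℤ_[p]) := by ring
  rw [h3]
  apply IsUltrametricDist.norm_sum_le_of_forall_le_of_nonneg (by positivity)
  intro i hi
  rw [Finset.mem_range] at hi
  rw [norm_mul, norm_pow]
  rcases lt_or_eq_of_le (show i + 2 ≤ p by omega) with h | h
  · calc ‖c‖ ^ (i+2) * ‖((p.choose (i+2) : ℕ) : ℤ_[p])‖
        ≤ ‖c‖ ^ 2 * (p:ℝ)⁻¹ := by
          apply mul_le_mul _ (norm_nat_le_inv (hpp.out.dvd_choose_self (by omega) h)) (norm_nonneg _) (by positivity)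
          calc ‖c‖ ^ (i+2) ≤ ‖c‖ ^ 2 := pow_le_pow_of_le_one (norm_nonneg _) hle1 (by omega)
            _ = ‖c‖ ^ 2 := rfl
      _ = (p:ℝ)⁻¹ * ‖c‖^2 := by ring
  · rw [h, Nat.choose_self]
    push_cast
    rw [norm_one, mul_one]
    calc ‖c‖ ^ p ≤ ‖c‖ ^ 3 := pow_le_pow_of_le_one (norm_nonneg _) hle1 hp3
      _ = ‖c‖ * ‖c‖ ^ 2 := by ring
      _ ≤ (p:ℝ)⁻¹ * ‖c‖ ^ 2 := by
          apply mul_le_mul_of_nonneg_right hc (by positivity)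

-- B : equality
lemma pow_p_norm_eq {p : ℕ} [hpp : Fact p.Prime] (hp3 : 3 ≤ p) (w : ℤ_[p])
    (hw : ‖w - 1‖ ≤ (p:ℝ)⁻¹) : ‖w^p - 1‖ = (p:ℝ)⁻¹ * ‖w - 1‖ := by
  set c := w - 1 with hc
  have hw1 : w = 1 + c := by rw [hc]; ring
  rcases eq_or_ne c 0 with h0 | h0
  · simp [hw1, h0]
  have hcpos : 0 < ‖c‖ := norm_pos_iff.2 h0
  have hb := expansion_bound hp3 c hw
  have hppos : (0:ℝ) < (p:ℝ)⁻¹ := by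
    have : (0:ℝ) < p := by exact_mod_cast hpp.out.pos
    positivity
  have hlt : ‖w^p - 1 - p*c‖ < ‖(p:ℤ_[p])*c‖ := by
    rw [norm_mul, PadicInt.norm_p]
    calc ‖w^p - 1 - ↑p*c‖ = ‖(1+c)^p - 1 - ↑p*c‖ := by rw [hw1]
      _ ≤ (p:ℝ)⁻¹ * ‖c‖^2 := hb
      _ < (p:ℝ)⁻¹ * ‖c‖ := by
          apply mul_lt_mul_of_pos_left _ hppos
          calc ‖c‖^2 = ‖c‖ * ‖c‖ := sq ‖c‖
            _ < 1 * ‖c‖ := by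
                apply mul_lt_mul_of_pos_right _ hcpos
                calc ‖c‖ ≤ (p:ℝ)⁻¹ := hw
                  _ < 1 := by
                      rw [inv_lt_one_iff₀]
                      right; exact_mod_cast hpp.out.one_lt
            _ = ‖c‖ := one_mul _
  have := PadicInt.norm_add_eq_max_of_ne (p := p) (q := w^p - 1 - ↑p*c) (r := ↑p*c) (ne_of_lt hlt)
  rw [sub_add_cancel] at this
  rw [this, max_eq_right (le_of_lt hlt), norm_mul, PadicInt.norm_p]

-- C : iterated
lemma pow_ps_norm_eq {p : ℕ} [hpp : Fact p.Prime] (hp3 : 3 ≤ p) (s : ℕ) (w : ℤ_[p])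
    (hw : ‖w - 1‖ ≤ (p:ℝ)⁻¹) : ‖w^(p^s) - 1‖ = ((p:ℝ)⁻¹)^s * ‖w - 1‖ := by
  induction s with
  | zero => simp
  | succ n ih =>
    have h1 : ‖w^(p^n) - 1‖ ≤ (p:ℝ)⁻¹ := by
      rw [ih]
      calc ((p:ℝ)⁻¹)^n * ‖w - 1‖ ≤ 1 * (p:ℝ)⁻¹ := by
            apply mul_le_mul _ hw (norm_nonneg _) zero_le_one
            apply pow_le_one₀ (by positivity)
            rw [inv_le_one_iff₀]; right; exact_mod_cast hpp.out.one_le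
        _ = (p:ℝ)⁻¹ := one_mul _
    have := pow_p_norm_eq hp3 (w^(p^n)) h1
    rw [← pow_mul, ← pow_succ] at this
    rw [this, ih]
    ring

lemma norm_lt_one_le_inv {p : ℕ} [hpp : Fact p.Prime] {x : ℤ_[p]} (h : ‖x‖ < 1) :
    ‖x‖ ≤ (p:ℝ)⁻¹ := by
  have := (PadicInt.norm_le_pow_iff_norm_lt_pow_add_one x (-1)).2 (by simpa using h)
  simpa using this

lemma norm_nat_coprime {p : ℕ} [hpp : Fact p.Prime] {n : ℕ} (h : ¬ p ∣ n) :
    ‖(n : ℤ_[p])‖ = 1 := by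
  by_contra hne
  have hlt : ‖(n : ℤ_[p])‖ < 1 := lt_of_le_of_ne (PadicInt.norm_le_one _) hne
  apply h
  have := (PadicInt.norm_int_lt_one_iff_dvd (n:ℤ)).1 (by push_cast; exact_mod_cast hlt)
  exact_mod_cast this

-- D : geometric
lemma pow_m_norm_eq {p : ℕ} [hpp : Fact p.Prime] {m : ℕ} (hm : Nat.Coprime m p) (w : ℤ_[p])
    (hw : ‖w - 1‖ < 1) : ‖w^m - 1‖ = ‖w - 1‖ := by
  have hgs : (∑ i ∈ range m, w ^ i) * (w - 1) = w ^ m - 1 := geom_sum_mul w m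
  have hsum : ‖∑ i ∈ range m, w ^ i‖ = 1 := by
    have hmp : ¬ p ∣ m := by
      intro hd
      have h1 : p ∣ Nat.gcd m p := Nat.dvd_gcd hd dvd_rfl
      rw [Nat.Coprime] at hm
      rw [hm] at h1
      exact Nat.Prime.one_lt hpp.out |>.ne' (Nat.dvd_one.mp h1)
    have hterm : ∀ i ∈ range m, ‖w ^ i - 1‖ ≤ ‖w - 1‖ := by
      intro i _
      have := geom_sum_mul w i
      rw [← this, norm_mul]
      calc ‖∑ j ∈ range i, w ^ j‖ * ‖w - 1‖ ≤ 1 * ‖w - 1‖ :=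
            mul_le_mul_of_nonneg_right (PadicInt.norm_le_one _) (norm_nonneg _)
        _ = ‖w - 1‖ := one_mul _
    have hdiff : ‖(∑ i ∈ range m, w ^ i) - (m : ℤ_[p])‖ < 1 := by
      have : (∑ i ∈ range m, w ^ i) - (m : ℤ_[p]) = ∑ i ∈ range m, (w ^ i - 1) := by
        rw [Finset.sum_sub_distrib]
        simp
      rw [this]
      calc ‖∑ i ∈ range m, (w ^ i - 1)‖ ≤ ‖w - 1‖ :=
            IsUltrametricDist.norm_sum_le_of_forall_le_of_nonneg (norm_nonneg _) hterm
        _ < 1 := hw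
    have hmnorm : ‖(m : ℤ_[p])‖ = 1 := norm_nat_coprime hmp
    have hne : ‖(∑ i ∈ range m, w ^ i) - (m : ℤ_[p])‖ ≠ ‖(m : ℤ_[p])‖ := by
      rw [hmnorm]; exact ne_of_lt hdiff
    have := PadicInt.norm_add_eq_max_of_ne (p := p)
      (q := (∑ i ∈ range m, w ^ i) - (m : ℤ_[p])) (r := (m : ℤ_[p])) hne
    rw [sub_add_cancel] at this
    rw [this, max_eq_right (by rw [hmnorm]; exact le_of_lt hdiff), hmnorm]
  rw [← hgs, norm_mul, hsum, one_mul]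

-- E : injectivity
lemma pow_k_inj {p : ℕ} [hpp : Fact p.Prime] (hp3 : 3 ≤ p) {m s : ℕ} (hm : Nat.Coprime m p)
    (w : ℤ_[p]) (hw : ‖w - 1‖ < 1) (hk : w ^ (m * p ^ s) = 1) : w = 1 := by
  have h1 : ‖w^m - 1‖ = ‖w - 1‖ := pow_m_norm_eq hm w hw
  have h2 : ‖(w^m)^(p^s) - 1‖ = ((p:ℝ)⁻¹)^s * ‖w^m - 1‖ :=
    pow_ps_norm_eq hp3 s (w^m) (by rw [h1]; exact norm_lt_one_le_inv hw)
  rw [← pow_mul, hk, sub_self, norm_zero] at h2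
  have hppos : (0:ℝ) < (p:ℝ)⁻¹ := by
    have : (0:ℝ) < p := by exact_mod_cast hpp.out.pos
    positivity
  have hps : (0:ℝ) < ((p:ℝ)⁻¹)^s := pow_pos hppos s
  have hz : ‖w ^ m - 1‖ = 0 := by
    rcases mul_eq_zero.1 h2.symm with h | h
    · exact absurd h (ne_of_gt hps)
    · exact h
  rw [h1] at hz
  exact sub_eq_zero.1 (norm_eq_zero.1 hz)

-- F : m-th root
lemma exists_m_root {p : ℕ} [hpp : Fact p.Prime] {m : ℕ} (hm : Nat.Coprime m p)
    (v : ℤ_[p]) (hv : ‖v - 1‖ < 1) : ∃ u : ℤ_[p], ‖u - 1‖ < 1 ∧ u ^ m = v := by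
  have hmp : ¬ p ∣ m := by
    intro hd
    have h1 : p ∣ Nat.gcd m p := Nat.dvd_gcd hd dvd_rfl
    rw [Nat.Coprime] at hm
    rw [hm] at h1
    exact Nat.Prime.one_lt hpp.out |>.ne' (Nat.dvd_one.mp h1)
  have hm0 : m ≠ 0 := by rintro rfl; exact hmp (dvd_zero p)
  set F : Polynomial ℤ_[p] := Polynomial.X ^ m - Polynomial.C v with hF
  have heval : F.eval 1 = 1 - v := by simp [hF]
  have hderiv : F.derivative.eval 1 = (m : ℤ_[p]) := by
    simp [hF, Polynomial.derivative_X_pow]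
  have hnorm : ‖F.eval 1‖ < ‖F.derivative.eval 1‖ ^ 2 := by
    rw [heval, hderiv, norm_nat_coprime hmp, one_pow]
    rwa [norm_sub_rev] at hv
  obtain ⟨z, hz1, hz2, _, _⟩ := hensels_lemma hnorm
  simp only [Polynomial.coe_aeval_eq_eval] at hz1 hz2
  refine ⟨z, ?_, ?_⟩
  · rw [hderiv, norm_nat_coprime hmp] at hz2
    exact hz2
  · have : z ^ m - v = 0 := by simpa [hF] using hz1
    exact sub_eq_zero.1 this

-- G : p-th root one step
lemma exists_p_root {p : ℕ} [hpp : Fact p.Prime] (hp3 : 3 ≤ p) {j : ℕ} (hj : 1 ≤ j)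
    (b : ℤ_[p]) (hb : ‖b - 1‖ ≤ ((p:ℝ)⁻¹) ^ (j+1)) :
    ∃ v : ℤ_[p], ‖v - 1‖ ≤ ((p:ℝ)⁻¹) ^ j ∧ v ^ p = b := by
  have hp0 : (0:ℝ) < p := by exact_mod_cast hpp.out.pos
  have hpi : (0:ℝ) < (p:ℝ)⁻¹ := by positivity
  have hpi1 : (p:ℝ)⁻¹ < 1 := by
    rw [inv_lt_one_iff₀]; right; exact_mod_cast hpp.out.one_lt
  have hble : ‖b - 1‖ ≤ (p:ℝ)⁻¹ := le_trans hb (by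
    calc ((p:ℝ)⁻¹)^(j+1) ≤ ((p:ℝ)⁻¹)^1 := pow_le_pow_of_le_one (le_of_lt hpi) (le_of_lt hpi1) (by omega)
      _ = (p:ℝ)⁻¹ := pow_one _)
  have hdvd : (p : ℤ_[p]) ∣ (b - 1) := by
    have := (PadicInt.norm_le_pow_iff_mem_span_pow (b-1) 1).1 (by simpa using hble)
    rwa [pow_one, Ideal.mem_span_singleton] at this
  obtain ⟨c, hc⟩ := hdvd
  have hb' : b = 1 + (p:ℤ_[p]) * c := by rw [← hc]; ring
  have hcnorm : ‖c‖ ≤ ((p:ℝ)⁻¹) ^ j := by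
    have h1 : ‖b - 1‖ = (p:ℝ)⁻¹ * ‖c‖ := by rw [hc, norm_mul, PadicInt.norm_p]
    have h2 : (p:ℝ)⁻¹ * ‖c‖ ≤ (p:ℝ)⁻¹ * ((p:ℝ)⁻¹)^j := by
      rw [← h1, ← pow_succ']
      exact hb
    exact le_of_mul_le_mul_left h2 hpi
  have hcle : ‖c‖ ≤ (p:ℝ)⁻¹ := le_trans hcnorm (by
    calc ((p:ℝ)⁻¹)^j ≤ ((p:ℝ)⁻¹)^1 := pow_le_pow_of_le_one (le_of_lt hpi) (le_of_lt hpi1) hj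
      _ = (p:ℝ)⁻¹ := pow_one _)
  have hclt : ‖c‖ < 1 := lt_of_le_of_lt hcle hpi1
  set a : ℤ_[p] := 1 + c with ha
  have hanorm : ‖a‖ = 1 := by
    rcases eq_or_ne c 0 with rfl | hc0
    · simp [ha]
    · have hne : ‖(1:ℤ_[p])‖ ≠ ‖c‖ := by rw [norm_one]; exact (ne_of_lt hclt).symm
      rw [ha, PadicInt.norm_add_eq_max_of_ne hne, norm_one]
      exact max_eq_left (le_of_lt hclt)
  set F : Polynomial ℤ_[p] := Polynomial.X ^ p - Polynomial.C b with hF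
  have heval : F.eval a = (1+c)^p - 1 - p*c := by
    have h1 : F.eval a = a ^ p - b := by simp [hF]
    rw [h1, ha, hb']; ring
  have hderiv : F.derivative.eval a = (p : ℤ_[p]) * a ^ (p-1) := by
    simp [hF, Polynomial.derivative_X_pow]
  have hdnorm : ‖F.derivative.eval a‖ = (p:ℝ)⁻¹ := by
    rw [hderiv, norm_mul, PadicInt.norm_p, norm_pow, hanorm, one_pow, mul_one]
  have hnorm : ‖F.eval a‖ < ‖F.derivative.eval a‖ ^ 2 := by
    rw [heval, hdnorm]
    calc ‖(1+c)^p - 1 - ↑p*c‖ ≤ (p:ℝ)⁻¹ * ‖c‖^2 := expansion_bound hp3 c hcle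
      _ ≤ (p:ℝ)⁻¹ * ((p:ℝ)⁻¹)^2 := by
          apply mul_le_mul_of_nonneg_left _ (le_of_lt hpi)
          exact pow_le_pow_left₀ (norm_nonneg _) hcle 2
      _ < 1 * ((p:ℝ)⁻¹)^2 := mul_lt_mul_of_pos_right hpi1 (pow_pos hpi 2)
      _ = ((p:ℝ)⁻¹)^2 := one_mul _
  obtain ⟨z, hz1, hz2, _, _⟩ := hensels_lemma hnorm
  simp only [Polynomial.coe_aeval_eq_eval] at hz1 hz2
  have hzb : z ^ p = b := by
    have : z ^ p - b = 0 := by simpa [hF] using hz1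
    exact sub_eq_zero.1 this
  have h1 : ‖z - a‖ ≤ (p:ℝ)⁻¹ := le_of_lt (hdnorm ▸ hz2)
  have hz1' : ‖z - 1‖ ≤ (p:ℝ)⁻¹ := by
    have hsplit : z - 1 = (z - a) + c := by rw [ha]; ring
    rw [hsplit]
    exact le_trans (IsUltrametricDist.norm_add_le_max _ _) (max_le h1 hcle)
  have heq := pow_p_norm_eq hp3 z hz1'
  rw [hzb] at heq
  refine ⟨z, ?_, hzb⟩
  have h2 : (p:ℝ)⁻¹ * ‖z - 1‖ ≤ (p:ℝ)⁻¹ * ((p:ℝ)⁻¹)^j := by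
    rw [← heq, ← pow_succ']
    exact hb
  exact le_of_mul_le_mul_left h2 hpi

-- H : p^s-th root
lemma exists_ps_root {p : ℕ} [hpp : Fact p.Prime] (hp3 : 3 ≤ p) (s : ℕ)
    (b : ℤ_[p]) (hb : ‖b - 1‖ ≤ ((p:ℝ)⁻¹) ^ (s+1)) :
    ∃ v : ℤ_[p], ‖v - 1‖ ≤ (p:ℝ)⁻¹ ∧ v ^ (p ^ s) = b := by
  induction s generalizing b with
  | zero => exact ⟨b, by simpa using hb, by simp⟩
  | succ n ih =>
    obtain ⟨v₁, hv₁, hv₁p⟩ := exists_p_root hp3 (by omega : 1 ≤ n+1) b hb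
    obtain ⟨v, hv, hvp⟩ := ih v₁ hv₁
    exact ⟨v, hv, by rw [pow_succ, pow_mul, hvp, hv₁p]⟩

-- multiplicative version of pow_ps_norm_eq
lemma pow_ps_sub_norm {p : ℕ} [hpp : Fact p.Prime] (hp3 : 3 ≤ p) (s : ℕ) (u v : ℤ_[p])
    (hv : ‖v‖ = 1) (huv : ‖u - v‖ < 1) :
    ‖u^(p^s) - v^(p^s)‖ = ((p:ℝ)⁻¹)^s * ‖u - v‖ := by
  obtain ⟨vu, hvu⟩ := PadicInt.isUnit_iff.2 hv
  set w : ℤ_[p] := u * ↑vu⁻¹ with hwdef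
  have hw1 : w - 1 = (u - v) * ↑vu⁻¹ := by
    rw [hwdef, sub_mul, ← hvu]
    congr 1
    exact (Units.mul_inv vu).symm
  have hwn : ‖w - 1‖ = ‖u - v‖ := by
    rw [hw1, norm_mul, PadicInt.norm_units, mul_one]
  have hvw : v * w = u := by
    rw [hwdef, ← hvu, mul_comm (u) _, ← mul_assoc, Units.mul_inv, one_mul]
  have key : u^(p^s) - v^(p^s) = v^(p^s) * (w^(p^s) - 1) := by
    rw [mul_sub, mul_one, ← mul_pow, hvw]
  rw [key, norm_mul, norm_pow, hv, one_pow, one_mul,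
    pow_ps_norm_eq hp3 s w (by rw [hwn]; exact norm_lt_one_le_inv huv), hwn]

lemma fermat_zp {p : ℕ} [hpp : Fact p.Prime] (s : ℕ) (n : ℕ) :
    ‖(n : ℤ_[p]) ^ (p ^ s) - (n : ℤ_[p])‖ < 1 := by
  have hdvd : (p : ℤ) ∣ (n : ℤ)^(p^s) - n := by
    have := ZMod.pow_card_pow (n := s) (p := p) (n : ZMod p)
    have h2 : (((n : ℤ)^(p^s) - n : ℤ) : ZMod p) = 0 := by
      push_cast
      rw [this]; ring
    exact (ZMod.intCast_zmod_eq_zero_iff_dvd _ p).1 h2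
  have := (PadicInt.norm_int_lt_one_iff_dvd ((n : ℤ)^(p^s) - n)).2 hdvd
  have heq : (((n : ℤ)^(p^s) - n : ℤ) : ℤ_[p]) = (n : ℤ_[p]) ^ (p ^ s) - n := by
    push_cast; ring
  rwa [heq] at this

theorem padic_monomial_unique_in_ball (p : ℕ) [Fact p.Prime] (hp : 3 ≤ p)
    (m s k : ℕ) (hm : Nat.Coprime m p) (hkdef : k = m * p ^ s)
    (a : ℚ_[p]) (ha : ‖a‖ = 1)
    (a₀ : ℕ) (ha₀ : 1 ≤ a₀) (ha₀' : a₀ ≤ p - 1)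
    (hclose : ‖a - (a₀ : ℚ_[p])‖ < 1)
    (hcond : ‖a - (a₀ : ℚ_[p]) ^ (p ^ s)‖ < (p : ℝ) ^ (-(s : ℤ))) :
    ∀ ξ : ℕ, 1 ≤ ξ → ξ ≤ p - 1 → ‖(ξ : ℚ_[p]) ^ k - a‖ < 1 →
      ∃! x : ℚ_[p], ‖x‖ ≤ 1 ∧ ‖x - (ξ : ℚ_[p])‖ < 1 ∧ x ^ k = a := by
  intro ξ hξ1 hξ2 hξk
  have hpp : Fact p.Prime := inferInstance
  have hp0 : (0:ℝ) < p := by exact_mod_cast hpp.out.pos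
  have hpi : (0:ℝ) < (p:ℝ)⁻¹ := by positivity
  have hpi1 : (p:ℝ)⁻¹ < 1 := by
    rw [inv_lt_one_iff₀]; right; exact_mod_cast hpp.out.one_lt
  have hm0 : m ≠ 0 := by
    rintro rfl
    rw [Nat.Coprime, Nat.gcd_zero_left] at hm
    omega
  have hk0 : k ≠ 0 := by
    rw [hkdef]
    exact Nat.mul_ne_zero hm0 (pow_ne_zero s hpp.out.pos.ne')
  -- lifts
  set A : ℤ_[p] := ⟨a, ha.le⟩ with hA
  have hAcoe : (A : ℚ_[p]) = a := rfl
  have hAnorm : ‖A‖ = 1 := by rw [PadicInt.norm_def, hAcoe, ha]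
  set X : ℤ_[p] := (ξ : ℤ_[p]) with hX
  have hξp : ¬ p ∣ ξ := by
    intro hd
    have := Nat.le_of_dvd (by omega) hd
    omega
  have ha₀p : ¬ p ∣ a₀ := by
    intro hd
    have := Nat.le_of_dvd (by omega) hd
    omega
  have hXnorm : ‖X‖ = 1 := norm_nat_coprime hξp
  set A0 : ℤ_[p] := (a₀ : ℤ_[p]) with hA0
  have hA0norm : ‖A0‖ = 1 := norm_nat_coprime ha₀p
  -- transfer hypotheses
  have h1 : ‖X^k - A‖ < 1 := by
    rw [PadicInt.norm_def, PadicInt.coe_sub, PadicInt.coe_pow, hAcoe, PadicInt.coe_natCast]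
    exact hξk
  have h2 : ‖A - A0‖ < 1 := by
    rw [PadicInt.norm_def, PadicInt.coe_sub, hAcoe, hA0, PadicInt.coe_natCast]
    exact hclose
  have h3 : ‖A - A0^(p^s)‖ ≤ ((p:ℝ)⁻¹)^(s+1) := by
    have hq : ‖a - (a₀ : ℚ_[p]) ^ (p ^ s)‖ ≤ (p:ℝ) ^ (-((s:ℤ)+1)) := by
      rw [Padic.norm_le_pow_iff_norm_lt_pow_add_one]
      have : -((s:ℤ)+1) + 1 = -(s:ℤ) := by ring
      rw [this]
      exact hcond
    have hcast : (p:ℝ) ^ (-((s:ℤ)+1)) = ((p:ℝ)⁻¹)^(s+1) := by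
      rw [show ((s:ℤ)+1) = ((s+1 : ℕ) : ℤ) by push_cast; ring, zpow_neg, zpow_natCast, inv_pow]
    rw [PadicInt.norm_def, PadicInt.coe_sub, hAcoe, PadicInt.coe_pow, hA0, PadicInt.coe_natCast]
    rw [← hcast]
    exact hq
  -- ξ^k ≡ ξ^m mod p
  have h4 : ‖X^k - X^m‖ < 1 := by
    have : X^k = (X^m)^(p^s) := by rw [← pow_mul, hkdef]
    rw [this, hX, ← Nat.cast_pow]
    exact fermat_zp s (ξ^m)
  have h5 : ‖X^m - A0‖ < 1 := by
    have hsplit : X^m - A0 = (X^m - X^k) + ((X^k - A) + (A - A0)) := by ring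
    rw [hsplit]
    apply lt_of_le_of_lt (IsUltrametricDist.norm_add_le_max _ _)
    rw [max_lt_iff]
    constructor
    · rw [norm_sub_rev]; exact h4
    · exact lt_of_le_of_lt (IsUltrametricDist.norm_add_le_max _ _) (max_lt h1 h2)
  -- sharp bound for X^k - A0^{p^s}
  have h6 : ‖X^k - A0^(p^s)‖ ≤ ((p:ℝ)⁻¹)^(s+1) := by
    have heq : ‖(X^m)^(p^s) - A0^(p^s)‖ = ((p:ℝ)⁻¹)^s * ‖X^m - A0‖ :=
      pow_ps_sub_norm hp s (X^m) A0 hA0norm h5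
    have hXk : X^k = (X^m)^(p^s) := by rw [← pow_mul, hkdef]
    rw [hXk, heq, pow_succ]
    exact mul_le_mul_of_nonneg_left (norm_lt_one_le_inv h5) (le_of_lt (pow_pos hpi s))
  have h7 : ‖X^k - A‖ ≤ ((p:ℝ)⁻¹)^(s+1) := by
    have hsplit : X^k - A = (X^k - A0^(p^s)) + (A0^(p^s) - A) := by ring
    rw [hsplit]
    apply le_trans (IsUltrametricDist.norm_add_le_max _ _)
    apply max_le h6
    rw [norm_sub_rev]
    exact h3
  -- X is a unit
  obtain ⟨Xu, hXu⟩ := PadicInt.isUnit_iff.2 hXnorm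
  set b : ℤ_[p] := A * ↑(Xu⁻¹)^k with hb
  have hbid : X^k * ↑(Xu⁻¹)^k = (1:ℤ_[p]) := by
    rw [← hXu, ← mul_pow, Units.mul_inv, one_pow]
  have hbnorm : ‖b - 1‖ ≤ ((p:ℝ)⁻¹)^(s+1) := by
    have : b - 1 = (A - X^k) * ↑(Xu⁻¹)^k := by
      rw [hb, sub_mul, ← hbid]
    rw [this, norm_mul, norm_pow, PadicInt.norm_units, one_pow, mul_one,
      norm_sub_rev]
    exact h7
  -- existence
  obtain ⟨v, hv, hvp⟩ := exists_ps_root hp s b hbnorm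
  obtain ⟨u, hu, hum⟩ := exists_m_root hm v (lt_of_le_of_lt hv hpi1)
  set x : ℤ_[p] := X * u with hxdef
  have hxk : x ^ k = A := by
    rw [hxdef, mul_pow, hkdef, pow_mul u, hum, hvp, hb]
    rw [show X ^ (m * p^s) = X ^ k by rw [hkdef]]
    calc X ^ k * (A * ↑(Xu⁻¹)^k) = A * (X^k * ↑(Xu⁻¹)^k) := by ring
      _ = A := by rw [hbid, mul_one]
  have hxX : ‖x - X‖ < 1 := by
    have : x - X = X * (u - 1) := by rw [hxdef]; ring
    rw [this, norm_mul, hXnorm, one_mul]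
    exact hu
  have hxnorm : ‖x‖ = 1 := by
    have h := congrArg (fun z : ℤ_[p] => ‖z‖) hxk
    simp only [norm_pow, hAnorm] at h
    by_contra hne
    have hlt : ‖x‖ < 1 := lt_of_le_of_ne (PadicInt.norm_le_one x) hne
    have : ‖x‖^k < 1 := pow_lt_one₀ (norm_nonneg _) hlt hk0
    rw [h] at this
    exact lt_irrefl _ this
  -- uniqueness helper
  have huniq : ∀ y : ℤ_[p], ‖y - X‖ < 1 → y ^ k = A → y = x := by
    intro y hy hyk
    obtain ⟨xu, hxu⟩ := PadicInt.isUnit_iff.2 hxnorm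
    set w : ℤ_[p] := y * ↑(xu⁻¹) with hw
    have hxinv : x * ↑(xu⁻¹) = (1:ℤ_[p]) := by
      rw [← hxu, Units.mul_inv]
    have hwk : w ^ (m * p ^ s) = 1 := by
      rw [← hkdef, hw, mul_pow, hyk, ← hxk, ← mul_pow, hxinv, one_pow]
    have hwnorm : ‖w - 1‖ < 1 := by
      have : w - 1 = (y - x) * ↑(xu⁻¹) := by
        rw [hw, sub_mul, hxinv]
      rw [this, norm_mul, PadicInt.norm_units, mul_one]
      have hsplit : y - x = (y - X) + (X - x) := by ring
      rw [hsplit]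
      apply lt_of_le_of_lt (IsUltrametricDist.norm_add_le_max _ _)
      apply max_lt hy
      rw [norm_sub_rev]
      exact hxX
    have := pow_k_inj hp hm w hwnorm hwk
    have hyx : y * ↑(xu⁻¹) = 1 := this
    calc y = y * (↑(xu⁻¹) * ↑xu) := by rw [Units.inv_mul, mul_one]
      _ = (y * ↑(xu⁻¹)) * ↑xu := by ring
      _ = 1 * ↑xu := by rw [hyx]
      _ = x := by rw [one_mul, hxu]
  -- conclude in ℚ_[p]
  refine ⟨(x : ℚ_[p]), ⟨x.2, ?_, ?_⟩, ?_⟩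
  · rw [show ((ξ:ℚ_[p])) = ((X : ℤ_[p]) : ℚ_[p]) by rw [hX, PadicInt.coe_natCast],
      ← PadicInt.coe_sub, PadicInt.padic_norm_e_of_padicInt]
    exact hxX
  · rw [← PadicInt.coe_pow, hxk, hAcoe]
  · rintro y ⟨hy1, hy2, hy3⟩
    set Y : ℤ_[p] := ⟨y, hy1⟩ with hY
    have hYcoe : (Y : ℚ_[p]) = y := rfl
    have hYX : ‖Y - X‖ < 1 := by
      rw [PadicInt.norm_def, PadicInt.coe_sub, hYcoe, hX, PadicInt.coe_natCast]
      exact hy2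
    have hYk : Y ^ k = A := by
      apply Subtype.ext
      rw [PadicInt.coe_pow, hYcoe, hAcoe]
      exact hy3
    have := huniq Y hYX hYk
    rw [← hYcoe, this]
end

section
/- Let p ≥ 3 be prime, k = m·p^s with gcd(m,p)=1, s ≥ 0, and a ∈ ℤ_p^* with first digit a₀. Then the equation x^k = a has a solution in ℤ_p^* if and only if there exists ξ ∈ {1,...,p-1} with |ξ^k - a|_p < 1 and |a - a₀^{p^s}|_p < p^{-s}. -/
open Finset

section PadicAux
variable {p : ℕ} [hp : Fact p.Prime]

private lemma pq_pos : (0:ℝ) < (p:ℝ)⁻¹ := by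
  have := hp.out.pos; positivity

private lemma pq_lt_one : (p:ℝ)⁻¹ < 1 := by
  have h1 : (1:ℝ) < p := by exact_mod_cast hp.out.one_lt
  exact inv_lt_one_of_one_lt₀ h1

private lemma norm_eq_aux (x y : ℚ_[p]) (h : ‖x - y‖ < ‖y‖) : ‖x‖ = ‖y‖ := by
  have h1 : ‖x‖ ≤ ‖y‖ := by
    have h2 := Padic.nonarchimedean (x - y) y
    simp only [sub_add_cancel] at h2
    exact h2.trans (max_le h.le le_rfl)
  rcases lt_or_eq_of_le h1 with h2 | h2
  · exfalso
    have h3 := Padic.nonarchimedean x (-(x - y))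
    simp only [← sub_eq_add_neg, sub_sub_cancel, norm_neg] at h3
    have := h3.trans_lt (max_lt h2 h)
    exact lt_irrefl _ this
  · exact h2

private lemma nat_norm_le_one (n : ℕ) : ‖(n:ℚ_[p])‖ ≤ 1 := by
  have := Padic.norm_int_le_one (p := p) (n : ℤ)
  simpa using this

private lemma nat_dvd_norm {n : ℕ} (h : p ∣ n) : ‖(n:ℚ_[p])‖ ≤ (p:ℝ)⁻¹ := by
  obtain ⟨w, rfl⟩ := h
  push_cast
  rw [norm_mul, Padic.norm_p]
  calc (p:ℝ)⁻¹ * ‖(w:ℚ_[p])‖ ≤ (p:ℝ)⁻¹ * 1 :=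
        mul_le_mul_of_nonneg_left (nat_norm_le_one w) pq_pos.le
    _ = (p:ℝ)⁻¹ := mul_one _

private lemma norm_lt_one_le (x : ℚ_[p]) (h : ‖x‖ < 1) : ‖x‖ ≤ (p:ℝ)⁻¹ := by
  have h2 := (Padic.norm_le_pow_iff_norm_lt_pow_add_one x (-1)).2 (by simpa using h)
  simpa using h2

private lemma norm_pow_sub_pow (u v : ℚ_[p]) (hu : ‖u‖ ≤ 1) (hv : ‖v‖ ≤ 1) (n : ℕ) :
    ‖u ^ n - v ^ n‖ ≤ ‖u - v‖ := by
  rw [← geom_sum₂_mul u v n, norm_mul]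
  have hsum : ‖∑ i ∈ range n, u ^ i * v ^ (n - 1 - i)‖ ≤ 1 := by
    apply IsUltrametricDist.norm_sum_le_of_forall_le_of_nonneg zero_le_one
    intro i _
    rw [norm_mul, norm_pow, norm_pow]
    exact mul_le_one₀ (pow_le_one₀ (norm_nonneg _) hu) (by positivity)
      (pow_le_one₀ (norm_nonneg _) hv)
  calc ‖∑ i ∈ range n, u ^ i * v ^ (n - 1 - i)‖ * ‖u - v‖ ≤ 1 * ‖u - v‖ :=
        mul_le_mul_of_nonneg_right hsum (norm_nonneg _)
    _ = ‖u - v‖ := one_mul _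

private lemma sum_shift (u v : ℚ_[p]) (n : ℕ) :
    (∑ i ∈ range n, u ^ i * v ^ (n - 1 - i)) - (n : ℚ_[p]) * v ^ (n - 1)
      = ∑ i ∈ range n, (u ^ i - v ^ i) * v ^ (n - 1 - i) := by
  have key : ∀ i ∈ range n, v ^ i * v ^ (n - 1 - i) = v ^ (n - 1) := by
    intro i hi
    rw [← pow_add]
    congr 1
    have := mem_range.1 hi
    omega
  have h2 : (n : ℚ_[p]) * v ^ (n - 1) = ∑ i ∈ range n, v ^ i * v ^ (n - 1 - i) := by
    rw [Finset.sum_congr rfl key, Finset.sum_const, card_range, nsmul_eq_mul]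
  rw [h2, ← Finset.sum_sub_distrib]
  exact sum_congr rfl fun i _ => by ring

private lemma sum_near (u v : ℚ_[p]) (hu : ‖u‖ ≤ 1) (hv : ‖v‖ ≤ 1) (n : ℕ) :
    ‖(∑ i ∈ range n, u ^ i * v ^ (n - 1 - i)) - (n : ℚ_[p]) * v ^ (n - 1)‖ ≤ ‖u - v‖ := by
  rw [sum_shift]
  apply IsUltrametricDist.norm_sum_le_of_forall_le_of_nonneg (norm_nonneg _)
  intro i _
  rw [norm_mul, norm_pow]
  calc ‖u ^ i - v ^ i‖ * ‖v‖ ^ (n - 1 - i) ≤ ‖u - v‖ * 1 :=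
        mul_le_mul (norm_pow_sub_pow u v hu hv i) (pow_le_one₀ (norm_nonneg _) hv)
          (by positivity) (norm_nonneg _)
    _ = ‖u - v‖ := mul_one _


private lemma pow_p_norm (hp3 : 3 ≤ p) (u v : ℚ_[p]) (hu : ‖u‖ ≤ 1) (hv : ‖v‖ = 1)
    (h : ‖u - v‖ ≤ (p:ℝ)⁻¹) : ‖u ^ p - v ^ p‖ = (p:ℝ)⁻¹ * ‖u - v‖ := by
  have hv1 : ‖v‖ ≤ 1 := hv.le
  set S := ∑ i ∈ range p, u ^ i * v ^ (p - 1 - i) with hS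
  have hfac : S * (u - v) = u ^ p - v ^ p := geom_sum₂_mul u v p
  set W := ∑ i ∈ range p, (∑ j ∈ range i, u ^ j * v ^ (i - 1 - j)) * v ^ (p - 1 - i) with hW
  have hSW : S - (p : ℚ_[p]) * v ^ (p - 1) = (u - v) * W := by
    rw [hS, sum_shift, hW, Finset.mul_sum]
    refine sum_congr rfl fun i _ => ?_
    rw [← geom_sum₂_mul u v i]
    ring
  -- bound ‖W‖
  set G : ℕ := ∑ i ∈ range p, i with hG
  have hWnear : ‖W - (G : ℚ_[p]) * v ^ (p - 2)‖ ≤ ‖u - v‖ := by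
    have hGc : (G : ℚ_[p]) * v ^ (p - 2) = ∑ i ∈ range p, (i : ℚ_[p]) * v ^ (p - 2) := by
      rw [← Finset.sum_mul, hG]
      push_cast
      ring
    have hterm : ∀ i ∈ range p,
        (∑ j ∈ range i, u ^ j * v ^ (i - 1 - j)) * v ^ (p - 1 - i) - (i : ℚ_[p]) * v ^ (p - 2)
          = ((∑ j ∈ range i, u ^ j * v ^ (i - 1 - j)) - (i : ℚ_[p]) * v ^ (i - 1))
              * v ^ (p - 1 - i) := by
      intro i hi
      rcases Nat.eq_zero_or_pos i with rfl | hi1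
      · simp
      · have hpow : v ^ (i - 1) * v ^ (p - 1 - i) = v ^ (p - 2) := by
          rw [← pow_add]
          congr 1
          have := mem_range.1 hi
          omega
        rw [sub_mul, mul_assoc, hpow]
    rw [hW, hGc, ← Finset.sum_sub_distrib, Finset.sum_congr rfl hterm]
    apply IsUltrametricDist.norm_sum_le_of_forall_le_of_nonneg (norm_nonneg _)
    intro i _
    rw [norm_mul, norm_pow]
    calc ‖(∑ j ∈ range i, u ^ j * v ^ (i - 1 - j)) - (i : ℚ_[p]) * v ^ (i - 1)‖ * ‖v‖ ^ (p - 1 - i)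
        ≤ ‖u - v‖ * 1 :=
          mul_le_mul (sum_near u v hu hv1 i) (pow_le_one₀ (norm_nonneg _) hv1)
            (by positivity) (norm_nonneg _)
      _ = ‖u - v‖ := mul_one _
  have hGdvd : p ∣ G := by
    have h2 : G * 2 = p * (p - 1) := Finset.sum_range_id_mul_two p
    have h3 : p ∣ G * 2 := h2 ▸ Dvd.intro _ rfl
    have hcop : Nat.Coprime p 2 := (Nat.Prime.coprime_iff_not_dvd hp.out).2 (fun hd => by
      have := Nat.le_of_dvd (by norm_num) hd
      omega)
    exact hcop.dvd_of_dvd_mul_right h3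
  have hWle : ‖W‖ ≤ (p:ℝ)⁻¹ := by
    have h4 : ‖(G : ℚ_[p]) * v ^ (p - 2)‖ ≤ (p:ℝ)⁻¹ := by
      rw [norm_mul, norm_pow, hv, one_pow, mul_one]
      exact nat_dvd_norm hGdvd
    have h5 := Padic.nonarchimedean (W - (G : ℚ_[p]) * v ^ (p - 2))
      ((G : ℚ_[p]) * v ^ (p - 2))
    simp only [sub_add_cancel] at h5
    exact h5.trans (max_le (hWnear.trans h) h4)
  have hpv : ‖(p:ℚ_[p]) * v ^ (p - 1)‖ = (p:ℝ)⁻¹ := by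
    rw [norm_mul, Padic.norm_p, norm_pow, hv, one_pow, mul_one]
  have hSsub : ‖S - (p:ℚ_[p]) * v ^ (p - 1)‖ < ‖(p:ℚ_[p]) * v ^ (p - 1)‖ := by
    rw [hSW, norm_mul, hpv]
    calc ‖u - v‖ * ‖W‖ ≤ (p:ℝ)⁻¹ * (p:ℝ)⁻¹ :=
          mul_le_mul h hWle (norm_nonneg _) pq_pos.le
      _ < (p:ℝ)⁻¹ := by
          nlinarith [pq_pos (p := p), pq_lt_one (p := p)]
  have hSnorm : ‖S‖ = (p:ℝ)⁻¹ := by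
    rw [norm_eq_aux S ((p:ℚ_[p]) * v ^ (p - 1)) hSsub, hpv]
  rw [← hfac, norm_mul, hSnorm]

private lemma E_bound (hp3 : 3 ≤ p) (t : ℚ_[p]) (ht : ‖t‖ ≤ 1) :
    ‖(1 + (p:ℚ_[p]) * t) ^ p - 1 - (p:ℚ_[p]) ^ 2 * t‖ ≤ (p:ℝ)⁻¹ ^ 3 * ‖t‖ ^ 2 := by
  set f : ℕ → ℚ_[p] := fun k => ((p:ℚ_[p]) * t) ^ k * (p.choose k : ℚ_[p]) with hf
  have hexp : (1 + (p:ℚ_[p]) * t) ^ p = ∑ k ∈ range (p + 1), f k := by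
    rw [add_comm, add_pow]
    refine sum_congr rfl fun k _ => ?_
    rw [hf]
    simp
  have hsplit : ∑ k ∈ range (p + 1), f k = (f 0 + f 1) + ∑ k ∈ Ico 2 (p + 1), f k := by
    rw [range_eq_Ico, ← Finset.sum_Ico_consecutive f (by omega : 0 ≤ 2) (by omega : 2 ≤ p + 1)]
    congr 1
    rw [← range_eq_Ico]
    rw [Finset.sum_range_succ, Finset.sum_range_one]
  have hf0 : f 0 = 1 := by simp [hf]
  have hf1 : f 1 = (p:ℚ_[p]) ^ 2 * t := by
    simp [hf, Nat.choose_one_right]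
    ring
  have heq : (1 + (p:ℚ_[p]) * t) ^ p - 1 - (p:ℚ_[p]) ^ 2 * t = ∑ k ∈ Ico 2 (p + 1), f k := by
    rw [hexp, hsplit, hf0, hf1]
    ring
  rw [heq]
  apply IsUltrametricDist.norm_sum_le_of_forall_le_of_nonneg (by positivity)
  intro k hk
  obtain ⟨hk2, hkp⟩ := mem_Ico.1 hk
  have hnt : ‖(p:ℚ_[p]) * t‖ = (p:ℝ)⁻¹ * ‖t‖ := by rw [norm_mul, Padic.norm_p]
  have hnt1 : ‖(p:ℚ_[p]) * t‖ ≤ 1 := by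
    rw [hnt]
    calc (p:ℝ)⁻¹ * ‖t‖ ≤ 1 * 1 := mul_le_mul pq_lt_one.le ht (norm_nonneg _) one_pos.le
      _ = 1 := one_mul _
  rw [hf, norm_mul, norm_pow]
  rcases eq_or_lt_of_le hk2 with hk2' | hk3
  · -- k = 2
    have hdvd : p ∣ p.choose 2 := Nat.Prime.dvd_choose_self hp.out (by norm_num) (by omega)
    rw [← hk2']
    calc ‖(p:ℚ_[p]) * t‖ ^ 2 * ‖(p.choose 2 : ℚ_[p])‖
        ≤ ((p:ℝ)⁻¹ * ‖t‖) ^ 2 * (p:ℝ)⁻¹ := by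
          rw [hnt]
          exact mul_le_mul_of_nonneg_left (nat_dvd_norm hdvd) (by positivity)
      _ = (p:ℝ)⁻¹ ^ 3 * ‖t‖ ^ 2 := by ring
  · -- k ≥ 3
    have hk3' : 3 ≤ k := hk3
    calc ‖(p:ℚ_[p]) * t‖ ^ k * ‖(p.choose k : ℚ_[p])‖
        ≤ ‖(p:ℚ_[p]) * t‖ ^ k * 1 :=
          mul_le_mul_of_nonneg_left (nat_norm_le_one _) (by positivity)
      _ = ‖(p:ℚ_[p]) * t‖ ^ k := mul_one _
      _ ≤ ‖(p:ℚ_[p]) * t‖ ^ 3 := pow_le_pow_of_le_one (norm_nonneg _) hnt1 hk3'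
      _ = (p:ℝ)⁻¹ ^ 3 * ‖t‖ ^ 3 := by rw [hnt]; ring
      _ ≤ (p:ℝ)⁻¹ ^ 3 * ‖t‖ ^ 2 := by
          apply mul_le_mul_of_nonneg_left _ (by positivity)
          exact pow_le_pow_of_le_one (norm_nonneg _) ht (by norm_num)

private lemma hensel_root (n : ℕ) (b c : ℚ_[p]) (hb : ‖b‖ ≤ 1) (hc : ‖c‖ ≤ 1)
    (h : ‖c ^ n - b‖ < ‖(n:ℚ_[p]) * c ^ (n - 1)‖ ^ 2) :
    ∃ z : ℚ_[p], ‖z‖ ≤ 1 ∧ z ^ n = b ∧ ‖z - c‖ < ‖(n:ℚ_[p]) * c ^ (n - 1)‖ := by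
  set B : ℤ_[p] := ⟨b, hb⟩ with hB
  set C : ℤ_[p] := ⟨c, hc⟩ with hC
  set F : Polynomial ℤ_[p] := Polynomial.X ^ n - Polynomial.C B with hF
  have hev : ∀ x : ℤ_[p], F.eval x = x ^ n - B := by intro x; simp [hF]
  have hder : ∀ x : ℤ_[p], F.derivative.eval x = (n : ℤ_[p]) * x ^ (n - 1) := by
    intro x
    simp [hF, Polynomial.derivative_X_pow]
  have hcoeB : ((B : ℚ_[p])) = b := rfl
  have hcoeC : ((C : ℚ_[p])) = c := rfl
  have hnormev : ‖F.eval C‖ = ‖c ^ n - b‖ := by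
    rw [hev, PadicInt.norm_def]
    push_cast
    rfl
  have hnormder : ∀ x : ℤ_[p], ‖F.derivative.eval x‖ = ‖(n:ℚ_[p]) * ((x:ℚ_[p])) ^ (n-1)‖ := by
    intro x
    rw [hder, PadicInt.norm_def]
    push_cast
    ring_nf
  have hcond : ‖F.eval C‖ < ‖F.derivative.eval C‖ ^ 2 := by
    rw [hnormev, hnormder, hcoeC]
    exact h
  obtain ⟨z, hz0, hzdist, _, _⟩ := hensels_lemma hcond
  refine ⟨(z : ℚ_[p]), z.2, ?_, ?_⟩
  · have : z ^ n - B = 0 := by rw [← hev]; exact hz0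
    have h2 : z ^ n = B := by linear_combination this
    calc (z:ℚ_[p]) ^ n = ((z ^ n : ℤ_[p]) : ℚ_[p]) := by push_cast; ring
      _ = b := by rw [h2, hcoeB]
  · have h3 : ‖z - C‖ = ‖(z:ℚ_[p]) - c‖ := by
      rw [PadicInt.norm_def]; push_cast; rfl
    rw [← h3]
    rw [Polynomial.coe_aeval_eq_eval] at hzdist
    rw [hnormder, hcoeC] at hzdist
    exact hzdist

private lemma p_root_step (hp3 : 3 ≤ p) (j : ℕ) (b c : ℚ_[p]) (hb : ‖b‖ = 1) (hc : ‖c‖ = 1)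
    (h : ‖c ^ p - b‖ ≤ (p:ℝ)⁻¹ ^ (j + 2)) :
    ∃ y : ℚ_[p], ‖y‖ = 1 ∧ y ^ p = b ∧ ‖y - c‖ ≤ (p:ℝ)⁻¹ ^ (j + 1) := by
  have hppos : (0:ℝ) < (p:ℝ) := by positivity
  have hc0 : c ≠ 0 := by intro h0; rw [h0, norm_zero] at hc; norm_num at hc
  have hpne : (p:ℚ_[p]) ≠ 0 := by
    have : ‖(p:ℚ_[p])‖ ≠ 0 := by rw [Padic.norm_p]; positivity
    exact fun h0 => this (by rw [h0, norm_zero])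
  have hcp : c ^ p ≠ 0 := pow_ne_zero _ hc0
  set t : ℚ_[p] := (b - c ^ p) / ((p:ℚ_[p]) ^ 2 * c ^ p) with hT
  have hnct : ‖t‖ = ‖b - c ^ p‖ * (p:ℝ) ^ 2 := by
    rw [hT, norm_div, norm_mul, norm_pow, Padic.norm_p, norm_pow, hc, one_pow, mul_one]
    field_simp
  have ht : ‖t‖ ≤ (p:ℝ)⁻¹ ^ j := by
    rw [hnct]
    calc ‖b - c ^ p‖ * (p:ℝ) ^ 2 ≤ (p:ℝ)⁻¹ ^ (j + 2) * (p:ℝ) ^ 2 := by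
          apply mul_le_mul_of_nonneg_right _ (by positivity)
          rw [norm_sub_rev]; exact h
      _ = (p:ℝ)⁻¹ ^ j := by
          rw [pow_add, mul_assoc, ← mul_pow, inv_mul_cancel₀ hppos.ne', one_pow, mul_one]
  have ht1 : ‖t‖ ≤ 1 := ht.trans (pow_le_one₀ pq_pos.le pq_lt_one.le)
  have h1 : (p:ℚ_[p]) ^ 2 * c ^ p * t = b - c ^ p := by
    rw [hT]; field_simp
  clear_value t
  set c' : ℚ_[p] := c * (1 + (p:ℚ_[p]) * t) with hC'
  have key : c' ^ p - b = c ^ p * ((1 + (p:ℚ_[p]) * t) ^ p - 1 - (p:ℚ_[p]) ^ 2 * t) := by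
    rw [hC', mul_pow]
    linear_combination h1
  have hkeyn : ‖c' ^ p - b‖ ≤ (p:ℝ)⁻¹ ^ (2 * j + 3) := by
    rw [key, norm_mul, norm_pow, hc, one_pow, one_mul]
    calc ‖(1 + (p:ℚ_[p]) * t) ^ p - 1 - (p:ℚ_[p]) ^ 2 * t‖ ≤ (p:ℝ)⁻¹ ^ 3 * ‖t‖ ^ 2 :=
          E_bound hp3 t ht1
      _ ≤ (p:ℝ)⁻¹ ^ 3 * ((p:ℝ)⁻¹ ^ j) ^ 2 := by
          apply mul_le_mul_of_nonneg_left _ (by positivity)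
          exact pow_le_pow_left₀ (norm_nonneg _) ht 2
      _ = (p:ℝ)⁻¹ ^ (2 * j + 3) := by ring
  have hc'c : ‖c' - c‖ ≤ (p:ℝ)⁻¹ ^ (j + 1) := by
    have : c' - c = c * ((p:ℚ_[p]) * t) := by rw [hC']; ring
    rw [this, norm_mul, hc, one_mul, norm_mul, Padic.norm_p]
    calc (p:ℝ)⁻¹ * ‖t‖ ≤ (p:ℝ)⁻¹ * (p:ℝ)⁻¹ ^ j :=
          mul_le_mul_of_nonneg_left ht pq_pos.le
      _ = (p:ℝ)⁻¹ ^ (j + 1) := by ring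
  have hq1lt : (p:ℝ)⁻¹ ^ (j + 1) < 1 :=
    pow_lt_one₀ pq_pos.le pq_lt_one (by omega)
  have hc'n : ‖c'‖ = 1 := by
    rw [norm_eq_aux c' c (by rw [hc]; exact hc'c.trans_lt hq1lt), hc]
  have hderiv : ‖(p:ℚ_[p]) * c' ^ (p - 1)‖ = (p:ℝ)⁻¹ := by
    rw [norm_mul, Padic.norm_p, norm_pow, hc'n, one_pow, mul_one]
  have hcond : ‖c' ^ p - b‖ < ‖(p:ℚ_[p]) * c' ^ (p - 1)‖ ^ 2 := by
    rw [hderiv]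
    calc ‖c' ^ p - b‖ ≤ (p:ℝ)⁻¹ ^ (2 * j + 3) := hkeyn
      _ < (p:ℝ)⁻¹ ^ 2 := by
          apply pow_lt_pow_right_of_lt_one₀ pq_pos pq_lt_one
          omega
      _ = (p:ℝ)⁻¹ ^ 2 := rfl
  obtain ⟨z, hz1, hzp, hzd⟩ := hensel_root p b c' hb.le hc'n.le hcond
  rw [hderiv] at hzd
  have hzn : ‖z‖ = 1 := by
    rw [norm_eq_aux z c' (by rw [hc'n]; exact hzd.trans pq_lt_one), hc'n]
  have hzc : ‖z - c‖ ≤ (p:ℝ)⁻¹ := by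
    have h5 := Padic.nonarchimedean (z - c') (c' - c)
    simp only [sub_add_sub_cancel] at h5
    refine h5.trans (max_le hzd.le (hc'c.trans ?_))
    calc (p:ℝ)⁻¹ ^ (j + 1) ≤ (p:ℝ)⁻¹ ^ 1 :=
          pow_le_pow_of_le_one pq_pos.le pq_lt_one.le (by omega)
      _ = (p:ℝ)⁻¹ := pow_one _
  have heqn := pow_p_norm hp3 z c hzn.le hc hzc
  rw [hzp] at heqn
  refine ⟨z, hzn, hzp, ?_⟩
  -- ‖b - c^p‖ = p⁻¹ * ‖z - c‖ ≤ p^{-(j+2)}  ⇒ ‖z - c‖ ≤ p^{-(j+1)}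
  have h6 : (p:ℝ)⁻¹ * ‖z - c‖ ≤ (p:ℝ)⁻¹ ^ (j + 2) := by
    rw [← heqn, norm_sub_rev]; exact h
  have h8 : (p:ℝ)⁻¹ ^ (j + 2) = (p:ℝ)⁻¹ * (p:ℝ)⁻¹ ^ (j + 1) := by ring
  exact le_of_mul_le_mul_left (by rw [← h8]; exact h6) pq_pos

private lemma p_pow_root (hp3 : 3 ≤ p) (s : ℕ) (b c : ℚ_[p]) (hb : ‖b‖ = 1) (hc : ‖c‖ = 1)
    (h : ‖c ^ (p ^ s) - b‖ ≤ (p:ℝ)⁻¹ ^ (s + 1)) :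
    ∃ y : ℚ_[p], ‖y‖ = 1 ∧ y ^ (p ^ s) = b := by
  induction s generalizing b with
  | zero => exact ⟨b, hb, by rw [pow_zero, pow_one]⟩
  | succ s ih =>
    have hcs : ‖c ^ (p ^ s)‖ = 1 := by rw [norm_pow, hc, one_pow]
    have hstep : ‖(c ^ (p ^ s)) ^ p - b‖ ≤ (p:ℝ)⁻¹ ^ (s + 2) := by
      rw [← pow_mul, ← pow_succ]
      exact h
    obtain ⟨y1, hy1n, hy1p, hy1d⟩ := p_root_step hp3 s b (c ^ (p ^ s)) hb hcs hstep
    obtain ⟨y, hyn, hyp⟩ := ih y1 hy1n (by rw [norm_sub_rev]; exact hy1d)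
    exact ⟨y, hyn, by rw [pow_succ, pow_mul, hyp, hy1p]⟩

private lemma exists_digit (x : ℚ_[p]) (hx : ‖x‖ = 1) :
    ∃ ξ : ℕ, 1 ≤ ξ ∧ ξ < p ∧ ‖x - (ξ:ℚ_[p])‖ ≤ (p:ℝ)⁻¹ := by
  set X : ℤ_[p] := ⟨x, hx.le⟩ with hX
  set c : ℕ := PadicInt.zmodRepr X with hc
  have hlt : c < p := PadicInt.zmodRepr_lt_p X
  have hmem : X - (c : ℤ_[p]) ∈ IsLocalRing.maximalIdeal ℤ_[p] := PadicInt.sub_zmodRepr_mem X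
  rw [PadicInt.maximalIdeal_eq_span_p, Ideal.mem_span_singleton] at hmem
  have hn : ‖X - (c : ℤ_[p])‖ < 1 := (PadicInt.norm_lt_one_iff_dvd _).2 hmem
  have hnq : ‖x - (c:ℚ_[p])‖ < 1 := by
    have : ‖X - (c : ℤ_[p])‖ = ‖x - (c:ℚ_[p])‖ := by
      rw [PadicInt.norm_def]; push_cast; rfl
    rwa [this] at hn
  have hc0 : c ≠ 0 := by
    intro h0
    rw [h0] at hnq
    simp only [Nat.cast_zero, sub_zero] at hnq
    rw [hx] at hnq
    norm_num at hnq
  exact ⟨c, by omega, hlt, norm_lt_one_le _ hnq⟩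

private lemma fermat_pow (u : ℚ_[p]) (hu : ‖u‖ ≤ 1) (s : ℕ) :
    ‖u ^ (p ^ s) - u‖ ≤ (p:ℝ)⁻¹ := by
  set X : ℤ_[p] := ⟨u, hu⟩ with hX
  set c : ℕ := PadicInt.zmodRepr X with hc
  have hmem : X - (c : ℤ_[p]) ∈ IsLocalRing.maximalIdeal ℤ_[p] := PadicInt.sub_zmodRepr_mem X
  rw [PadicInt.maximalIdeal_eq_span_p, Ideal.mem_span_singleton] at hmem
  have hn : ‖X - (c : ℤ_[p])‖ < 1 := (PadicInt.norm_lt_one_iff_dvd _).2 hmem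
  have hnq : ‖u - (c:ℚ_[p])‖ ≤ (p:ℝ)⁻¹ := by
    apply norm_lt_one_le
    have : ‖X - (c : ℤ_[p])‖ = ‖u - (c:ℚ_[p])‖ := by
      rw [PadicInt.norm_def]; push_cast; rfl
    rwa [this] at hn
  have h1 : ‖u ^ (p ^ s) - (c:ℚ_[p]) ^ (p ^ s)‖ ≤ (p:ℝ)⁻¹ :=
    (norm_pow_sub_pow u (c:ℚ_[p]) hu (nat_norm_le_one c) (p ^ s)).trans hnq
  have h2 : ‖(c:ℚ_[p]) ^ (p ^ s) - (c:ℚ_[p])‖ ≤ (p:ℝ)⁻¹ := by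
    have hdvd : (p:ℤ) ∣ ((c:ℤ) ^ (p ^ s) - (c:ℤ)) := by
      rw [← ZMod.intCast_zmod_eq_zero_iff_dvd]
      push_cast
      rw [ZMod.pow_card_pow]
      ring
    apply norm_lt_one_le
    have h3 : (((c:ℤ) ^ (p ^ s) - (c:ℤ) : ℤ) : ℚ_[p]) = (c:ℚ_[p]) ^ (p ^ s) - (c:ℚ_[p]) := by
      push_cast; ring
    rw [← h3]
    exact (Padic.norm_intCast_lt_one_iff).2 hdvd
  have h4 := Padic.nonarchimedean (u ^ (p ^ s) - (c:ℚ_[p]) ^ (p ^ s))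
    ((c:ℚ_[p]) ^ (p ^ s) - (c:ℚ_[p]))
  have h5 := Padic.nonarchimedean (u ^ (p ^ s) - (c:ℚ_[p])) ((c:ℚ_[p]) - u)
  simp only [sub_add_sub_cancel] at h4 h5
  have h6 : ‖u ^ (p ^ s) - (c:ℚ_[p])‖ ≤ (p:ℝ)⁻¹ := h4.trans (max_le h1 h2)
  have h7 : ‖(c:ℚ_[p]) - u‖ ≤ (p:ℝ)⁻¹ := by rwa [norm_sub_rev]
  exact h5.trans (max_le h6 h7)

private lemma nat_norm_eq_one (n : ℕ) (h : ¬ p ∣ n) : ‖(n:ℚ_[p])‖ = 1 := by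
  rcases lt_or_eq_of_le (nat_norm_le_one (p := p) n) with hlt | heq
  · exfalso
    apply h
    have := (Padic.norm_intCast_lt_one_iff (k := (n:ℤ))).1 (by push_cast at hlt ⊢; exact hlt)
    exact_mod_cast this
  · exact heq


end PadicAux

theorem padic_monomial_solvability (p : ℕ) [Fact p.Prime] (hp : 3 ≤ p)
    (m s k : ℕ) (hm : Nat.Coprime m p) (hkdef : k = m * p ^ s)
    (a : ℚ_[p]) (ha : ‖a‖ = 1)
    (a₀ : ℕ) (ha₀ : 1 ≤ a₀) (ha₀' : a₀ ≤ p - 1)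
    (hclose : ‖a - (a₀ : ℚ_[p])‖ < 1) :
    (∃ x : ℚ_[p], ‖x‖ = 1 ∧ x ^ k = a) ↔
      ((∃ ξ : ℕ, 1 ≤ ξ ∧ ξ ≤ p - 1 ∧ ‖(ξ : ℚ_[p]) ^ k - a‖ < 1) ∧
        ‖a - (a₀ : ℚ_[p]) ^ (p ^ s)‖ < (p : ℝ) ^ (-(s : ℤ))) := by
  have hq0 : (0:ℝ) < (p:ℝ)⁻¹ := pq_pos
  have hq1 : (p:ℝ)⁻¹ < 1 := pq_lt_one
  have hzconv : ∀ j : ℕ, (p:ℝ) ^ (-(j:ℤ)) = (p:ℝ)⁻¹ ^ j := by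
    intro j
    rw [zpow_neg, zpow_natCast, inv_pow]
  have ha₀lt : a₀ < p := by omega
  have ha₀norm : ‖(a₀:ℚ_[p])‖ = 1 := by
    apply nat_norm_eq_one
    intro hd
    have := Nat.le_of_dvd (by omega) hd
    omega
  have hm1 : 1 ≤ m := by
    rcases Nat.eq_zero_or_pos m with rfl | h
    · exfalso
      rw [Nat.coprime_zero_left] at hm
      omega
    · exact h
  have hmnorm : ‖(m:ℚ_[p])‖ = 1 := by
    apply nat_norm_eq_one
    intro hd
    have h1 : p ∣ Nat.gcd m p := Nat.dvd_gcd hd dvd_rfl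
    rw [hm] at h1
    have := Nat.le_of_dvd (by norm_num) h1
    omega
  constructor
  · rintro ⟨x, hx1, hxk⟩
    obtain ⟨ξ, hξ1, hξp, hξx⟩ := exists_digit x hx1
    have hya : (x ^ m) ^ (p ^ s) = a := by rw [← pow_mul, ← hkdef, hxk]
    have hyn : ‖x ^ m‖ = 1 := by rw [norm_pow, hx1, one_pow]
    refine ⟨⟨ξ, hξ1, by omega, ?_⟩, ?_⟩
    · rw [← hxk]
      calc ‖(ξ:ℚ_[p]) ^ k - x ^ k‖ ≤ ‖(ξ:ℚ_[p]) - x‖ :=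
            norm_pow_sub_pow _ _ (nat_norm_le_one ξ) hx1.le k
        _ = ‖x - (ξ:ℚ_[p])‖ := norm_sub_rev _ _
        _ < 1 := lt_of_le_of_lt hξx hq1
    · have claim : ∀ w : ℚ_[p], ‖w‖ = 1 → ‖w - (a₀:ℚ_[p])‖ ≤ (p:ℝ)⁻¹ →
          ∀ j : ℕ, ‖w ^ (p ^ j) - (a₀:ℚ_[p]) ^ (p ^ j)‖ ≤ (p:ℝ)⁻¹ ^ (j + 1) := by
        intro w hwn hwa0 j
        induction j with
        | zero => simpa using hwa0
        | succ j ihj =>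
          have hu1 : ‖w ^ (p ^ j)‖ ≤ 1 := by rw [norm_pow, hwn, one_pow]
          have hv1 : ‖(a₀:ℚ_[p]) ^ (p ^ j)‖ = 1 := by rw [norm_pow, ha₀norm, one_pow]
          have hle : ‖w ^ (p ^ j) - (a₀:ℚ_[p]) ^ (p ^ j)‖ ≤ (p:ℝ)⁻¹ := by
            refine ihj.trans ?_
            calc (p:ℝ)⁻¹ ^ (j + 1) ≤ (p:ℝ)⁻¹ ^ 1 :=
                  pow_le_pow_of_le_one hq0.le hq1.le (by omega)
              _ = (p:ℝ)⁻¹ := pow_one _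
          have heq := pow_p_norm hp (w ^ (p ^ j)) ((a₀:ℚ_[p]) ^ (p ^ j)) hu1 hv1 hle
          have hw1 : (w ^ (p ^ j)) ^ p = w ^ (p ^ (j + 1)) := by
            rw [← pow_mul, ← pow_succ]
          have hw2 : ((a₀:ℚ_[p]) ^ (p ^ j)) ^ p = (a₀:ℚ_[p]) ^ (p ^ (j + 1)) := by
            rw [← pow_mul, ← pow_succ]
          rw [hw1, hw2] at heq
          rw [heq]
          calc (p:ℝ)⁻¹ * ‖w ^ (p ^ j) - (a₀:ℚ_[p]) ^ (p ^ j)‖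
              ≤ (p:ℝ)⁻¹ * (p:ℝ)⁻¹ ^ (j + 1) := mul_le_mul_of_nonneg_left ihj hq0.le
            _ = (p:ℝ)⁻¹ ^ (j + 1 + 1) := by ring
      set y := x ^ m with hy
      have hya0 : ‖y - (a₀:ℚ_[p])‖ ≤ (p:ℝ)⁻¹ := by
        have hf : ‖y - y ^ (p ^ s)‖ ≤ (p:ℝ)⁻¹ := by
          rw [norm_sub_rev]; exact fermat_pow y hyn.le s
        have h2 : ‖y ^ (p ^ s) - (a₀:ℚ_[p])‖ ≤ (p:ℝ)⁻¹ := by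
          rw [hya]; exact norm_lt_one_le _ hclose
        have h3 := Padic.nonarchimedean (y - y ^ (p ^ s)) (y ^ (p ^ s) - (a₀:ℚ_[p]))
        simp only [sub_add_sub_cancel] at h3
        exact h3.trans (max_le hf h2)
      have hfinal := claim y hyn hya0 s
      rw [hya] at hfinal
      refine hfinal.trans_lt ?_
      rw [hzconv s]
      exact pow_lt_pow_right_of_lt_one₀ hq0 hq1 (by omega)
  · rintro ⟨⟨ξ, hξ1, hξ2, hξk⟩, h2⟩
    have hξp : ξ < p := by omega
    have hξnorm : ‖(ξ:ℚ_[p])‖ = 1 := by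
      apply nat_norm_eq_one
      intro hd
      have := Nat.le_of_dvd (by omega) hd
      omega
    have h2' : ‖a - (a₀:ℚ_[p]) ^ (p ^ s)‖ ≤ (p:ℝ)⁻¹ ^ (s + 1) := by
      have hiff := Padic.norm_le_pow_iff_norm_lt_pow_add_one (a - (a₀:ℚ_[p]) ^ (p ^ s))
        (-(s:ℤ) - 1)
      have hlt : ‖a - (a₀:ℚ_[p]) ^ (p ^ s)‖ < (p:ℝ) ^ (-(s:ℤ) - 1 + 1) := by
        rw [show -(s:ℤ) - 1 + 1 = -(s:ℤ) by ring]
        exact h2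
      have := hiff.2 hlt
      rwa [show -(s:ℤ) - 1 = -((s+1:ℕ):ℤ) by push_cast; ring, hzconv (s+1)] at this
    obtain ⟨y, hyn, hyp⟩ := p_pow_root hp s a (a₀:ℚ_[p]) ha ha₀norm
      (by rw [norm_sub_rev]; exact h2')
    have hξm : ‖(ξ:ℚ_[p]) ^ m - y‖ < 1 := by
      have e1 : ‖(ξ:ℚ_[p]) ^ m - ((ξ:ℚ_[p]) ^ m) ^ (p ^ s)‖ ≤ (p:ℝ)⁻¹ := by
        rw [norm_sub_rev]
        exact fermat_pow _ (by rw [norm_pow, hξnorm, one_pow]) s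
      have e2 : ‖((ξ:ℚ_[p]) ^ m) ^ (p ^ s) - y ^ (p ^ s)‖ < 1 := by
        rw [← pow_mul, ← hkdef, hyp]
        exact hξk
      have e3 : ‖y ^ (p ^ s) - y‖ ≤ (p:ℝ)⁻¹ := fermat_pow y hyn.le s
      have h4 := Padic.nonarchimedean
        ((ξ:ℚ_[p]) ^ m - ((ξ:ℚ_[p]) ^ m) ^ (p ^ s))
        (((ξ:ℚ_[p]) ^ m) ^ (p ^ s) - y ^ (p ^ s))
      simp only [sub_add_sub_cancel] at h4
      have h5 := Padic.nonarchimedean ((ξ:ℚ_[p]) ^ m - y ^ (p ^ s)) (y ^ (p ^ s) - y)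
      simp only [sub_add_sub_cancel] at h5
      refine h5.trans_lt (max_lt ?_ (e3.trans_lt hq1))
      exact h4.trans_lt (max_lt (e1.trans_lt hq1) e2)
    have hcond : ‖(ξ:ℚ_[p]) ^ m - y‖ < ‖(m:ℚ_[p]) * (ξ:ℚ_[p]) ^ (m - 1)‖ ^ 2 := by
      rw [norm_mul, hmnorm, norm_pow, hξnorm, one_pow, one_mul, one_pow]
      exact hξm
    obtain ⟨z, hz1, hzm, hzd⟩ := hensel_root m y (ξ:ℚ_[p]) hyn.le hξnorm.le hcond
    have hzn : ‖z‖ = 1 := by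
      rw [norm_mul, hmnorm, norm_pow, hξnorm, one_pow, one_mul] at hzd
      rw [norm_eq_aux z (ξ:ℚ_[p]) (by rw [hξnorm]; exact hzd), hξnorm]
    exact ⟨z, hzn, by rw [hkdef, pow_mul, hzm, hyp]⟩
end

section
/- Let p ≥ 3 be prime, k ≥ 1 an integer, and a ∈ ℚ_p with |a - 1|_p < 1 (i.e. a ∈ ℰ_p). If |k|_p ≤ |a - 1|_p, then the equation x^k = a has no solution in ℚ_p. -/
open IsUltrametricDist in
private lemma aux_pow_sub_one_le {p : ℕ} [Fact p.Prime] {u : ℚ_[p]} (hu : ‖u‖ ≤ 1) (n : ℕ) :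
    ‖u ^ n - 1‖ ≤ ‖u - 1‖ := by
  rw [← geom_sum_mul, norm_mul]
  have : ‖∑ i ∈ Finset.range n, u ^ i‖ ≤ 1 := by
    apply norm_sum_le_of_forall_le_of_nonneg zero_le_one
    intro i _
    simpa using pow_le_one₀ (norm_nonneg u) hu
  calc ‖∑ i ∈ Finset.range n, u ^ i‖ * ‖u - 1‖ ≤ 1 * ‖u - 1‖ :=
        mul_le_mul_of_nonneg_right this (norm_nonneg _)
    _ = ‖u - 1‖ := one_mul _

private lemma aux_norm_eq_one {p : ℕ} [Fact p.Prime] {u : ℚ_[p]} (hu : ‖u - 1‖ < 1) : ‖u‖ = 1 := by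
  have h1 : u = 1 + (u - 1) := by ring
  have h := Padic.add_eq_max_of_ne (q := (1 : ℚ_[p])) (r := u - 1)
    (by rw [norm_one]; exact (ne_of_lt hu).symm)
  rw [h1, h, norm_one, max_eq_left hu.le]

private lemma aux_int_norm_one {p : ℕ} [Fact p.Prime] {m : ℤ} (hm : ¬ (p : ℤ) ∣ m) :
    ‖(m : ℚ_[p])‖ = 1 := by
  rcases lt_or_eq_of_le (Padic.norm_int_le_one (p := p) m) with h | h
  · exact absurd (Padic.norm_intCast_lt_one_iff.mp h) hm
  · exact h

-- coprime case
open IsUltrametricDist in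
private lemma aux_coprime {p : ℕ} [Fact p.Prime] {u : ℚ_[p]} (hu : ‖u - 1‖ < 1)
    {m : ℕ} (hm : ¬ (p : ℤ) ∣ (m : ℤ)) : ‖u ^ m - 1‖ = ‖u - 1‖ := by
  have hu1 : ‖u‖ = 1 := aux_norm_eq_one hu
  rw [← geom_sum_mul, norm_mul]
  have hsum : ‖∑ i ∈ Finset.range m, u ^ i‖ = 1 := by
    have h1 : (∑ i ∈ Finset.range m, u ^ i) = (m : ℚ_[p]) + ∑ i ∈ Finset.range m, (u ^ i - 1) := by
      rw [Finset.sum_sub_distrib]; simp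
    have h2 : ‖∑ i ∈ Finset.range m, (u ^ i - 1)‖ < 1 :=
      lt_of_le_of_lt (norm_sum_le_of_forall_le_of_nonneg (norm_nonneg _)
        (fun i _ => aux_pow_sub_one_le hu1.le i)) hu
    have hm1 : ‖((m : ℤ) : ℚ_[p])‖ = 1 := aux_int_norm_one hm
    rw [Int.cast_natCast] at hm1
    rw [h1, Padic.add_eq_max_of_ne (by rw [hm1]; exact (ne_of_lt h2).symm),
      hm1, max_eq_left h2.le]
  rw [hsum, one_mul]

-- the norm is ≤ 1/p when < 1
private lemma aux_le_inv_p {p : ℕ} [Fact p.Prime] {t : ℚ_[p]} (ht : ‖t‖ < 1) :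
    ‖t‖ ≤ (p : ℝ)⁻¹ := by
  have := (Padic.norm_le_pow_iff_norm_lt_pow_add_one t (-1)).mpr (by simpa using ht)
  simpa [zpow_neg] using this

-- p-th power case
open IsUltrametricDist in
private lemma aux_pth_power {p : ℕ} [Fact p.Prime] (hp : 3 ≤ p) {u : ℚ_[p]} (hu : ‖u - 1‖ < 1) :
    ‖u ^ p - 1‖ = (p : ℝ)⁻¹ * ‖u - 1‖ := by
  rcases eq_or_ne u 1 with rfl | hne
  · simp
  set t := u - 1 with htdef
  have ht : t ≠ 0 := sub_ne_zero.mpr hne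
  have htn : 0 < ‖t‖ := norm_pos_iff.mpr ht
  have hup : u ^ p - 1 = p * t + ∑ i ∈ Finset.Ico 2 (p + 1), t ^ i * (p.choose i : ℚ_[p]) := by
    have hu' : u = t + 1 := by rw [htdef]; ring
    rw [hu', add_pow]
    rw [Finset.range_eq_Ico,
      ← Finset.sum_Ico_consecutive _ (by omega : 0 ≤ 2) (by omega : 2 ≤ p + 1)]
    rw [show Finset.Ico 0 2 = Finset.range 2 by rw [Finset.range_eq_Ico]]
    simp only [Finset.sum_range_succ, Finset.sum_range_zero, one_pow, mul_one, pow_zero,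
      pow_one, Nat.choose_zero_right, Nat.choose_one_right, Nat.cast_one, one_mul, zero_add]
    ring
  have hrest : ‖∑ i ∈ Finset.Ico 2 (p + 1), t ^ i * (p.choose i : ℚ_[p])‖ < (p : ℝ)⁻¹ * ‖t‖ := by
    have hppos : (0:ℝ) < (p : ℝ)⁻¹ * ‖t‖ := by positivity
    apply lt_of_le_of_lt (norm_sum_le_of_forall_le_of_nonneg
      (C := (p:ℝ)⁻¹ * ‖t‖ * ‖t‖) (by positivity) ?_) ?_
    · intro i hi
      simp only [Finset.mem_Ico] at hi
      rw [norm_mul, norm_pow]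
      rcases lt_or_eq_of_le (Nat.lt_succ_iff.mp hi.2) with hlt | heq
      · -- 2 ≤ i < p : p ∣ choose
        have hdvd : (p:ℤ) ∣ (p.choose i : ℤ) :=
          Int.natCast_dvd_natCast.mpr (Nat.Prime.dvd_choose_self (Fact.out) (by omega) hlt)
        have hch : ‖((p.choose i : ℤ) : ℚ_[p])‖ ≤ (p : ℝ)⁻¹ :=
          aux_le_inv_p (Padic.norm_intCast_lt_one_iff.mpr hdvd)
        rw [Int.cast_natCast] at hch
        calc ‖t‖ ^ i * ‖((p.choose i : ℕ) : ℚ_[p])‖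
            ≤ ‖t‖ ^ i * (p:ℝ)⁻¹ := mul_le_mul_of_nonneg_left hch (by positivity)
          _ ≤ (‖t‖ * ‖t‖) * (p:ℝ)⁻¹ := by
              apply mul_le_mul_of_nonneg_right ?_ (by positivity)
              calc ‖t‖ ^ i ≤ ‖t‖ ^ 2 :=
                    pow_le_pow_of_le_one (norm_nonneg _) hu.le hi.1
                _ = ‖t‖ * ‖t‖ := sq ‖t‖
          _ = (p:ℝ)⁻¹ * ‖t‖ * ‖t‖ := by ring
      · -- i = p
        rw [heq]
        have hcs : ((Nat.choose p p : ℕ) : ℚ_[p]) = 1 := by rw [Nat.choose_self]; norm_num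
        rw [hcs, norm_one, mul_one]
        have hle : ‖t‖ ≤ (p:ℝ)⁻¹ := aux_le_inv_p hu
        calc ‖t‖ ^ p ≤ ‖t‖ ^ 3 :=
              pow_le_pow_of_le_one (norm_nonneg _) hu.le hp
          _ = ‖t‖ * ‖t‖ * ‖t‖ := by ring
          _ ≤ (p:ℝ)⁻¹ * ‖t‖ * ‖t‖ := by
              apply mul_le_mul_of_nonneg_right ?_ (norm_nonneg _)
              exact mul_le_mul_of_nonneg_right hle (norm_nonneg _)
    · calc (p:ℝ)⁻¹ * ‖t‖ * ‖t‖ < (p:ℝ)⁻¹ * ‖t‖ * 1 :=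
            mul_lt_mul_of_pos_left hu hppos
        _ = (p:ℝ)⁻¹ * ‖t‖ := mul_one _
  have hpt : ‖(p : ℚ_[p]) * t‖ = (p : ℝ)⁻¹ * ‖t‖ := by
    rw [norm_mul, Padic.norm_p]
  rw [hup, Padic.add_eq_max_of_ne (by rw [hpt]; exact (ne_of_lt hrest).symm),
    hpt, max_eq_left hrest.le]

-- main multiplicative lemma, strong induction on k
private lemma aux_key {p : ℕ} [Fact p.Prime] (hp : 3 ≤ p) :
    ∀ k : ℕ, 1 ≤ k → ∀ u : ℚ_[p], ‖u - 1‖ < 1 →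
      ‖u ^ k - 1‖ = ‖(k : ℚ_[p])‖ * ‖u - 1‖ := by
  intro k
  induction k using Nat.strong_induction_on with
  | _ k ih =>
    intro hk u hu
    by_cases hdvd : p ∣ k
    · obtain ⟨k', rfl⟩ := hdvd
      have hk' : 1 ≤ k' := Nat.pos_of_ne_zero (fun h => by simp [h] at hk)
      have hlt : k' < p * k' := by nlinarith
      have hup : u ^ (p * k') = (u ^ p) ^ k' := by rw [← pow_mul]
      have hp1 : (1:ℝ) ≤ (p:ℝ) := by exact_mod_cast (by omega : 1 ≤ p)
      have hu2 : ‖u ^ p - 1‖ < 1 := by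
        rw [aux_pth_power hp hu]
        calc (p:ℝ)⁻¹ * ‖u - 1‖ ≤ 1 * ‖u - 1‖ := by
              apply mul_le_mul_of_nonneg_right ?_ (norm_nonneg _)
              rw [inv_le_one_iff₀]; right; exact hp1
          _ = ‖u - 1‖ := one_mul _
          _ < 1 := hu
      rw [hup, ih k' hlt hk' _ hu2, aux_pth_power hp hu]
      have : ((p * k' : ℕ) : ℚ_[p]) = (p : ℚ_[p]) * (k' : ℚ_[p]) := by push_cast; ring
      rw [this, norm_mul, Padic.norm_p]
      ring
    · have hm : ¬ (p : ℤ) ∣ (k : ℤ) := by exact_mod_cast hdvd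
      rw [aux_coprime hu hm]
      have hk1 : ‖((k : ℤ) : ℚ_[p])‖ = 1 := aux_int_norm_one hm
      rw [Int.cast_natCast] at hk1
      rw [hk1, one_mul]

-- Fermat: ‖x‖ = 1 → ‖x^(p-1) - 1‖ < 1
private lemma aux_fermat {p : ℕ} [Fact p.Prime] {x : ℚ_[p]} (hx : ‖x‖ = 1) :
    ‖x ^ (p - 1) - 1‖ < 1 := by
  set z : ℤ_[p] := ⟨x, hx.le⟩ with hz
  have hzx : (z : ℚ_[p]) = x := rfl
  have hznorm : ‖z‖ = 1 := by rw [PadicInt.norm_def, hzx, hx]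
  have hz0 : PadicInt.toZMod z ≠ 0 := by
    intro h
    have h2 : z ∈ RingHom.ker (PadicInt.toZMod : ℤ_[p] →+* ZMod p) := h
    rw [PadicInt.ker_toZMod, IsLocalRing.mem_maximalIdeal, PadicInt.mem_nonunits] at h2
    rw [hznorm] at h2
    exact lt_irrefl 1 h2
  have hpow : PadicInt.toZMod (z ^ (p - 1) - 1) = 0 := by
    rw [map_sub, map_pow, map_one, ZMod.pow_card_sub_one_eq_one hz0, sub_self]
  have hker : z ^ (p - 1) - 1 ∈ IsLocalRing.maximalIdeal ℤ_[p] := by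
    rw [← PadicInt.ker_toZMod]; exact hpow
  rw [IsLocalRing.mem_maximalIdeal, PadicInt.mem_nonunits] at hker
  have hcoe : ((z ^ (p - 1) - 1 : ℤ_[p]) : ℚ_[p]) = x ^ (p - 1) - 1 := by
    push_cast [hzx]; ring
  rw [← hcoe, ← PadicInt.norm_def]
  exact hker

theorem padic_monomial_no_solution (p : ℕ) [Fact p.Prime] (hp : 3 ≤ p)
    (k : ℕ) (hk : 1 ≤ k) (a : ℚ_[p]) (ha : ‖a - 1‖ < 1)
    (hka : ‖(k : ℚ_[p])‖ ≤ ‖a - 1‖) :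
    ¬ ∃ x : ℚ_[p], x ^ k = a := by
  rintro ⟨x, rfl⟩
  have hknorm : 0 < ‖(k : ℚ_[p])‖ := by
    apply norm_pos_iff.mpr
    exact_mod_cast Nat.cast_ne_zero.mpr (by omega)
  have hapos : 0 < ‖x ^ k - 1‖ := lt_of_lt_of_le hknorm hka
  have ha1 : ‖x ^ k‖ = 1 := aux_norm_eq_one ha
  have hx1 : ‖x‖ = 1 := by
    rw [norm_pow] at ha1
    by_contra hne
    rcases lt_or_gt_of_ne hne with h | h
    · have := pow_lt_one₀ (norm_nonneg x) h (by omega : k ≠ 0)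
      rw [ha1] at this; exact lt_irrefl 1 this
    · have := one_lt_pow₀ h (by omega : k ≠ 0)
      rw [ha1] at this; exact lt_irrefl 1 this
  have hu : ‖x ^ (p - 1) - 1‖ < 1 := aux_fermat hx1
  have hpm1 : ¬ (p : ℤ) ∣ ((p - 1 : ℕ) : ℤ) := by
    intro h
    have h2 : p ∣ (p - 1) := by exact_mod_cast h
    have := Nat.le_of_dvd (by omega) h2
    omega
  have hcop : ‖(x ^ k) ^ (p - 1) - 1‖ = ‖x ^ k - 1‖ := aux_coprime ha hpm1
  have hswap : (x ^ k) ^ (p - 1) = (x ^ (p - 1)) ^ k := by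
    rw [← pow_mul, ← pow_mul, Nat.mul_comm]
  have hkey : ‖(x ^ (p - 1)) ^ k - 1‖ = ‖(k : ℚ_[p])‖ * ‖x ^ (p - 1) - 1‖ :=
    aux_key hp k hk _ hu
  rw [hswap, hkey] at hcop
  have hfin : ‖x ^ k - 1‖ ≤ ‖x ^ k - 1‖ * ‖x ^ (p - 1) - 1‖ := by
    calc ‖x ^ k - 1‖ = ‖(k : ℚ_[p])‖ * ‖x ^ (p - 1) - 1‖ := hcop.symm
      _ ≤ ‖x ^ k - 1‖ * ‖x ^ (p - 1) - 1‖ :=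
          mul_le_mul_of_nonneg_right hka (norm_nonneg _)
  nlinarith [norm_nonneg (x ^ (p - 1) - 1)]
end

section
/- Let p ≥ 3 be prime, k ≥ 1, and a ∈ ℚ_p with |a - 1|_p < |k|_p. Then the number of solutions x ∈ ℚ_p of x^k = a equals the number of residues ξ ∈ {1,...,p-1} with ξ^k ≡ 1 (mod p), which equals gcd(k, p-1). -/
namespace PadicAux
variable {p : ℕ} [hp : Fact p.Prime]

lemma sum_norm_lt {s : Finset ℕ} {f : ℕ → ℤ_[p]} {c : ℝ} (hc : 0 < c)
    (h : ∀ j ∈ s, ‖f j‖ < c) : ‖∑ j ∈ s, f j‖ < c := by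
  classical
  induction s using Finset.induction with
  | empty => simpa using hc
  | @insert a s ha ih =>
    rw [Finset.sum_insert ha]
    refine lt_of_le_of_lt (PadicInt.nonarchimedean _ _) (max_lt ?_ ?_)
    · exact h a (Finset.mem_insert_self a s)
    · exact ih fun j hj => h j (Finset.mem_insert_of_mem hj)

lemma sum_norm_le {s : Finset ℕ} {f : ℕ → ℤ_[p]} {c : ℝ} (hc : 0 ≤ c)
    (h : ∀ j ∈ s, ‖f j‖ ≤ c) : ‖∑ j ∈ s, f j‖ ≤ c := by
  classical
  induction s using Finset.induction with
  | empty => simpa using hc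
  | @insert a s ha ih =>
    rw [Finset.sum_insert ha]
    refine le_trans (PadicInt.nonarchimedean _ _) (max_le ?_ ?_)
    · exact h a (Finset.mem_insert_self a s)
    · exact ih fun j hj => h j (Finset.mem_insert_of_mem hj)

lemma norm_le_inv_p {z : ℤ_[p]} (h : ‖z‖ < 1) : ‖z‖ ≤ (p : ℝ)⁻¹ := by
  obtain ⟨w, rfl⟩ := (PadicInt.norm_lt_one_iff_dvd z).mp h
  rw [norm_mul, PadicInt.norm_p]
  calc (p:ℝ)⁻¹ * ‖w‖ ≤ (p:ℝ)⁻¹ * 1 := by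
        refine mul_le_mul_of_nonneg_left (PadicInt.norm_le_one w) (by positivity)
    _ = (p:ℝ)⁻¹ := mul_one _

lemma three_le_pow (v : ℕ) (hv : 1 ≤ v) : v + 2 ≤ 3 ^ v := by
  induction v with
  | zero => omega
  | succ n ih =>
    rcases Nat.eq_or_lt_of_le hv with h | h
    · simp [← h]
    · have := ih (by omega)
      have h3 : 3 ^ n ≤ 3 ^ (n+1) := Nat.pow_le_pow_right (by norm_num) (by omega)
      omega

lemma padicValNat_add_two_le (hp3 : 3 ≤ p) {j : ℕ} (hj : 2 ≤ j) :
    padicValNat p j + 2 ≤ j := by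
  set v := padicValNat p j with hv
  rcases Nat.eq_zero_or_pos v with h0 | h1
  · omega
  · have hdvd : p ^ v ∣ j := pow_padicValNat_dvd
    have h1' : p ^ v ≤ j := Nat.le_of_dvd (by omega) hdvd
    have h2 : 3 ^ v ≤ p ^ v := Nat.pow_le_pow_left hp3 v
    have := three_le_pow v h1
    omega

-- Claim A
lemma norm_pow_lt_norm_nat (hp3 : 3 ≤ p) {j : ℕ} (hj : 2 ≤ j) {t : ℤ_[p]} (ht : ‖t‖ < 1) :
    ‖t‖ ^ (j - 1) < ‖(j : ℤ_[p])‖ := by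
  have hple : ‖t‖ ≤ (p:ℝ)⁻¹ := norm_le_inv_p ht
  set v := padicValNat p j with hv
  have hnd : ¬ ((p : ℤ) ^ (v + 1) ∣ (j : ℤ)) := by
    intro h
    exact pow_succ_padicValNat_not_dvd (p := p) (n := j) (by omega) (by exact_mod_cast h)
  have h2 : ¬ (‖((j : ℤ) : ℤ_[p])‖ ≤ (p:ℝ) ^ (-(v+1 : ℕ) : ℤ)) := by
    intro h
    exact hnd (PadicInt.norm_int_le_pow_iff_dvd.mp h)
  push_neg at h2
  have hcast : ((j : ℤ) : ℤ_[p]) = (j : ℤ_[p]) := by push_cast; ring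
  rw [hcast] at h2
  refine lt_of_le_of_lt ?_ h2
  have hp0 : (1:ℝ) < (p:ℝ) := by exact_mod_cast hp.out.one_lt
  calc ‖t‖ ^ (j - 1) ≤ ((p:ℝ)⁻¹) ^ (j - 1) := by
        exact pow_le_pow_left₀ (norm_nonneg t) hple _
    _ = (p:ℝ) ^ (-(j - 1 : ℕ) : ℤ) := by
        rw [zpow_neg, zpow_natCast, inv_pow]
    _ ≤ (p:ℝ) ^ (-(v+1 : ℕ) : ℤ) := by
        apply zpow_le_zpow_right₀ (le_of_lt hp0)
        have := padicValNat_add_two_le hp3 hj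
        omega

-- Claim B
lemma norm_choose_mul_le (k j : ℕ) (hk : 1 ≤ k) (hj : 1 ≤ j) :
    ‖((k.choose j : ℕ) : ℤ_[p])‖ * ‖(j : ℤ_[p])‖ ≤ ‖(k : ℤ_[p])‖ := by
  have hid : j * k.choose j = k * (k-1).choose (j-1) := by
    have h := Nat.add_one_mul_choose_eq (k - 1) (j - 1)
    have hk1 : (k-1).succ = k := Nat.succ_pred_eq_of_pos hk
    have hj1 : (j-1).succ = j := Nat.succ_pred_eq_of_pos hj
    rw [Nat.sub_add_cancel hk, Nat.sub_add_cancel hj] at h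
    rw [mul_comm (k.choose j) j] at h
    exact h.symm
  have hcast : ((j : ℤ_[p]) * (k.choose j : ℤ_[p])) = (k : ℤ_[p]) * ((k-1).choose (j-1) : ℤ_[p]) := by
    exact_mod_cast congrArg (Nat.cast : ℕ → ℤ_[p]) hid
  have hnorm := congrArg norm hcast
  rw [norm_mul, norm_mul] at hnorm
  rw [mul_comm]
  rw [hnorm]
  calc ‖(k : ℤ_[p])‖ * ‖(((k-1).choose (j-1) : ℕ) : ℤ_[p])‖ ≤ ‖(k : ℤ_[p])‖ * 1 :=
        mul_le_mul_of_nonneg_left (PadicInt.norm_le_one _) (norm_nonneg _)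
    _ = _ := mul_one _


-- decomposition of (1+t)^k
lemma binom_decomp (k : ℕ) (hk : 1 ≤ k) (t : ℤ_[p]) :
    (1 + t) ^ k = 1 + (k : ℤ_[p]) * t + ∑ j ∈ Finset.Ico 2 (k+1), t ^ j * (k.choose j : ℤ_[p]) := by
  rw [add_comm (1 : ℤ_[p]) t, add_pow]
  have hsplit : ∑ j ∈ Finset.range (k+1), t ^ j * (1:ℤ_[p]) ^ (k - j) * (k.choose j : ℤ_[p])
      = ∑ j ∈ Finset.Ico 0 2, t ^ j * (k.choose j : ℤ_[p])
        + ∑ j ∈ Finset.Ico 2 (k+1), t ^ j * (k.choose j : ℤ_[p]) := by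
    simp only [one_pow, mul_one]
    rw [Finset.range_eq_Ico]
    exact (Finset.sum_Ico_consecutive _ (by omega) (by omega)).symm
  rw [hsplit]
  have h2 : ∑ j ∈ Finset.Ico 0 2, t ^ j * (k.choose j : ℤ_[p]) = 1 + (k : ℤ_[p]) * t := by
    have : Finset.Ico 0 2 = ({0, 1} : Finset ℕ) := by decide
    rw [this]
    simp [Finset.sum_insert, mul_comm]
  rw [h2]

-- L1 : the norm identity
lemma norm_one_add_pow_sub_one (hp3 : 3 ≤ p) {k : ℕ} (hk : 1 ≤ k) {t : ℤ_[p]} (ht : ‖t‖ < 1) :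
    ‖(1 + t) ^ k - 1‖ = ‖(k : ℤ_[p])‖ * ‖t‖ := by
  rcases eq_or_ne t 0 with rfl | ht0
  · simp
  have htpos : 0 < ‖t‖ := norm_pos_iff.mpr ht0
  have hkne : ((k : ℤ_[p])) ≠ 0 := Nat.cast_ne_zero.mpr (by omega)
  have hkpos : 0 < ‖(k : ℤ_[p])‖ := norm_pos_iff.mpr hkne
  have hdec := binom_decomp k hk t
  have heq : (1 + t) ^ k - 1
      = (k : ℤ_[p]) * t + ∑ j ∈ Finset.Ico 2 (k+1), t ^ j * (k.choose j : ℤ_[p]) := by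
    rw [hdec]; ring
  have htail : ‖∑ j ∈ Finset.Ico 2 (k+1), t ^ j * (k.choose j : ℤ_[p])‖ < ‖(k : ℤ_[p])‖ * ‖t‖ := by
    apply sum_norm_lt (by positivity)
    intro j hj
    rw [Finset.mem_Ico] at hj
    obtain ⟨hj2, hjk⟩ := hj
    rw [norm_mul]
    have hcne : ((k.choose j : ℕ) : ℤ_[p]) ≠ 0 :=
      Nat.cast_ne_zero.mpr (Nat.choose_pos (by omega)).ne'
    have hcpos : 0 < ‖((k.choose j : ℕ) : ℤ_[p])‖ := norm_pos_iff.mpr hcne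
    have hjne : ((j : ℤ_[p])) ≠ 0 := Nat.cast_ne_zero.mpr (by omega)
    have hA := norm_pow_lt_norm_nat hp3 hj2 ht
    have hB := norm_choose_mul_le (p := p) k j hk (by omega)
    have hpow : ‖t ^ j‖ = ‖t‖ ^ (j - 1) * ‖t‖ := by
      rw [norm_pow, ← pow_succ]
      congr 1
      omega
    rw [hpow]
    calc ‖t‖ ^ (j-1) * ‖t‖ * ‖((k.choose j : ℕ) : ℤ_[p])‖
        = (‖((k.choose j : ℕ) : ℤ_[p])‖ * ‖t‖ ^ (j-1)) * ‖t‖ := by ring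
      _ < (‖((k.choose j : ℕ) : ℤ_[p])‖ * ‖(j : ℤ_[p])‖) * ‖t‖ := by
          apply mul_lt_mul_of_pos_right _ htpos
          exact mul_lt_mul_of_pos_left hA hcpos
      _ ≤ ‖(k : ℤ_[p])‖ * ‖t‖ := mul_le_mul_of_nonneg_right hB (norm_nonneg t)
  have hkt : ‖(k : ℤ_[p]) * t‖ = ‖(k : ℤ_[p])‖ * ‖t‖ := norm_mul _ _
  rw [heq, PadicInt.norm_add_eq_max_of_ne (by rw [hkt]; exact ne_of_gt htail), hkt]
  exact max_eq_left (le_of_lt htail)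


-- L1 in ℚ_p
lemma norm_one_add_pow_sub_one' (hp3 : 3 ≤ p) {k : ℕ} (hk : 1 ≤ k) {t : ℚ_[p]} (ht : ‖t‖ < 1) :
    ‖(1 + t) ^ k - 1‖ = ‖(k : ℚ_[p])‖ * ‖t‖ := by
  set T : ℤ_[p] := ⟨t, le_of_lt ht⟩ with hTdef
  have hT : (T : ℚ_[p]) = t := rfl
  have hTn : ‖T‖ = ‖t‖ := by rw [PadicInt.norm_def, hT]
  have key := norm_one_add_pow_sub_one hp3 hk (t := T) (by rw [hTn]; exact ht)
  have hco : (((1 + T) ^ k - 1 : ℤ_[p]) : ℚ_[p]) = (1 + t) ^ k - 1 := by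
    push_cast [hT]; ring
  have hkc : ‖(k : ℤ_[p])‖ = ‖(k : ℚ_[p])‖ := by
    rw [PadicInt.norm_def]; norm_cast
  rw [PadicInt.norm_def, hco, hkc, hTn] at key
  exact key

lemma norm_eq_one_of_norm_sub_one_lt {z : ℚ_[p]} (h : ‖z - 1‖ < 1) : ‖z‖ = 1 := by
  rcases eq_or_ne (z - 1) 0 with h0 | h0
  · have : z = 1 := by linear_combination h0
    simp [this]
  · have : z = 1 + (z - 1) := by ring
    rw [this, Padic.add_eq_max_of_ne (by rw [norm_one]; exact (ne_of_gt h))]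
    · rw [norm_one]
      exact max_eq_left (le_of_lt h)

-- uniqueness of k-th roots in a small ball
lemma pow_root_unique (hp3 : 3 ≤ p) {k : ℕ} (hk : 1 ≤ k) {x y : ℚ_[p]}
    (hy : ‖y‖ = 1) (hxy : ‖x - y‖ < 1) (h : x ^ k = y ^ k) : x = y := by
  have hy0 : y ≠ 0 := by intro h0; rw [h0, norm_zero] at hy; norm_num at hy
  have hw1 : ‖x / y - 1‖ < 1 := by
    have hrw : x / y - 1 = (x - y) / y := by field_simp
    rw [hrw, norm_div, hy, div_one]; exact hxy
  have hwk : (x / y) ^ k = 1 := by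
    rw [div_pow, h, div_self (pow_ne_zero _ hy0)]
  have hkey := norm_one_add_pow_sub_one' hp3 hk hw1
  rw [show (1 : ℚ_[p]) + (x / y - 1) = x / y by ring, hwk, sub_self, norm_zero] at hkey
  have hkne : ‖((k : ℚ_[p]))‖ ≠ 0 := by
    simp only [ne_eq, norm_eq_zero, Nat.cast_eq_zero]; omega
  have hw0 : ‖x / y - 1‖ = 0 := by
    rcases mul_eq_zero.mp hkey.symm with h' | h'
    · exact absurd h' hkne
    · exact h'
  have hdiv : x / y = 1 := sub_eq_zero.mp (norm_eq_zero.mp hw0)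
  exact (div_eq_one_iff_eq hy0).mp hdiv


open Polynomial in
-- L2 : Hensel for x^k = b with strong hypothesis
lemma exists_root_sq {k : ℕ} (hk : 1 ≤ k) {b : ℚ_[p]} (hb : ‖b - 1‖ < ‖(k : ℚ_[p])‖ ^ 2) :
    ∃ x : ℚ_[p], ‖x - 1‖ < 1 ∧ x ^ k = b := by
  have hknorm : ‖(k : ℚ_[p])‖ ≤ 1 := by
    rw [show ((k : ℚ_[p])) = ((k : ℤ) : ℚ_[p]) by push_cast; ring]
    exact Padic.norm_int_le_one _
  have hb1' : ‖b - 1‖ < 1 := lt_of_lt_of_le hb (by nlinarith [norm_nonneg ((k : ℚ_[p]))])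
  have hbnorm : ‖b‖ ≤ 1 := le_of_eq (norm_eq_one_of_norm_sub_one_lt hb1')
  set B : ℤ_[p] := ⟨b, hbnorm⟩ with hBdef
  have hBco : (B : ℚ_[p]) = b := rfl
  set F : Polynomial ℤ_[p] := X ^ k - C B with hF
  have heval : ∀ z : ℤ_[p], F.eval z = z ^ k - B := by intro z; simp [hF]
  have hderiv : ∀ z : ℤ_[p], F.derivative.eval z = k * z ^ (k - 1) := by
    intro z; simp [hF, derivative_X_pow]
  have hnorm1 : ‖F.eval 1‖ = ‖b - 1‖ := by
    rw [heval, one_pow, PadicInt.norm_def]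
    have : ((1 - B : ℤ_[p]) : ℚ_[p]) = 1 - b := by push_cast [hBco]; ring
    rw [this, norm_sub_rev]
  have hnormd : ‖F.derivative.eval 1‖ = ‖(k : ℚ_[p])‖ := by
    rw [hderiv, one_pow, mul_one, PadicInt.norm_def]
    norm_cast
  have hensel : ‖F.eval 1‖ < ‖F.derivative.eval 1‖ ^ 2 := by
    rw [hnorm1, hnormd]; exact hb
  obtain ⟨z, hz1, hz2, _, _⟩ := hensels_lemma hensel
  refine ⟨(z : ℚ_[p]), ?_, ?_⟩
  · have : ((z - 1 : ℤ_[p]) : ℚ_[p]) = (z : ℚ_[p]) - 1 := by push_cast; ring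
    rw [← this, ← PadicInt.norm_def]
    calc ‖z - 1‖ < ‖F.derivative.eval 1‖ := hz2
      _ ≤ 1 := by rw [hnormd]; exact hknorm
  · have : z ^ k = B := by
      have h' := hz1; rw [Polynomial.coe_aeval_eq_eval, heval] at h'
      exact eq_of_sub_eq_zero h'
    calc ((z : ℚ_[p])) ^ k = ((z ^ k : ℤ_[p]) : ℚ_[p]) := by push_cast; ring
      _ = b := by rw [this, hBco]

lemma norm_nat_le_inv_of_dvd {n : ℕ} (h : p ∣ n) : ‖(n : ℤ_[p])‖ ≤ (p : ℝ)⁻¹ := by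
  obtain ⟨m, rfl⟩ := h
  have : ((p * m : ℕ) : ℤ_[p]) = (p : ℤ_[p]) * (m : ℤ_[p]) := by push_cast; ring
  rw [this, norm_mul, PadicInt.norm_p]
  calc (p:ℝ)⁻¹ * ‖(m : ℤ_[p])‖ ≤ (p:ℝ)⁻¹ * 1 :=
        mul_le_mul_of_nonneg_left (PadicInt.norm_le_one _) (by positivity)
    _ = (p:ℝ)⁻¹ := mul_one _

open Polynomial in
-- L3 : p-th roots
lemma exists_pth_root (hp3 : 3 ≤ p) {y : ℚ_[p]} (hy : ‖y - 1‖ ≤ (p : ℝ) ^ (-2 : ℤ)) :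
    ∃ x : ℚ_[p], ‖x - 1‖ < 1 ∧ x ^ p = y := by
  have hppos : (0:ℝ) < p := by exact_mod_cast hp.out.pos
  have hpinv1 : (p:ℝ)⁻¹ < 1 := by
    rw [inv_lt_one_iff₀]; right; exact_mod_cast hp.out.one_lt
  have hpn0 : ((p : ℚ_[p])) ≠ 0 := Nat.cast_ne_zero.mpr hp.out.ne_zero
  set c : ℚ_[p] := (y - 1) / p with hcdef
  have hcnorm : ‖c‖ ≤ (p:ℝ)⁻¹ := by
    rw [hcdef, norm_div, Padic.norm_p]
    rw [div_le_iff₀ (by positivity : (0:ℝ) < (p:ℝ)⁻¹)]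
    calc ‖y - 1‖ ≤ (p:ℝ) ^ (-2 : ℤ) := hy
      _ = (p:ℝ)⁻¹ * (p:ℝ)⁻¹ := by
          rw [show (-2 : ℤ) = (-1) + (-1) by ring, zpow_add₀ (ne_of_gt hppos), zpow_neg_one]
  have hcle1 : ‖c‖ < 1 := lt_of_le_of_lt hcnorm hpinv1
  set Cz : ℤ_[p] := ⟨c, le_of_lt hcle1⟩ with hCdef
  have hCco : (Cz : ℚ_[p]) = c := rfl
  have hCn : ‖Cz‖ = ‖c‖ := by rw [PadicInt.norm_def, hCco]
  have hCle : ‖Cz‖ ≤ (p:ℝ)⁻¹ := by rw [hCn]; exact hcnorm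
  have hp2lt1 : (p:ℝ) ^ (-2 : ℤ) < 1 := by
    rw [show (-2 : ℤ) = (-1) + (-1) by ring, zpow_add₀ (ne_of_gt hppos), zpow_neg_one]
    nlinarith [hpinv1, inv_pos.mpr hppos]
  have hynorm : ‖y‖ ≤ 1 :=
    le_of_eq (norm_eq_one_of_norm_sub_one_lt (lt_of_le_of_lt hy hp2lt1))
  set Y : ℤ_[p] := ⟨y, hynorm⟩ with hYdef
  have hYco : (Y : ℚ_[p]) = y := rfl
  have hYeq : Y = 1 + (p : ℤ_[p]) * Cz := by
    have : ((Y : ℤ_[p]) : ℚ_[p]) = ((1 + (p : ℤ_[p]) * Cz : ℤ_[p]) : ℚ_[p]) := by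
      push_cast [hYco, hCco, hcdef]
      field_simp
      ring
    exact Subtype.coe_injective this
  set a : ℤ_[p] := 1 + Cz with hadef
  have haco : (a : ℚ_[p]) = 1 + c := by push_cast [hadef, hCco]; ring
  have hanorm : ‖a‖ = 1 := by
    rw [PadicInt.norm_def, haco]
    apply norm_eq_one_of_norm_sub_one_lt
    simpa using hcle1
  set F : Polynomial ℤ_[p] := Polynomial.X ^ p - Polynomial.C Y with hF
  have heval : ∀ z : ℤ_[p], F.eval z = z ^ p - Y := by intro z; simp [hF]
  have hderiv : ∀ z : ℤ_[p], F.derivative.eval z = p * z ^ (p - 1) := by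
    intro z; simp [hF, Polynomial.derivative_X_pow]
  have hevala : F.eval a = ∑ j ∈ Finset.Ico 2 (p+1), Cz ^ j * (p.choose j : ℤ_[p]) := by
    rw [heval, hadef, binom_decomp p (by omega) Cz, hYeq]; ring
  have hpinvpos : (0:ℝ) < (p:ℝ)⁻¹ := by positivity
  have hevalnorm : ‖F.eval a‖ < (p:ℝ)⁻¹ ^ 2 := by
    rw [hevala]
    have h3 : ((p:ℝ)⁻¹) ^ 3 < ((p:ℝ)⁻¹) ^ 2 :=
      pow_lt_pow_right_of_lt_one₀ hpinvpos hpinv1 (by omega)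
    refine lt_of_le_of_lt (sum_norm_le (by positivity) ?_) h3
    intro j hj
    rw [Finset.mem_Ico] at hj
    rw [norm_mul, norm_pow]
    have hCpow : ∀ m : ℕ, 2 ≤ m → ‖Cz‖ ^ m ≤ ((p:ℝ)⁻¹) ^ m :=
      fun m _ => pow_le_pow_left₀ (norm_nonneg _) hCle m
    rcases eq_or_ne j p with hjp | hjp
    · rw [hjp, Nat.choose_self]
      simp only [Nat.cast_one, norm_one, mul_one]
      calc ‖Cz‖ ^ p ≤ ((p:ℝ)⁻¹) ^ p := hCpow p (by omega)
        _ ≤ ((p:ℝ)⁻¹) ^ 3 :=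
          pow_le_pow_of_le_one (le_of_lt hpinvpos) (le_of_lt hpinv1) (by omega)
    · have hdvd : p ∣ p.choose j := hp.out.dvd_choose_self (by omega) (by omega)
      calc ‖Cz‖ ^ j * ‖((p.choose j : ℕ) : ℤ_[p])‖
          ≤ ((p:ℝ)⁻¹) ^ 2 * (p:ℝ)⁻¹ := by
            refine mul_le_mul ?_ (norm_nat_le_inv_of_dvd hdvd) (norm_nonneg _) (by positivity)
            calc ‖Cz‖ ^ j ≤ ((p:ℝ)⁻¹) ^ j := hCpow j hj.1
              _ ≤ ((p:ℝ)⁻¹) ^ 2 :=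
                pow_le_pow_of_le_one (le_of_lt hpinvpos) (le_of_lt hpinv1) hj.1
        _ = ((p:ℝ)⁻¹) ^ 3 := by ring
  have hdnorm : ‖F.derivative.eval a‖ = (p:ℝ)⁻¹ := by
    rw [hderiv, norm_mul, norm_pow, hanorm, one_pow, mul_one, PadicInt.norm_p]
  have hensel : ‖F.eval a‖ < ‖F.derivative.eval a‖ ^ 2 := by
    rw [hdnorm]; exact hevalnorm
  obtain ⟨z, hz1, hz2, _, _⟩ := hensels_lemma hensel
  have hzY : z ^ p = Y := by
    have h' := hz1; rw [Polynomial.coe_aeval_eq_eval, heval] at h'; exact eq_of_sub_eq_zero h'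
  refine ⟨(z : ℚ_[p]), ?_, ?_⟩
  · have hrw : (z : ℚ_[p]) - 1 = ((z - a : ℤ_[p]) : ℚ_[p]) + c := by
      push_cast [haco]; ring
    rw [hrw]
    refine lt_of_le_of_lt (Padic.nonarchimedean _ _) (max_lt ?_ ?_)
    · rw [← PadicInt.norm_def]
      exact lt_trans (by rw [Polynomial.coe_aeval_eq_eval, hdnorm] at hz2; exact hz2) hpinv1
    · exact hcle1
  · calc ((z : ℚ_[p])) ^ p = ((z ^ p : ℤ_[p]) : ℚ_[p]) := by push_cast; ring
      _ = y := by rw [hzY, hYco]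


-- L4 : main existence
lemma exists_pow_root (hp3 : 3 ≤ p) :
    ∀ k : ℕ, 1 ≤ k → ∀ b : ℚ_[p], ‖b - 1‖ < ‖(k : ℚ_[p])‖ →
      ∃ x : ℚ_[p], ‖x - 1‖ < 1 ∧ x ^ k = b := by
  intro k
  induction k using Nat.strong_induction_on with
  | _ k ih =>
  intro hk b hb
  have hppos : (0:ℝ) < p := by exact_mod_cast hp.out.pos
  have hpinv1 : (p:ℝ)⁻¹ < 1 := by
    rw [inv_lt_one_iff₀]; right; exact_mod_cast hp.out.one_lt
  by_cases hpk : p ∣ k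
  · obtain ⟨k', rfl⟩ := hpk
    have hk' : 1 ≤ k' := by
      rcases Nat.eq_zero_or_pos k' with h0 | h1
      · subst h0; omega
      · omega
    have hlt : k' < p * k' := by
      nlinarith [hp.out.two_le]
    have hk'pos : (0:ℝ) < ‖(k' : ℚ_[p])‖ := by
      apply norm_pos_iff.mpr
      exact Nat.cast_ne_zero.mpr (by omega)
    have hnorm : ‖((p * k' : ℕ) : ℚ_[p])‖ = (p:ℝ)⁻¹ * ‖(k' : ℚ_[p])‖ := by
      push_cast
      rw [norm_mul, Padic.norm_p]
    have hb' : ‖b - 1‖ < ‖(k' : ℚ_[p])‖ := by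
      refine lt_of_lt_of_le hb ?_
      rw [hnorm]
      nlinarith
    obtain ⟨y, hy1, hy2⟩ := ih k' hlt hk' b hb'
    have hident := norm_one_add_pow_sub_one' hp3 hk' (t := y - 1) hy1
    rw [show (1 : ℚ_[p]) + (y - 1) = y by ring, hy2] at hident
    have hyn : ‖y - 1‖ < (p:ℝ)⁻¹ := by
      have : ‖(k' : ℚ_[p])‖ * ‖y - 1‖ < (p:ℝ)⁻¹ * ‖(k' : ℚ_[p])‖ := by
        rw [← hident, ← hnorm]; exact hb
      nlinarith
    have hyn2 : ‖y - 1‖ ≤ (p:ℝ) ^ (-2 : ℤ) := by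
      rw [Padic.norm_le_pow_iff_norm_lt_pow_add_one]
      have : ((-2 : ℤ) + 1) = -1 := by ring
      rw [this, zpow_neg_one]
      exact hyn
    obtain ⟨x, hx1, hx2⟩ := exists_pth_root hp3 hyn2
    exact ⟨x, hx1, by rw [pow_mul, hx2, hy2]⟩
  · have hknorm1 : ‖(k : ℚ_[p])‖ = 1 := by
      have hle : ‖((k : ℤ) : ℚ_[p])‖ ≤ 1 := Padic.norm_int_le_one _
      have hnlt : ¬ (‖((k : ℤ) : ℚ_[p])‖ < 1) := by
        rw [Padic.norm_intCast_lt_one_iff]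
        exact fun h => hpk (Int.ofNat_dvd.mp h)
      have : ((k : ℤ) : ℚ_[p]) = (k : ℚ_[p]) := by push_cast; ring
      rw [this] at hle hnlt
      linarith [lt_or_ge ‖(k : ℚ_[p])‖ 1]
    apply exists_root_sq hk
    rw [hknorm1, one_pow, ← hknorm1]
    exact hb


lemma norm_pow_sub_pow_le {x y : ℚ_[p]} (hx : ‖x‖ ≤ 1) (hy : ‖y‖ ≤ 1) (k : ℕ) :
    ‖x ^ k - y ^ k‖ ≤ ‖x - y‖ := by
  set X : ℤ_[p] := ⟨x, hx⟩ with hX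
  set Y : ℤ_[p] := ⟨y, hy⟩ with hY
  obtain ⟨c, hc⟩ := sub_dvd_pow_sub_pow X Y k
  have hcast : x ^ k - y ^ k = (((X - Y) * c : ℤ_[p]) : ℚ_[p]) := by
    rw [← hc]; rfl
  have hxy : x - y = ((X - Y : ℤ_[p]) : ℚ_[p]) := rfl
  rw [hcast, hxy, ← PadicInt.norm_def, ← PadicInt.norm_def, norm_mul]
  calc ‖X - Y‖ * ‖c‖ ≤ ‖X - Y‖ * 1 :=
        mul_le_mul_of_nonneg_left (PadicInt.norm_le_one c) (norm_nonneg _)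
    _ = ‖X - Y‖ := mul_one _

open Polynomial in
lemma exists_teichmuller (hp3 : 3 ≤ p) {ξ : ℕ} (h1 : 1 ≤ ξ) (h2 : ξ ≤ p - 1) :
    ∃ z : ℚ_[p], z ^ (p - 1) = 1 ∧ ‖z - (ξ : ℚ_[p])‖ < 1 := by
  have hpltξ : ξ < p := by omega
  have hnd : ¬ (p : ℤ) ∣ (ξ : ℤ) := by
    intro h
    have : p ∣ ξ := Int.ofNat_dvd.mp h
    have := Nat.le_of_dvd (by omega) this
    omega
  have hξnorm : ‖((ξ : ℤ) : ℤ_[p])‖ = 1 := by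
    have hle : ‖((ξ : ℤ) : ℤ_[p])‖ ≤ 1 := PadicInt.norm_le_one _
    have hnlt : ¬ (‖((ξ : ℤ) : ℤ_[p])‖ < 1) := by
      rw [PadicInt.norm_int_lt_one_iff_dvd]; exact hnd
    linarith [lt_or_ge ‖((ξ : ℤ) : ℤ_[p])‖ 1]
  have hnd2 : ¬ (p : ℤ) ∣ ((p : ℤ) - 1) := by
    intro h
    obtain ⟨c, hc⟩ := h
    have : (p:ℤ) * (1 - c) = 1 := by linarith
    have := Int.eq_one_of_mul_eq_one_right (by positivity) this
    omega
  have hp1norm : ‖(((p : ℤ) - 1 : ℤ) : ℤ_[p])‖ = 1 := by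
    have hle : ‖(((p : ℤ) - 1 : ℤ) : ℤ_[p])‖ ≤ 1 := PadicInt.norm_le_one _
    have hnlt : ¬ (‖(((p : ℤ) - 1 : ℤ) : ℤ_[p])‖ < 1) := by
      rw [PadicInt.norm_int_lt_one_iff_dvd]; exact hnd2
    linarith [lt_or_ge ‖(((p : ℤ) - 1 : ℤ) : ℤ_[p])‖ 1]
  -- Fermat little theorem
  have hfermat : (p : ℤ) ∣ ((ξ : ℤ) ^ (p - 1) - 1) := by
    have hne : ((ξ : ZMod p)) ≠ 0 := by
      rw [Ne, ZMod.natCast_eq_zero_iff]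
      intro hh
      exact absurd (Nat.le_of_dvd (by omega) hh) (by omega)
    have hfl := ZMod.pow_card_sub_one_eq_one hne
    have hcast : (((ξ : ℤ) ^ (p - 1) - 1 : ℤ) : ZMod p) = 0 := by
      push_cast
      rw [hfl]
      ring
    exact (ZMod.intCast_zmod_eq_zero_iff_dvd _ _).mp hcast
  set F : Polynomial ℤ_[p] := X ^ (p - 1) - C 1 with hF
  have heval : ∀ z : ℤ_[p], F.eval z = z ^ (p - 1) - 1 := by intro z; simp [hF]
  have hderiv : ∀ z : ℤ_[p], F.derivative.eval z = ((p - 1 : ℕ)) * z ^ (p - 1 - 1) := by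
    intro z; simp [hF, Polynomial.derivative_X_pow]
  set A : ℤ_[p] := ((ξ : ℤ) : ℤ_[p]) with hA
  have hevalnorm : ‖F.eval A‖ < 1 := by
    rw [heval]
    have : A ^ (p - 1) - 1 = (((ξ : ℤ) ^ (p - 1) - 1 : ℤ) : ℤ_[p]) := by
      push_cast [hA]; ring
    rw [this, PadicInt.norm_int_lt_one_iff_dvd]
    exact hfermat
  have hdnorm : ‖F.derivative.eval A‖ = 1 := by
    rw [hderiv]
    rw [norm_mul, norm_pow, hA, hξnorm, one_pow, mul_one]
    have : (((p - 1 : ℕ)) : ℤ_[p]) = (((p : ℤ) - 1 : ℤ) : ℤ_[p]) := by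
      have : ((p : ℤ) - 1 : ℤ) = ((p - 1 : ℕ) : ℤ) := by omega
      rw [this]; push_cast; ring
    rw [this]
    exact hp1norm
  have hensel : ‖F.eval A‖ < ‖F.derivative.eval A‖ ^ 2 := by
    rw [hdnorm]; simpa using hevalnorm
  obtain ⟨z, hz1, hz2, _, _⟩ := hensels_lemma hensel
  have hzpow : z ^ (p - 1) = 1 := by
    have h' := hz1; rw [Polynomial.coe_aeval_eq_eval, heval] at h'; exact eq_of_sub_eq_zero h'
  refine ⟨(z : ℚ_[p]), ?_, ?_⟩
  · calc ((z : ℚ_[p])) ^ (p - 1) = ((z ^ (p - 1) : ℤ_[p]) : ℚ_[p]) := by push_cast; ring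
      _ = 1 := by rw [hzpow]; norm_cast
  · have : (z : ℚ_[p]) - (ξ : ℚ_[p]) = ((z - A : ℤ_[p]) : ℚ_[p]) := by
      push_cast [hA]; ring
    rw [this, ← PadicInt.norm_def]
    rw [Polynomial.coe_aeval_eq_eval, hdnorm] at hz2
    exact hz2


lemma exists_sol_with_residue (hp3 : 3 ≤ p) {k : ℕ} (hk : 1 ≤ k) {a : ℚ_[p]}
    (ha : ‖a - 1‖ < ‖(k : ℚ_[p])‖) {ξ : ℕ} (h1 : 1 ≤ ξ) (h2 : ξ ≤ p - 1)
    (hξk : ξ ^ k % p = 1) : ∃ x : ℚ_[p], x ^ k = a ∧ ‖x - (ξ : ℚ_[p])‖ < 1 := by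
  obtain ⟨z, hz1, hz2⟩ := exists_teichmuller hp3 h1 h2
  obtain ⟨x₀, hx01, hx02⟩ := exists_pow_root hp3 k hk a ha
  have hp1 : 1 ≤ p - 1 := by omega
  have hznorm : ‖z‖ = 1 := by
    have hzp : ‖z‖ ^ (p - 1) = 1 := by rw [← norm_pow, hz1, norm_one]
    rcases lt_trichotomy ‖z‖ 1 with h | h | h
    · have := pow_lt_one₀ (norm_nonneg z) h (by omega : p - 1 ≠ 0)
      rw [hzp] at this; norm_num at this
    · exact h
    · have := one_lt_pow₀ h (by omega : p - 1 ≠ 0)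
      rw [hzp] at this; norm_num at this
  have hξnorm : ‖(ξ : ℚ_[p])‖ ≤ 1 := by
    rw [show ((ξ : ℚ_[p])) = (((ξ : ℤ)) : ℚ_[p]) by push_cast; ring]
    exact Padic.norm_int_le_one _
  have hzk1 : ‖z ^ k - 1‖ < 1 := by
    have t1 : ‖z ^ k - (ξ : ℚ_[p]) ^ k‖ < 1 :=
      lt_of_le_of_lt (norm_pow_sub_pow_le (le_of_eq hznorm) hξnorm k) hz2
    have t2 : ‖(ξ : ℚ_[p]) ^ k - 1‖ < 1 := by
      have hdvd : (p : ℤ) ∣ ((ξ : ℤ) ^ k - 1) := by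
        set N := ξ ^ k with hN
        have hmod : N % p = 1 := hξk
        have hdm := Nat.div_add_mod N p
        refine ⟨(N / p : ℕ), ?_⟩
        have hcast : (ξ : ℤ) ^ k = (N : ℤ) := by rw [hN]; push_cast; ring
        rw [hcast]
        omega
      have hrw : ((ξ : ℚ_[p])) ^ k - 1 = (((ξ : ℤ) ^ k - 1 : ℤ) : ℚ_[p]) := by
        push_cast; ring
      rw [hrw, Padic.norm_intCast_lt_one_iff]
      exact hdvd
    have hsplit : z ^ k - 1 = (z ^ k - (ξ : ℚ_[p]) ^ k) + ((ξ : ℚ_[p]) ^ k - 1) := by ring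
    rw [hsplit]
    exact lt_of_le_of_lt (Padic.nonarchimedean _ _) (max_lt t1 t2)
  have hzk : z ^ k = 1 := by
    have hu1 : (z ^ k) ^ (p - 1) = 1 := by
      rw [← pow_mul, mul_comm, pow_mul, hz1, one_pow]
    have hident := norm_one_add_pow_sub_one' hp3 hp1 (t := z ^ k - 1) hzk1
    rw [show (1 : ℚ_[p]) + (z ^ k - 1) = z ^ k by ring, hu1, sub_self, norm_zero] at hident
    have hne : (((p - 1 : ℕ)) : ℚ_[p]) ≠ 0 := Nat.cast_ne_zero.mpr (by omega)
    have hzero : ‖z ^ k - 1‖ = 0 := by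
      rcases mul_eq_zero.mp hident.symm with h | h
      · exact absurd (norm_eq_zero.mp h) hne
      · exact h
    exact sub_eq_zero.mp (norm_eq_zero.mp hzero)
  refine ⟨z * x₀, ?_, ?_⟩
  · rw [mul_pow, hzk, hx02, one_mul]
  · have hsplit : z * x₀ - (ξ : ℚ_[p]) = z * (x₀ - 1) + (z - (ξ : ℚ_[p])) := by ring
    rw [hsplit]
    refine lt_of_le_of_lt (Padic.nonarchimedean _ _) (max_lt ?_ hz2)
    rw [norm_mul, hznorm, one_mul]
    exact hx01

end PadicAux


lemma count_eq_gcd (p : ℕ) [hp : Fact p.Prime] (hp3 : 3 ≤ p) (k : ℕ) (hk : 1 ≤ k) :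
    ((Finset.Icc 1 (p - 1)).filter (fun ξ => ξ ^ k % p = 1)).card = Nat.gcd k (p - 1) := by
  have hp1 : 1 < p := by omega
  set d := Nat.gcd k (p - 1) with hd
  have hd_k : d ∣ k := Nat.gcd_dvd_left _ _
  have hd_p : d ∣ p - 1 := Nat.gcd_dvd_right _ _
  have hd_pos : 0 < d := Nat.gcd_pos_of_pos_left _ hk
  -- primitive d-th root of unity in ZMod p
  obtain ⟨g, hg⟩ := IsCyclic.exists_generator (α := (ZMod p)ˣ)
  have hcard : Fintype.card (ZMod p)ˣ = p - 1 := by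
    rw [ZMod.card_units_eq_totient, Nat.totient_prime hp.out]
  have horder : orderOf g = p - 1 := by
    rw [orderOf_eq_card_of_forall_mem_zpowers hg, Nat.card_eq_fintype_card, hcard]
  have hprim_u : IsPrimitiveRoot g (p - 1) := horder ▸ IsPrimitiveRoot.orderOf g
  have hprim : IsPrimitiveRoot ((g : ZMod p)) (p - 1) :=
    IsPrimitiveRoot.coe_units_iff.mpr hprim_u
  obtain ⟨e, he⟩ := hd_p
  have hζ : IsPrimitiveRoot ((g : ZMod p) ^ e) d :=
    hprim.pow (by omega) (by rw [he, mul_comm])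
  -- the key equivalence
  have hiff : ∀ x : ZMod p, x ^ k = 1 ↔ x ^ d = 1 := by
    intro x
    constructor
    · intro hx
      have hx0 : x ≠ 0 := by
        intro h0; rw [h0, zero_pow (by omega)] at hx; exact zero_ne_one hx
      have h1 : orderOf x ∣ k := orderOf_dvd_of_pow_eq_one hx
      have h2 : orderOf x ∣ p - 1 :=
        orderOf_dvd_of_pow_eq_one (ZMod.pow_card_sub_one_eq_one hx0)
      exact orderOf_dvd_iff_pow_eq_one.mp (Nat.dvd_gcd h1 h2)
    · intro hx
      obtain ⟨c, hc⟩ := hd_k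
      rw [hc, pow_mul, hx, one_pow]
  have hcount : ((Finset.Icc 1 (p - 1)).filter (fun ξ => ξ ^ k % p = 1)).card
      = (Polynomial.nthRootsFinset d (1 : ZMod p)).card := by
    refine Finset.card_bij (fun ξ _ => ((ξ : ZMod p) : ZMod p)) ?_ ?_ ?_
    · intro ξ hξ
      simp only [Finset.mem_filter, Finset.mem_Icc] at hξ
      obtain ⟨⟨hξ1, hξ2⟩, hξk⟩ := hξ
      rw [Polynomial.mem_nthRootsFinset hd_pos (1 : ZMod p), ← (hiff _)]
      have : ((ξ ^ k : ℕ) : ZMod p) = ((1 : ℕ) : ZMod p) := by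
        rw [← ZMod.natCast_mod, hξk]
      push_cast at this
      exact this
    · intro ξ₁ h₁ ξ₂ h₂ hcast
      simp only [Finset.mem_filter, Finset.mem_Icc] at h₁ h₂
      have v1 : (ξ₁ : ZMod p).val = ξ₁ := ZMod.val_natCast_of_lt (by omega)
      have v2 : (ξ₂ : ZMod p).val = ξ₂ := ZMod.val_natCast_of_lt (by omega)
      rw [← v1, ← v2, hcast]
    · intro x hx
      rw [Polynomial.mem_nthRootsFinset hd_pos (1 : ZMod p)] at hx
      have hx0 : x ≠ 0 := by
        intro h0; rw [h0, zero_pow (by omega)] at hx; exact zero_ne_one hx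
      have hval : (x.val : ZMod p) = x := by simp [ZMod.natCast_val, ZMod.cast_id]
      have hxk : x ^ k = 1 := (hiff x).mpr hx
      refine ⟨x.val, ?_, ?_⟩
      · simp only [Finset.mem_filter, Finset.mem_Icc]
        refine ⟨⟨?_, ?_⟩, ?_⟩
        · have : x.val ≠ 0 := fun h => hx0 (by rwa [ZMod.val_eq_zero] at h)
          omega
        · have := ZMod.val_lt x; omega
        · have : ((x.val ^ k : ℕ) : ZMod p) = 1 := by push_cast [hval]; exact hxk
          calc x.val ^ k % p = ((x.val ^ k : ℕ) : ZMod p).val := (ZMod.val_natCast _ _).symm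
            _ = (1 : ZMod p).val := by rw [this]
            _ = 1 := ZMod.val_one p
      · exact hval
  rw [hcount, hζ.card_nthRootsFinset]


theorem padic_monomial_count (p : ℕ) [Fact p.Prime] (hp : 3 ≤ p)
    (k : ℕ) (hk : 1 ≤ k) (a : ℚ_[p]) (ha : ‖a - 1‖ < ‖(k : ℚ_[p])‖) :
    {x : ℚ_[p] | x ^ k = a}.ncard =
        ((Finset.Icc 1 (p - 1)).filter (fun ξ => ξ ^ k % p = 1)).card ∧
      ((Finset.Icc 1 (p - 1)).filter (fun ξ => ξ ^ k % p = 1)).card =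
        Nat.gcd k (p - 1) := by
  constructor
  · set S := (Finset.Icc 1 (p - 1)).filter (fun ξ => ξ ^ k % p = 1) with hS
    have hknorm_le : ‖(k : ℚ_[p])‖ ≤ 1 := by
      rw [show ((k : ℚ_[p])) = (((k : ℤ)) : ℚ_[p]) by push_cast; ring]
      exact Padic.norm_int_le_one _
    have ha1 : ‖a - 1‖ < 1 := lt_of_lt_of_le ha hknorm_le
    have hanorm : ‖a‖ = 1 := PadicAux.norm_eq_one_of_norm_sub_one_lt ha1
    have key : ∀ ξ : ℕ, ∃ x : ℚ_[p], ξ ∈ S → (x ^ k = a ∧ ‖x - (ξ : ℚ_[p])‖ < 1) := by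
      intro ξ
      by_cases hξ : ξ ∈ S
      · rw [hS, Finset.mem_filter, Finset.mem_Icc] at hξ
        obtain ⟨x, h1, h2⟩ :=
          PadicAux.exists_sol_with_residue hp hk ha hξ.1.1 hξ.1.2 hξ.2
        exact ⟨x, fun _ => ⟨h1, h2⟩⟩
      · exact ⟨0, fun h => absurd h hξ⟩
    choose g hg using key
    have uniq : ∀ x y : ℚ_[p], x ^ k = y ^ k → ‖y‖ = 1 → ‖x - y‖ < 1 → x = y :=
      fun x y h hy hxy => PadicAux.pow_root_unique hp hk hy hxy h
    have hbij : Set.BijOn g ↑S {x : ℚ_[p] | x ^ k = a} := by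
      refine ⟨?_, ?_, ?_⟩
      · intro ξ hξ
        exact (hg ξ (Finset.mem_coe.mp hξ)).1
      · intro ξ₁ hξ₁ ξ₂ hξ₂ heq
        have H1 := hg ξ₁ (Finset.mem_coe.mp hξ₁)
        have H2 := hg ξ₂ (Finset.mem_coe.mp hξ₂)
        have hm₁ := Finset.mem_coe.mp hξ₁
        have hm₂ := Finset.mem_coe.mp hξ₂
        rw [hS, Finset.mem_filter, Finset.mem_Icc] at hm₁ hm₂
        have hlt : ‖(((ξ₁ : ℤ) - (ξ₂ : ℤ) : ℤ) : ℚ_[p])‖ < 1 := by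
          have hrw : (((ξ₁ : ℤ) - (ξ₂ : ℤ) : ℤ) : ℚ_[p])
              = (g ξ₂ - (ξ₂ : ℚ_[p])) - (g ξ₁ - (ξ₁ : ℚ_[p])) := by
            rw [← heq]; push_cast; ring
          rw [hrw, sub_eq_add_neg]
          refine lt_of_le_of_lt (Padic.nonarchimedean _ _) (max_lt H2.2 ?_)
          rw [norm_neg]; exact H1.2
        have hdvd : (p : ℤ) ∣ ((ξ₁ : ℤ) - (ξ₂ : ℤ)) :=
          Padic.norm_intCast_lt_one_iff.mp hlt
        have habs : |(ξ₁ : ℤ) - (ξ₂ : ℤ)| < p := by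
          rw [abs_lt]
          constructor <;> [omega; omega]
        have := Int.eq_zero_of_abs_lt_dvd hdvd habs
        omega
      · intro x hx
        simp only [Set.mem_setOf_eq] at hx
        have hxnorm : ‖x‖ = 1 := by
          have hxp : ‖x‖ ^ k = 1 := by rw [← norm_pow, hx, hanorm]
          rcases lt_trichotomy ‖x‖ 1 with h | h | h
          · have := pow_lt_one₀ (norm_nonneg x) h (by omega : k ≠ 0)
            rw [hxp] at this; norm_num at this
          · exact h
          · have := one_lt_pow₀ h (by omega : k ≠ 0)
            rw [hxp] at this; norm_num at this
        set X : ℤ_[p] := ⟨x, le_of_eq hxnorm⟩ with hX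
        have hXco : (X : ℚ_[p]) = x := rfl
        set c := PadicInt.toZMod X with hc
        have hc0 : c ≠ 0 := by
          intro h0
          have hker : X ∈ RingHom.ker (PadicInt.toZMod (p := p)) := by
            simpa [RingHom.mem_ker, hc] using h0
          rw [PadicInt.ker_toZMod, IsLocalRing.mem_maximalIdeal,
            PadicInt.mem_nonunits] at hker
          rw [PadicInt.norm_def, hXco, hxnorm] at hker
          norm_num at hker
        set ξ := c.val with hξdef
        have hξlt : ξ < p := ZMod.val_lt c
        have hξ1 : 1 ≤ ξ := by
          rcases Nat.eq_zero_or_pos ξ with h0 | h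
          · exact absurd ((ZMod.val_eq_zero c).mp h0) hc0
          · exact h
        have hcastξ : ((ξ : ℕ) : ℤ_[p]) = ZMod.cast c := by
          rw [hξdef, ZMod.natCast_val]
        have hball : ‖x - (ξ : ℚ_[p])‖ < 1 := by
          have hmem := PadicInt.toZMod_spec X
          rw [IsLocalRing.mem_maximalIdeal, PadicInt.mem_nonunits] at hmem
          have hrw : x - (ξ : ℚ_[p]) = ((X - (ZMod.cast c : ℤ_[p]) : ℤ_[p]) : ℚ_[p]) := by
            push_cast [hXco, hcastξ]
            rw [← hcastξ]
            push_cast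
            ring
          rw [hrw, ← PadicInt.norm_def]
          exact hmem
        have hA : ‖a‖ ≤ 1 := le_of_eq hanorm
        have hXk : X ^ k = ⟨a, hA⟩ := by
          apply Subtype.coe_injective
          push_cast [hXco]
          exact hx
        have htoZa : PadicInt.toZMod (⟨a, hA⟩ : ℤ_[p]) = 1 := by
          have hker : (⟨a, hA⟩ - 1 : ℤ_[p]) ∈ RingHom.ker (PadicInt.toZMod (p := p)) := by
            rw [PadicInt.ker_toZMod, IsLocalRing.mem_maximalIdeal, PadicInt.mem_nonunits]
            have : ((⟨a, hA⟩ - 1 : ℤ_[p]) : ℚ_[p]) = a - 1 := rfl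
            rw [PadicInt.norm_def, this]
            exact ha1
          rw [RingHom.mem_ker] at hker
          exact (sub_eq_zero.mp ((map_sub PadicInt.toZMod _ _).symm.trans hker)).trans (map_one _)
        have hck : c ^ k = 1 := by
          rw [hc, ← map_pow, hXk, htoZa]
        have hmod : ξ ^ k % p = 1 := by
          have hval : ((ξ : ℕ) : ZMod p) = c := by
            rw [hξdef, ZMod.natCast_val, ZMod.cast_id]
          calc ξ ^ k % p = ((ξ ^ k : ℕ) : ZMod p).val := (ZMod.val_natCast _ _).symm
            _ = (c ^ k).val := by push_cast [hval]; rfl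
            _ = (1 : ZMod p).val := by rw [hck]
            _ = 1 := ZMod.val_one p
        have hξS : ξ ∈ S := by
          rw [hS, Finset.mem_filter, Finset.mem_Icc]
          exact ⟨⟨hξ1, by omega⟩, hmod⟩
        refine ⟨ξ, Finset.mem_coe.mpr hξS, ?_⟩
        have H := hg ξ hξS
        apply uniq (g ξ) x (by rw [H.1, hx]) hxnorm
        have hrw : g ξ - x = (g ξ - (ξ : ℚ_[p])) + -(x - (ξ : ℚ_[p])) := by ring
        rw [hrw]
        refine lt_of_le_of_lt (Padic.nonarchimedean _ _) (max_lt H.2 ?_)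
        rw [norm_neg]; exact hball
    rw [← hbij.image_eq, Set.ncard_image_of_injOn hbij.injOn, Set.ncard_coe_finset]
  · exact count_eq_gcd p hp k hk
end

section
/- Let p ≥ 3 be prime, k = m·p^s with gcd(m,p)=1, s ≥ 0, and a ∈ ℤ_p^* with first digit a₀. If every ξ ∈ {1,...,p-1} satisfies |ξ^k - a|_p = 1 (i.e. x^k ≡ a mod p has no solution), then for every ε ∈ ℚ_p with |ε|_p < |k|_p^2 and every p^s-Lipschitz function f: ℤ_p → ℤ_p, the function F(x) = x^k - a + ε·f(x) has no root in ℤ_p. -/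
set_option maxHeartbeats 1000000 in
theorem padic_perturbed_no_root (p : ℕ) [Fact p.Prime] (hp : 3 ≤ p)
    (m s k : ℕ) (hm : Nat.Coprime m p) (hkdef : k = m * p ^ s)
    (a : ℚ_[p]) (ha : ‖a‖ = 1)
    (a₀ : ℕ) (ha₀ : 1 ≤ a₀) (ha₀' : a₀ ≤ p - 1)
    (hclose : ‖a - (a₀ : ℚ_[p])‖ < 1)
    (hnosol : ∀ ξ : ℕ, 1 ≤ ξ → ξ ≤ p - 1 → ‖(ξ : ℚ_[p]) ^ k - a‖ = 1)
    (ε : ℚ_[p]) (hε : ‖ε‖ < ‖(k : ℚ_[p])‖ ^ 2)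
    (f : ℚ_[p] → ℚ_[p])
    (hf1 : ∀ x : ℚ_[p], ‖x‖ ≤ 1 → ‖f x‖ ≤ 1)
    (hf2 : ∀ x y : ℚ_[p], ‖x‖ ≤ 1 → ‖y‖ ≤ 1 →
      ‖f x - f y‖ ≤ (p : ℝ) ^ s * ‖x - y‖) :
    ¬ ∃ x : ℚ_[p], ‖x‖ ≤ 1 ∧ x ^ k - a + ε * f x = 0 := by
  rintro ⟨x, hx, heq⟩
  have hp1 : (1 : ℕ) < p := (Fact.out : p.Prime).one_lt
  -- k ≥ 1
  have hm0 : m ≠ 0 := by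
    rintro rfl
    simp [Nat.Coprime, Nat.gcd_comm] at hm
    omega
  have hk1 : 1 ≤ k := by
    have : 0 < m * p ^ s := Nat.mul_pos (Nat.pos_of_ne_zero hm0) (pow_pos (by omega : 0 < p) _)
    omega
  -- ‖ε‖ < 1
  have hknorm : ‖(k : ℚ_[p])‖ ≤ 1 := by
    have := Padic.norm_int_le_one (p := p) (k : ℤ)
    rwa [Int.cast_natCast] at this
  have hε1 : ‖ε‖ < 1 := lt_of_lt_of_le hε (by
    calc ‖(k : ℚ_[p])‖ ^ 2 ≤ 1 ^ 2 := pow_le_pow_left₀ (norm_nonneg _) hknorm 2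
    _ = 1 := one_pow 2)
  -- the root satisfies ‖x^k - a‖ < 1
  have hsmall : ‖x ^ k - a‖ < 1 := by
    have h1 : x ^ k - a = -(ε * f x) := by linear_combination heq
    rw [h1, norm_neg]
    calc ‖ε * f x‖ ≤ ‖ε‖ * 1 :=
          (norm_mul _ _).le.trans (mul_le_mul_of_nonneg_left (hf1 x hx) (norm_nonneg _))
      _ < 1 := by rwa [mul_one]
  -- but ‖x^k - a‖ = 1
  have hbig : ‖x ^ k - a‖ = 1 := by
    rcases lt_or_eq_of_le hx with hxlt | hxeq
    · have hxk : ‖x ^ k‖ < 1 := by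
        rw [norm_pow]
        calc ‖x‖ ^ k ≤ ‖x‖ ^ 1 := pow_le_pow_of_le_one (norm_nonneg _) hx hk1
          _ = ‖x‖ := pow_one _
          _ < 1 := hxlt
      have hne : ‖x ^ k‖ ≠ ‖-a‖ := by rw [norm_neg, ha]; exact ne_of_lt hxk
      calc ‖x ^ k - a‖ = ‖x ^ k + -a‖ := by ring_nf
        _ = max ‖x ^ k‖ ‖-a‖ := Padic.add_eq_max_of_ne hne
        _ = 1 := by rw [norm_neg, ha, max_eq_right (by linarith)]
    · -- x is a unit; reduce mod p
      set z : ℤ_[p] := ⟨x, hx⟩ with hz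
      have hzn : ‖z‖ = 1 := by rw [PadicInt.norm_def]; exact hxeq
      have hzu : IsUnit z := PadicInt.isUnit_iff.2 hzn
      have hz0 : PadicInt.toZMod z ≠ 0 := by
        intro h0
        have : z ∈ IsLocalRing.maximalIdeal ℤ_[p] := by
          rw [← PadicInt.ker_toZMod]; exact h0
        rw [IsLocalRing.mem_maximalIdeal] at this
        exact this hzu
      set ξ : ℕ := (PadicInt.toZMod z).val with hξ
      have hξ1 : 1 ≤ ξ := Nat.pos_of_ne_zero (by
        intro h
        exact hz0 (by rwa [← ZMod.val_eq_zero]))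
      have hξp : ξ ≤ p - 1 := by
        have := ZMod.val_lt (PadicInt.toZMod z)
        omega
      -- ‖z - ξ‖ < 1
      have hsub : ‖z - (ξ : ℤ_[p])‖ < 1 := by
        have hmem := PadicInt.toZMod_spec z
        rw [PadicInt.maximalIdeal_eq_span_p, Ideal.mem_span_singleton] at hmem
        obtain ⟨c, hc⟩ := hmem
        have : z - (ξ : ℤ_[p]) = p * c := by
          rw [← hc, hξ, ZMod.natCast_val]
        rw [this]
        rw [norm_mul]
        calc ‖(p : ℤ_[p])‖ * ‖c‖ ≤ ‖(p : ℤ_[p])‖ * 1 :=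
              mul_le_mul_of_nonneg_left (PadicInt.norm_le_one c) (norm_nonneg _)
          _ < 1 := by
              rw [mul_one, PadicInt.norm_p]
              exact inv_lt_one_of_one_lt₀ (by exact_mod_cast hp1)
      -- ‖z^k - ξ^k‖ < 1
      have hpow : ‖z ^ k - (ξ : ℤ_[p]) ^ k‖ < 1 := by
        obtain ⟨c, hc⟩ := sub_dvd_pow_sub_pow z (ξ : ℤ_[p]) k
        rw [hc, norm_mul]
        calc ‖z - (ξ : ℤ_[p])‖ * ‖c‖ ≤ ‖z - (ξ : ℤ_[p])‖ * 1 :=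
              mul_le_mul_of_nonneg_left (PadicInt.norm_le_one c) (norm_nonneg _)
          _ < 1 := by rwa [mul_one]
      -- transfer to ℚ_p
      have hpowQ : ‖x ^ k - (ξ : ℚ_[p]) ^ k‖ < 1 := by
        have : ((z ^ k - (ξ : ℤ_[p]) ^ k : ℤ_[p]) : ℚ_[p]) = x ^ k - (ξ : ℚ_[p]) ^ k := by
          push_cast [hz]
          rfl
        rw [← this, ← PadicInt.norm_def]
        exact hpow
      have hξa : ‖(ξ : ℚ_[p]) ^ k - a‖ = 1 := hnosol ξ hξ1 hξp
      have hne : ‖x ^ k - (ξ : ℚ_[p]) ^ k‖ ≠ ‖(ξ : ℚ_[p]) ^ k - a‖ := by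
        rw [hξa]; exact ne_of_lt hpowQ
      calc ‖x ^ k - a‖ = ‖(x ^ k - (ξ : ℚ_[p]) ^ k) + ((ξ : ℚ_[p]) ^ k - a)‖ := by ring_nf
        _ = max ‖x ^ k - (ξ : ℚ_[p]) ^ k‖ ‖(ξ : ℚ_[p]) ^ k - a‖ := Padic.add_eq_max_of_ne hne
        _ = 1 := by rw [hξa, max_eq_right (le_of_lt (hξa ▸ hpowQ))]
  linarith
end

section
/- Let p ≥ 3 be prime, k = m·p^s with gcd(m,p)=1, s ≥ 0, a ∈ ℤ_p^* with first digit a₀ satisfying |a - a₀^{p^s}|_p < p^{-s}. Let f: ℤ_p → ℤ_p be p^s-Lipschitz and ε ∈ ℚ_p with |ε|_p < |k|_p^2. Then for every ξ ∈ {1,...,p-1} with |ξ^k - a|_p < 1, the function F(x) = x^k - a + ε·f(x) has exactly one root x ∈ ℤ_p with |x - ξ|_p < 1. -/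
open IsUltrametricDist in
-- pow difference bound
lemma aux_pow_sub {p : ℕ} [Fact p.Prime] (a b : ℚ_[p]) (ha : ‖a‖ ≤ 1) (hb : ‖b‖ ≤ 1) (n : ℕ) :
    ‖a ^ n - b ^ n‖ ≤ ‖a - b‖ := by
  induction n with
  | zero => simp
  | succ n ih =>
    have : a ^ (n+1) - b ^ (n+1) = a * (a ^ n - b ^ n) + (a - b) * b ^ n := by ring
    rw [this]
    refine (norm_add_le_max _ _).trans (max_le ?_ ?_)
    · rw [norm_mul]
      calc ‖a‖ * ‖a ^ n - b ^ n‖ ≤ 1 * ‖a - b‖ := by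
            exact mul_le_mul ha ih (norm_nonneg _) zero_le_one
        _ = ‖a - b‖ := one_mul _
    · rw [norm_mul]
      calc ‖a - b‖ * ‖b ^ n‖ ≤ ‖a - b‖ * 1 := by
            refine mul_le_mul_of_nonneg_left ?_ (norm_nonneg _)
            simpa using norm_pow_le b n |>.trans (by simpa using pow_le_one₀ (norm_nonneg b) hb)
        _ = ‖a - b‖ := mul_one _


lemma aux_choose_norm {p : ℕ} [Fact p.Prime] (hp : 3 ≤ p) (s k : ℕ) (hk1 : 1 ≤ k)
    (hknorm : ‖(k : ℚ_[p])‖ ≤ (p:ℝ)^(-(s:ℤ))) (J : ℕ) (hJ2 : 2 ≤ J) :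
    ‖(k.choose J : ℚ_[p])‖ * ((p:ℝ)⁻¹)^(J-1) ≤ (p:ℝ)^(-(s:ℤ)-1) := by
  have hp1 : (1:ℝ) < p := by exact_mod_cast lt_of_lt_of_le (by norm_num) hp
  have hp0 : (0:ℝ) < p := by linarith
  -- identity k * C(k-1, J-1) = C(k,J) * J
  have hid : k * (k-1).choose (J-1) = k.choose J * J := by
    have h := Nat.add_one_mul_choose_eq (k-1) (J-1)
    have e1 : (k-1).succ = k := by omega
    have e2 : (J-1).succ = J := by omega
    rw [Nat.sub_add_cancel hk1, Nat.sub_add_cancel (by omega : 1 ≤ J)] at h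
    exact h
  have hcast : ((k : ℚ_[p]) * ((k-1).choose (J-1) : ℚ_[p])) = (k.choose J : ℚ_[p]) * (J : ℚ_[p]) := by
    exact_mod_cast congrArg (fun n : ℕ => (n : ℚ_[p])) hid
  have hA : ‖(k.choose J : ℚ_[p])‖ * ‖(J : ℚ_[p])‖ ≤ (p:ℝ)^(-(s:ℤ)) := by
    have h1 : ‖(((k-1).choose (J-1) : ℤ) : ℚ_[p])‖ ≤ 1 := Padic.norm_int_le_one _
    rw [← norm_mul, ← hcast, norm_mul]
    calc ‖(k : ℚ_[p])‖ * ‖(((k-1).choose (J-1) : ℕ) : ℚ_[p])‖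
        ≤ (p:ℝ)^(-(s:ℤ)) * 1 := by
          refine mul_le_mul hknorm ?_ (norm_nonneg _) (by positivity)
          exact_mod_cast h1
      _ = (p:ℝ)^(-(s:ℤ)) := mul_one _
  -- lower bound on ‖J‖
  have hBnot : ¬ (‖((J:ℤ) : ℚ_[p])‖ ≤ (p:ℝ)^(-((J-1:ℕ)):ℤ)) := by
    rw [Padic.norm_int_le_pow_iff_dvd]
    intro hdvd
    have h1 : (p:ℤ)^(J-1) ≤ J := Int.le_of_dvd (by exact_mod_cast Nat.pos_of_ne_zero (by omega)) hdvd
    have h2 : (J:ℤ) < (p:ℤ)^(J-1) := by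
      have hle : J ≤ 2^(J-1) := by
        have : J-1 < 2^(J-1) := Nat.lt_two_pow_self
        omega
      have h23 : (2:ℕ)^(J-1) < 3^(J-1) := Nat.pow_lt_pow_left (by norm_num) (by omega)
      have h3p : (3:ℕ)^(J-1) ≤ p^(J-1) := Nat.pow_le_pow_left hp _
      exact_mod_cast lt_of_lt_of_le (lt_of_le_of_lt hle h23) h3p
    omega
  have hB : (p:ℝ)^(-((J-1:ℕ):ℤ)+1) ≤ ‖((J:ℤ) : ℚ_[p])‖ := by
    by_contra hcon
    push_neg at hcon
    exact hBnot ((Padic.norm_le_pow_iff_norm_lt_pow_add_one _ _).2 hcon)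
  have hB' : (p:ℝ)^(-((J-1:ℕ):ℤ)+1) ≤ ‖((J:ℕ) : ℚ_[p])‖ := by
    simpa using hB
  -- combine
  have hstep : ‖(k.choose J : ℚ_[p])‖ * (p:ℝ)^(-((J-1:ℕ):ℤ)+1) ≤ (p:ℝ)^(-(s:ℤ)) :=
    le_trans (mul_le_mul_of_nonneg_left hB' (norm_nonneg _)) hA
  have hpow : ((p:ℝ)⁻¹)^(J-1) = (p:ℝ)^(-((J-1:ℕ):ℤ)+1) * (p:ℝ)⁻¹ := by
    rw [inv_pow, ← zpow_natCast (p:ℝ) (J-1), ← zpow_neg, ← zpow_neg_one (p:ℝ),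
      ← zpow_add₀ (ne_of_gt hp0)]
    norm_num
  have hgoal : (p:ℝ)^(-(s:ℤ)-1) = (p:ℝ)^(-(s:ℤ)) * (p:ℝ)⁻¹ := by
    rw [← zpow_sub_one₀ (ne_of_gt hp0)]
  rw [hpow, hgoal, ← mul_assoc]
  exact mul_le_mul_of_nonneg_right hstep (by positivity)


lemma aux_binom {p : ℕ} [Fact p.Prime] (hp : 3 ≤ p) (s k : ℕ) (hk1 : 1 ≤ k)
    (hknorm : ‖(k : ℚ_[p])‖ ≤ (p:ℝ)^(-(s:ℤ))) (y h : ℚ_[p]) (hy : ‖y‖ ≤ 1)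
    (hh : ‖h‖ ≤ (p:ℝ)⁻¹) :
    ‖(y + h)^k - y^k - (k : ℚ_[p]) * y^(k-1) * h‖ ≤ (p:ℝ)^(-(s:ℤ)-1) * ‖h‖ := by
  have hp1 : (1:ℝ) < p := by exact_mod_cast lt_of_lt_of_le (by norm_num) hp
  have hp0 : (0:ℝ) < p := by linarith
  have expand : (y + h)^k - y^k - (k : ℚ_[p]) * y^(k-1) * h
      = ∑ j ∈ Finset.range (k-1), h^(j+2) * y^(k-(j+2)) * (k.choose (j+2)) := by
    obtain ⟨k', rfl⟩ : ∃ k', k = k' + 1 := ⟨k-1, by omega⟩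
    rw [add_comm y h, add_pow, Finset.sum_range_succ']
    cases k' with
    | zero => simp
    | succ k'' =>
      rw [Finset.sum_range_succ']
      simp [Nat.choose_one_right]
      ring
  rw [expand]
  refine IsUltrametricDist.norm_sum_le_of_forall_le_of_nonneg (by positivity) ?_
  intro j _
  rw [norm_mul, norm_mul, norm_pow, norm_pow]
  have h1 : ‖y‖^(k-(j+2)) ≤ 1 := pow_le_one₀ (norm_nonneg _) hy
  have h2 : ‖h‖^(j+2) = ‖h‖^(j+1) * ‖h‖ := by ring
  have h3 : ‖h‖^(j+1) ≤ ((p:ℝ)⁻¹)^(j+1) := pow_le_pow_left₀ (norm_nonneg _) hh _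
  calc ‖h‖^(j+2) * ‖y‖^(k-(j+2)) * ‖(k.choose (j+2) : ℚ_[p])‖
      ≤ ‖h‖^(j+2) * 1 * ‖(k.choose (j+2) : ℚ_[p])‖ := by
        refine mul_le_mul_of_nonneg_right (mul_le_mul_of_nonneg_left h1 (by positivity))
          (norm_nonneg _)
    _ = (‖(k.choose (j+2) : ℚ_[p])‖ * ‖h‖^(j+1)) * ‖h‖ := by rw [h2]; ring
    _ ≤ (‖(k.choose (j+2) : ℚ_[p])‖ * ((p:ℝ)⁻¹)^(j+1)) * ‖h‖ := by
        refine mul_le_mul_of_nonneg_right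
          (mul_le_mul_of_nonneg_left h3 (norm_nonneg _)) (norm_nonneg _)
    _ ≤ (p:ℝ)^(-(s:ℤ)-1) * ‖h‖ := by
        refine mul_le_mul_of_nonneg_right ?_ (norm_nonneg _)
        have := aux_choose_norm hp s k hk1 hknorm (j+2) (by omega)
        simpa using this


open IsUltrametricDist

theorem padic_perturbed_unique_root_in_ball (p : ℕ) [Fact p.Prime] (hp : 3 ≤ p)
    (m s k : ℕ) (hm : Nat.Coprime m p) (hkdef : k = m * p ^ s)
    (a : ℚ_[p]) (ha : ‖a‖ = 1)
    (a₀ : ℕ) (ha₀ : 1 ≤ a₀) (ha₀' : a₀ ≤ p - 1)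
    (hclose : ‖a - (a₀ : ℚ_[p])‖ < 1)
    (hcond : ‖a - (a₀ : ℚ_[p]) ^ (p ^ s)‖ < (p : ℝ) ^ (-(s : ℤ)))
    (f : ℚ_[p] → ℚ_[p])
    (hf1 : ∀ x : ℚ_[p], ‖x‖ ≤ 1 → ‖f x‖ ≤ 1)
    (hf2 : ∀ x y : ℚ_[p], ‖x‖ ≤ 1 → ‖y‖ ≤ 1 →
      ‖f x - f y‖ ≤ (p : ℝ) ^ s * ‖x - y‖)
    (ε : ℚ_[p]) (hε : ‖ε‖ < ‖(k : ℚ_[p])‖ ^ 2) :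
    ∀ ξ : ℕ, 1 ≤ ξ → ξ ≤ p - 1 → ‖(ξ : ℚ_[p]) ^ k - a‖ < 1 →
      ∃! x : ℚ_[p], ‖x‖ ≤ 1 ∧ ‖x - (ξ : ℚ_[p])‖ < 1 ∧
        x ^ k - a + ε * f x = 0 := by
  intro ξ hξ1 hξ2 hξa
  have hp1 : (1:ℝ) < p := by exact_mod_cast lt_of_lt_of_le (by norm_num) hp
  have hp0 : (0:ℝ) < p := by linarith
  have hpne : (p:ℝ) ≠ 0 := ne_of_gt hp0
  have hpinv1 : (p:ℝ)⁻¹ < 1 := by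
    rw [inv_lt_one_iff₀]; right; exact hp1
  have hpinv0 : (0:ℝ) < (p:ℝ)⁻¹ := by positivity
  have hm0 : m ≠ 0 := by
    rintro rfl
    have : p = 1 := by simpa [Nat.Coprime] using hm
    omega
  have hk1 : 1 ≤ k := by
    rw [hkdef]
    exact Nat.one_le_iff_ne_zero.2 (Nat.mul_ne_zero hm0 (pow_ne_zero _ (by omega)))
  -- norm of k
  have hmnorm : ‖(m : ℚ_[p])‖ = 1 := by
    refine le_antisymm (by exact_mod_cast Padic.norm_int_le_one (m:ℤ)) ?_
    by_contra hlt
    push_neg at hlt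
    have : (p:ℤ) ∣ (m:ℤ) := Padic.norm_intCast_lt_one_iff.1 (by exact_mod_cast hlt)
    have hpm : p ∣ m := by exact_mod_cast this
    have := Nat.Coprime.eq_one_of_dvd hm.symm hpm
    omega
  have hknorm : ‖(k : ℚ_[p])‖ = (p:ℝ)^(-(s:ℤ)) := by
    rw [hkdef]
    push_cast
    rw [norm_mul, hmnorm, one_mul]
    exact_mod_cast Padic.norm_p_pow s
  -- norm of ξ
  have hξnorm : ‖(ξ : ℚ_[p])‖ = 1 := by
    refine le_antisymm (by exact_mod_cast Padic.norm_int_le_one (ξ:ℤ)) ?_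
    by_contra hlt
    push_neg at hlt
    have : (p:ℤ) ∣ (ξ:ℤ) := Padic.norm_intCast_lt_one_iff.1 (by exact_mod_cast hlt)
    have hpx : p ∣ ξ := by exact_mod_cast this
    have := Nat.le_of_dvd (by omega) hpx
    omega
  -- epsilon bound
  have hεle : ‖ε‖ ≤ (p:ℝ)^(-(s:ℤ)-(s:ℤ)-1) := by
    rw [Padic.norm_le_pow_iff_norm_lt_pow_add_one,
      show (-(s:ℤ)-(s:ℤ)-1+1) = (-(s:ℤ)+-(s:ℤ)) from by ring, zpow_add₀ hpne, ← hknorm, ← sq]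
    exact hε
  -- key divisibility: ‖ξ^k - a‖ ≤ p^(-s-1)
  have haξ : ‖(ξ:ℚ_[p])^k - a‖ ≤ (p:ℝ)^(-(s:ℤ)-1) := by
    have hple : (p:ℝ)^(-(s:ℤ)) ≤ 1 := zpow_le_one_of_nonpos₀ hp1.le (by omega)
    have h1 : ‖(ξ:ℚ_[p])^k - (a₀:ℚ_[p])^(p^s)‖ < 1 := by
      have e : (ξ:ℚ_[p])^k - (a₀:ℚ_[p])^(p^s)
          = ((ξ:ℚ_[p])^k - a) + (a - (a₀:ℚ_[p])^(p^s)) := by ring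
      rw [e]
      exact lt_of_le_of_lt (norm_add_le_max _ _) (max_lt hξa (lt_of_lt_of_le hcond hple))
    have h2 : (p:ℤ) ∣ (ξ:ℤ)^k - (a₀:ℤ)^(p^s) := by
      refine Padic.norm_intCast_lt_one_iff.1 ?_
      push_cast
      exact h1
    have h3 : (p:ℤ) ∣ (ξ:ℤ)^m - (a₀:ℤ) := by
      refine (ZMod.intCast_zmod_eq_zero_iff_dvd _ p).1 ?_
      have h2' : (((ξ:ℤ)^k - (a₀:ℤ)^(p^s) : ℤ) : ZMod p) = 0 :=
        (ZMod.intCast_zmod_eq_zero_iff_dvd _ p).2 h2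
      push_cast at h2' ⊢
      have e1 : ((ξ:ZMod p))^k = ((ξ:ZMod p))^m := by
        rw [hkdef, pow_mul, ZMod.pow_card_pow]
      have e2 : ((a₀:ZMod p))^(p^s) = (a₀:ZMod p) := ZMod.pow_card_pow _
      rw [e1, e2] at h2'
      exact h2'
    have h4 : ((p:ℤ))^(s+1) ∣ (ξ:ℤ)^k - (a₀:ℤ)^(p^s) := by
      have := dvd_sub_pow_of_dvd_sub (show ((p:ℕ):ℤ) ∣ (ξ:ℤ)^m - (a₀:ℤ) from h3) s
      rw [← pow_mul, ← hkdef] at this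
      exact_mod_cast this
    have h5 : ‖(ξ:ℚ_[p])^k - (a₀:ℚ_[p])^(p^s)‖ ≤ (p:ℝ)^(-((s+1:ℕ)):ℤ) := by
      have := (Padic.norm_int_le_pow_iff_dvd ((ξ:ℤ)^k - (a₀:ℤ)^(p^s)) (s+1)).2 h4
      push_cast at this
      exact_mod_cast this
    have h5' : ‖(ξ:ℚ_[p])^k - (a₀:ℚ_[p])^(p^s)‖ ≤ (p:ℝ)^(-(s:ℤ)-1) := by
      convert h5 using 2
      push_cast
      ring
    have h6 : ‖a - (a₀:ℚ_[p])^(p^s)‖ ≤ (p:ℝ)^(-(s:ℤ)-1) := by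
      rw [Padic.norm_le_pow_iff_norm_lt_pow_add_one,
        show (-(s:ℤ)-1+1) = (-(s:ℤ)) from by ring]
      exact hcond
    have e : (ξ:ℚ_[p])^k - a
        = ((ξ:ℚ_[p])^k - (a₀:ℚ_[p])^(p^s)) - (a - (a₀:ℚ_[p])^(p^s)) := by ring
    rw [e, sub_eq_add_neg]
    refine le_trans (norm_add_le_max _ _) (max_le h5' ?_)
    rw [norm_neg]; exact h6
  -- everything in the ball has norm ≤ 1
  have hnorm1 : ∀ z : ℚ_[p], ‖z - ξ‖ ≤ (p:ℝ)⁻¹ → ‖z‖ ≤ 1 := by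
    intro z hz
    have : z = (z - ξ) + ξ := by ring
    rw [this]
    refine le_trans (norm_add_le_max _ _) (max_le (le_trans hz hpinv1.le) (le_of_eq hξnorm))
  have hdiff_small : ∀ x y : ℚ_[p], ‖x - ξ‖ ≤ (p:ℝ)⁻¹ → ‖y - ξ‖ ≤ (p:ℝ)⁻¹ →
      ‖x - y‖ ≤ (p:ℝ)⁻¹ := by
    intro x y hx hy
    have e : x - y = (x - ξ) + -(y - ξ) := by ring
    rw [e]
    refine le_trans (norm_add_le_max _ _) (max_le hx ?_)
    rw [norm_neg]; exact hy
  -- contraction estimate for the power part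
  have hcontr : ∀ x y : ℚ_[p], ‖x - ξ‖ ≤ (p:ℝ)⁻¹ → ‖y - ξ‖ ≤ (p:ℝ)⁻¹ →
      ‖x^k - y^k - (k:ℚ_[p]) * (ξ:ℚ_[p])^(k-1) * (x - y)‖ ≤ (p:ℝ)^(-(s:ℤ)-1) * ‖x - y‖ := by
    intro x y hx hy
    have hy1 : ‖y‖ ≤ 1 := hnorm1 y hy
    have hxy : ‖x - y‖ ≤ (p:ℝ)⁻¹ := hdiff_small x y hx hy
    have h1 := aux_binom hp s k hk1 hknorm.le y (x - y) hy1 hxy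
    rw [add_sub_cancel] at h1
    have h2 : ‖(k:ℚ_[p]) * (y^(k-1) - (ξ:ℚ_[p])^(k-1)) * (x - y)‖
        ≤ (p:ℝ)^(-(s:ℤ)-1) * ‖x - y‖ := by
      rw [norm_mul, norm_mul, hknorm]
      have hy' : ‖y^(k-1) - (ξ:ℚ_[p])^(k-1)‖ ≤ (p:ℝ)⁻¹ := by
        refine le_trans (aux_pow_sub y (ξ:ℚ_[p]) hy1 (le_of_eq hξnorm) (k-1)) hy
      have : (p:ℝ)^(-(s:ℤ)) * ‖y^(k-1) - (ξ:ℚ_[p])^(k-1)‖ ≤ (p:ℝ)^(-(s:ℤ)-1) := by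
        calc (p:ℝ)^(-(s:ℤ)) * ‖y^(k-1) - (ξ:ℚ_[p])^(k-1)‖
            ≤ (p:ℝ)^(-(s:ℤ)) * (p:ℝ)⁻¹ := by
              refine mul_le_mul_of_nonneg_left hy' (by positivity)
          _ = (p:ℝ)^(-(s:ℤ)-1) := (zpow_sub_one₀ hpne _).symm
      exact mul_le_mul_of_nonneg_right this (norm_nonneg _)
    have e : x^k - y^k - (k:ℚ_[p]) * (ξ:ℚ_[p])^(k-1) * (x - y)
        = (x^k - y^k - (k:ℚ_[p]) * y^(k-1) * (x - y))
          + (k:ℚ_[p]) * (y^(k-1) - (ξ:ℚ_[p])^(k-1)) * (x - y) := by ring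
    rw [e]
    exact le_trans (norm_add_le_max _ _) (max_le h1 h2)
  -- value bound
  have hFnorm : ∀ x : ℚ_[p], ‖x - ξ‖ ≤ (p:ℝ)⁻¹ →
      ‖x^k - a + ε * f x‖ ≤ (p:ℝ)^(-(s:ℤ)-1) := by
    intro x hx
    have hx1 : ‖x‖ ≤ 1 := hnorm1 x hx
    have hA : ‖x^k - (ξ:ℚ_[p])^k‖ ≤ (p:ℝ)^(-(s:ℤ)-1) := by
      have h1 := hcontr x (ξ:ℚ_[p]) hx (by simp)
      have hb1 : ‖x^k - (ξ:ℚ_[p])^k - (k:ℚ_[p]) * (ξ:ℚ_[p])^(k-1) * (x - ξ)‖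
          ≤ (p:ℝ)^(-(s:ℤ)-1) := by
        refine le_trans h1 ?_
        calc (p:ℝ)^(-(s:ℤ)-1) * ‖x - (ξ:ℚ_[p])‖ ≤ (p:ℝ)^(-(s:ℤ)-1) * 1 :=
              mul_le_mul_of_nonneg_left (le_trans hx hpinv1.le) (by positivity)
          _ = (p:ℝ)^(-(s:ℤ)-1) := mul_one _
      have hb2 : ‖(k:ℚ_[p]) * (ξ:ℚ_[p])^(k-1) * (x - ξ)‖ ≤ (p:ℝ)^(-(s:ℤ)-1) := by
        rw [norm_mul, norm_mul, hknorm, norm_pow, hξnorm, one_pow, mul_one]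
        calc (p:ℝ)^(-(s:ℤ)) * ‖x - (ξ:ℚ_[p])‖ ≤ (p:ℝ)^(-(s:ℤ)) * (p:ℝ)⁻¹ :=
              mul_le_mul_of_nonneg_left hx (by positivity)
          _ = (p:ℝ)^(-(s:ℤ)-1) := (zpow_sub_one₀ hpne _).symm
      have e : x^k - (ξ:ℚ_[p])^k
          = (x^k - (ξ:ℚ_[p])^k - (k:ℚ_[p]) * (ξ:ℚ_[p])^(k-1) * (x - ξ))
            + (k:ℚ_[p]) * (ξ:ℚ_[p])^(k-1) * (x - ξ) := by ring
      rw [e]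
      exact le_trans (norm_add_le_max _ _) (max_le hb1 hb2)
    have hεf : ‖ε * f x‖ ≤ (p:ℝ)^(-(s:ℤ)-1) := by
      rw [norm_mul]
      calc ‖ε‖ * ‖f x‖ ≤ (p:ℝ)^(-(s:ℤ)-(s:ℤ)-1) * 1 :=
            mul_le_mul hεle (hf1 x hx1) (norm_nonneg _) (by positivity)
        _ = (p:ℝ)^(-(s:ℤ)-(s:ℤ)-1) := mul_one _
        _ ≤ (p:ℝ)^(-(s:ℤ)-1) := zpow_le_zpow_right₀ hp1.le (by omega)
    have e2 : x^k - a + ε * f x = (x^k - (ξ:ℚ_[p])^k) + (((ξ:ℚ_[p])^k - a) + ε * f x) := by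
      ring
    rw [e2]
    refine le_trans (norm_add_le_max _ _) (max_le hA ?_)
    exact le_trans (norm_add_le_max _ _) (max_le haξ hεf)
  -- the constant c and the Newton-type map T
  set c : ℚ_[p] := ((k:ℚ_[p]) * (ξ:ℚ_[p])^(k-1))⁻¹ with hcdef
  have hden_norm : ‖(k:ℚ_[p]) * (ξ:ℚ_[p])^(k-1)‖ = (p:ℝ)^(-(s:ℤ)) := by
    rw [norm_mul, hknorm, norm_pow, hξnorm, one_pow, mul_one]
  have hden0 : (k:ℚ_[p]) * (ξ:ℚ_[p])^(k-1) ≠ 0 := by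
    intro h0
    rw [h0, norm_zero] at hden_norm
    exact absurd hden_norm.symm (ne_of_gt (by positivity))
  have hc0 : c ≠ 0 := inv_ne_zero hden0
  have hcnorm : ‖c‖ = (p:ℝ)^(s:ℤ) := by
    rw [hcdef, norm_inv, hden_norm, ← zpow_neg, neg_neg]
  have hcmul : c * ((k:ℚ_[p]) * (ξ:ℚ_[p])^(k-1)) = 1 := inv_mul_cancel₀ hden0
  clear hcdef
  clear_value c
  set T : ℚ_[p] → ℚ_[p] := fun x => x - c * (x^k - a + ε * f x) with hTdef
  -- arithmetic helpers
  have hz1 : (p:ℝ)^(s:ℤ) * (p:ℝ)^(-(s:ℤ)-1) = (p:ℝ)⁻¹ := by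
    rw [← zpow_add₀ hpne, show ((s:ℤ) + (-(s:ℤ)-1)) = -1 from by ring, zpow_neg_one]
  have hz2 : (p:ℝ)^(s:ℤ) * ((p:ℝ)^(-(s:ℤ)-(s:ℤ)-1) * (p:ℝ)^(s:ℤ)) = (p:ℝ)⁻¹ := by
    rw [← zpow_add₀ hpne, ← zpow_add₀ hpne,
      show ((s:ℤ) + ((-(s:ℤ)-(s:ℤ)-1) + (s:ℤ))) = -1 from by ring, zpow_neg_one]
  -- T maps the ball into itself
  have hmaps : ∀ x : ℚ_[p], ‖x - ξ‖ ≤ (p:ℝ)⁻¹ → ‖T x - ξ‖ ≤ (p:ℝ)⁻¹ := by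
    intro x hx
    have e : T x - ξ = (x - ξ) + -(c * (x^k - a + ε * f x)) := by rw [hTdef]; ring
    rw [e]
    refine le_trans (norm_add_le_max _ _) (max_le hx ?_)
    rw [norm_neg, norm_mul, hcnorm]
    calc (p:ℝ)^(s:ℤ) * ‖x^k - a + ε * f x‖ ≤ (p:ℝ)^(s:ℤ) * (p:ℝ)^(-(s:ℤ)-1) :=
          mul_le_mul_of_nonneg_left (hFnorm x hx) (by positivity)
      _ = (p:ℝ)⁻¹ := hz1
  -- T is contracting on the ball
  have hTlip : ∀ x y : ℚ_[p], ‖x - ξ‖ ≤ (p:ℝ)⁻¹ → ‖y - ξ‖ ≤ (p:ℝ)⁻¹ →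
      ‖T x - T y‖ ≤ (p:ℝ)⁻¹ * ‖x - y‖ := by
    intro x y hx hy
    have e : T x - T y
        = -(c * (x^k - y^k - (k:ℚ_[p]) * (ξ:ℚ_[p])^(k-1) * (x - y)))
          + -(c * ε * (f x - f y)) := by
      simp only [hTdef]
      linear_combination (y - x) * hcmul
    rw [e]
    have hb1 : ‖-(c * (x^k - y^k - (k:ℚ_[p]) * (ξ:ℚ_[p])^(k-1) * (x - y)))‖
        ≤ (p:ℝ)⁻¹ * ‖x - y‖ := by
      rw [norm_neg, norm_mul, hcnorm]
      calc (p:ℝ)^(s:ℤ) * ‖x^k - y^k - (k:ℚ_[p]) * (ξ:ℚ_[p])^(k-1) * (x - y)‖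
          ≤ (p:ℝ)^(s:ℤ) * ((p:ℝ)^(-(s:ℤ)-1) * ‖x - y‖) :=
            mul_le_mul_of_nonneg_left (hcontr x y hx hy) (by positivity)
        _ = (p:ℝ)⁻¹ * ‖x - y‖ := by rw [← mul_assoc, hz1]
    have hb2 : ‖-(c * ε * (f x - f y))‖ ≤ (p:ℝ)⁻¹ * ‖x - y‖ := by
      rw [norm_neg, norm_mul, norm_mul, hcnorm]
      have hf' : ‖f x - f y‖ ≤ (p:ℝ)^(s:ℤ) * ‖x - y‖ := by
        have := hf2 x y (hnorm1 x hx) (hnorm1 y hy)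
        rwa [show ((p:ℝ)^(s:ℕ) : ℝ) = (p:ℝ)^(s:ℤ) from (zpow_natCast _ _).symm] at this
      calc (p:ℝ)^(s:ℤ) * ‖ε‖ * ‖f x - f y‖
          ≤ (p:ℝ)^(s:ℤ) * (p:ℝ)^(-(s:ℤ)-(s:ℤ)-1) * ((p:ℝ)^(s:ℤ) * ‖x - y‖) := by
            refine mul_le_mul ?_ hf' (norm_nonneg _) (by positivity)
            exact mul_le_mul_of_nonneg_left hεle (by positivity)
        _ = (p:ℝ)⁻¹ * ‖x - y‖ := by rw [← hz2]; ring
    exact le_trans (norm_add_le_max _ _) (max_le hb1 hb2)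
  -- set up the Banach fixed point theorem
  set S : Set ℚ_[p] := Metric.closedBall (ξ:ℚ_[p]) ((p:ℝ)⁻¹) with hSdef
  have hmemS : ∀ z : ℚ_[p], z ∈ S ↔ ‖z - ξ‖ ≤ (p:ℝ)⁻¹ := by
    intro z
    rw [hSdef, Metric.mem_closedBall, dist_eq_norm]
  have hScomplete : IsComplete S := Metric.isClosed_closedBall.isComplete
  have hSmaps : Set.MapsTo T S S := by
    intro z hz
    rw [hmemS] at hz ⊢
    exact hmaps z hz
  have hξS : (ξ:ℚ_[p]) ∈ S := by rw [hmemS]; simp [hpinv0.le]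
  set K : NNReal := ⟨(p:ℝ)⁻¹, hpinv0.le⟩ with hKdef
  have hKlt : K < 1 := by
    rw [← NNReal.coe_lt_coe]
    exact hpinv1
  have hcontracting : ContractingWith K (hSmaps.restrict T S S) := by
    constructor
    · exact hKlt
    · refine LipschitzWith.of_dist_le_mul ?_
      rintro ⟨x, hxS⟩ ⟨y, hyS⟩
      simp only [Subtype.dist_eq, Set.MapsTo.val_restrict_apply, dist_eq_norm]
      exact hTlip x y ((hmemS x).1 hxS) ((hmemS y).1 hyS)
  obtain ⟨x, hxS, hxfix, -, -⟩ :=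
    ContractingWith.exists_fixedPoint' hScomplete hSmaps hcontracting hξS (edist_ne_top _ _)
  have hxball : ‖x - ξ‖ ≤ (p:ℝ)⁻¹ := (hmemS x).1 hxS
  have hxroot : x^k - a + ε * f x = 0 := by
    have : x - c * (x^k - a + ε * f x) = x := hxfix
    have h0 : c * (x^k - a + ε * f x) = 0 := sub_eq_self.1 this
    exact (mul_eq_zero.1 h0).resolve_left hc0
  -- uniqueness helper
  have huniq : ∀ y : ℚ_[p], ‖y - ξ‖ ≤ (p:ℝ)⁻¹ → y^k - a + ε * f y = 0 → y = x := by
    intro y hyball hyroot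
    have hTx : T x = x := hxfix
    have hTy : T y = y := by
      rw [hTdef]
      simp only [hyroot, mul_zero, sub_zero]
    have hle := hTlip y x hyball hxball
    rw [hTy, hTx] at hle
    by_contra hne
    have hpos : 0 < ‖y - x‖ := by
      rw [norm_pos_iff]
      exact sub_ne_zero_of_ne hne
    nlinarith
  refine ⟨x, ⟨hnorm1 x hxball, lt_of_le_of_lt hxball hpinv1, hxroot⟩, ?_⟩
  rintro y ⟨hy1, hy2, hy3⟩
  refine huniq y ?_ hy3
  rw [show ((p:ℝ)⁻¹) = (p:ℝ)^(-1:ℤ) from (zpow_neg_one _).symm,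
    Padic.norm_le_pow_iff_norm_lt_pow_add_one]
  simpa using hy2
end

section
/- Let p ≥ 3 be prime, k = m·p^s with gcd(m,p)=1, s ≥ 0, a ∈ ℤ_p^* with first digit a₀, f: ℤ_p → ℤ_p p^s-Lipschitz, and ε ∈ ℚ_p with |ε|_p < |k|_p^2. If F(x) = x^k - a + ε·f(x) has a root x* ∈ ℤ_p, then |a - a₀^{p^s}|_p < p^{-s}. -/
theorem padic_perturbed_root_necessary (p : ℕ) [Fact p.Prime] (hp : 3 ≤ p)
    (m s k : ℕ) (hm : Nat.Coprime m p) (hkdef : k = m * p ^ s)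
    (a : ℚ_[p]) (ha : ‖a‖ = 1)
    (a₀ : ℕ) (ha₀ : 1 ≤ a₀) (ha₀' : a₀ ≤ p - 1)
    (hclose : ‖a - (a₀ : ℚ_[p])‖ < 1)
    (f : ℚ_[p] → ℚ_[p])
    (hf1 : ∀ x : ℚ_[p], ‖x‖ ≤ 1 → ‖f x‖ ≤ 1)
    (hf2 : ∀ x y : ℚ_[p], ‖x‖ ≤ 1 → ‖y‖ ≤ 1 →
      ‖f x - f y‖ ≤ (p : ℝ) ^ s * ‖x - y‖)
    (ε : ℚ_[p]) (hε : ‖ε‖ < ‖(k : ℚ_[p])‖ ^ 2)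
    (hroot : ∃ x : ℚ_[p], ‖x‖ ≤ 1 ∧ x ^ k - a + ε * f x = 0) :
    ‖a - (a₀ : ℚ_[p]) ^ (p ^ s)‖ < (p : ℝ) ^ (-(s : ℤ)) := by
  obtain ⟨x, hx1, hx2⟩ := hroot
  have hppos : (0:ℝ) < p := by positivity
  have hp1 : (1:ℝ) < p := by exact_mod_cast lt_of_lt_of_le (by norm_num) hp
  -- ‖k‖ = p^{-s}
  have hmne : ¬ (p:ℤ) ∣ (m:ℤ) := by
    rw [Int.natCast_dvd_natCast]
    intro h
    have := Nat.Coprime.eq_one_of_dvd hm.symm h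
    omega
  have hmnorm : ‖((m:ℤ) : ℚ_[p])‖ = 1 := by
    rcases lt_or_eq_of_le (Padic.norm_int_le_one (p := p) (m:ℤ)) with h | h
    · exact absurd (Padic.norm_intCast_lt_one_iff.mp h) hmne
    · exact h
  have hknorm : ‖(k : ℚ_[p])‖ = (p : ℝ) ^ (-(s:ℤ)) := by
    have h1 : ((k:ℚ_[p])) = ((m:ℤ):ℚ_[p]) * (p:ℚ_[p]) ^ s := by
      push_cast [hkdef]; ring
    rw [h1, norm_mul, hmnorm, one_mul, norm_pow, Padic.norm_p, ← zpow_natCast,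
      inv_zpow, ← zpow_neg]
  -- bound on ε * f x
  have hεf : ‖ε * f x‖ < (p : ℝ) ^ (-(s:ℤ)) := by
    have h1 : ‖ε * f x‖ ≤ ‖ε‖ := by
      rw [norm_mul]
      calc ‖ε‖ * ‖f x‖ ≤ ‖ε‖ * 1 :=
            mul_le_mul_of_nonneg_left (hf1 x hx1) (norm_nonneg _)
        _ = ‖ε‖ := mul_one _
    have h2 : ‖(k:ℚ_[p])‖ ^ 2 ≤ (p:ℝ) ^ (-(s:ℤ)) := by
      rw [hknorm, ← zpow_natCast, ← zpow_mul]
      apply zpow_le_zpow_right₀ hp1.le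
      omega
    exact lt_of_le_of_lt h1 (lt_of_lt_of_le hε h2)
  -- move into ℤ_[p]
  have hxeq : x ^ k = a - ε * f x := by linear_combination hx2
  have hεf1 : ‖ε * f x‖ ≤ 1 := hεf.le.trans (zpow_le_one_of_nonpos₀ hp1.le (by omega))
  set X : ℤ_[p] := ⟨x, hx1⟩ with hX
  set A : ℤ_[p] := ⟨a, ha.le⟩ with hA
  set E : ℤ_[p] := ⟨ε * f x, hεf1⟩ with hE
  have hXk : X ^ k = A - E := by
    apply Subtype.ext
    push_cast [hX, hA, hE]
    exact hxeq
  have hEnorm : ‖E‖ < 1 := by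
    have : ‖E‖ = ‖ε * f x‖ := rfl
    rw [this]
    exact hεf.trans_le (zpow_le_one_of_nonpos₀ hp1.le (by omega))
  have hEdvd : (p : ℤ_[p]) ∣ E := (PadicInt.norm_lt_one_iff_dvd E).mp hEnorm
  have hAdvd : (p : ℤ_[p]) ∣ A - (a₀ : ℤ_[p]) := by
    apply (PadicInt.norm_lt_one_iff_dvd _).mp
    have : ‖A - (a₀:ℤ_[p])‖ = ‖a - (a₀:ℚ_[p])‖ := by
      rw [PadicInt.norm_def]; push_cast [hA]; rfl
    rw [this]; exact hclose
  -- in ZMod p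
  have hZ : PadicInt.toZMod (X ^ m - (a₀ : ℤ_[p])) = 0 := by
    have hker := PadicInt.ker_toZMod (p := p)
    have mem_iff : ∀ y : ℤ_[p], (p:ℤ_[p]) ∣ y → PadicInt.toZMod y = 0 := by
      intro y hy
      have : y ∈ RingHom.ker (PadicInt.toZMod (p := p)) := by
        rw [hker, PadicInt.maximalIdeal_eq_span_p, Ideal.mem_span_singleton]
        exact hy
      exact this
    have h1 : PadicInt.toZMod (X ^ k) = PadicInt.toZMod (a₀ : ℤ_[p]) := by
      have e1 : PadicInt.toZMod (X ^ k) = PadicInt.toZMod A := by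
        rw [hXk]
        have := mem_iff E hEdvd
        simp [map_sub, this]
      have e2 : PadicInt.toZMod A = PadicInt.toZMod (a₀ : ℤ_[p]) := by
        have := mem_iff _ hAdvd
        rw [map_sub] at this
        linear_combination this
      rw [e1, e2]
    have h2 : PadicInt.toZMod (X ^ k) = PadicInt.toZMod (X ^ m) := by
      rw [map_pow, map_pow, hkdef, mul_comm, pow_mul, ZMod.pow_card_pow]
    rw [map_sub, ← h2, h1, sub_self]
  have hdvd1 : (p : ℤ_[p]) ∣ X ^ m - (a₀ : ℤ_[p]) := by
    have hker := PadicInt.ker_toZMod (p := p)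
    have : X ^ m - (a₀:ℤ_[p]) ∈ RingHom.ker (PadicInt.toZMod (p := p)) := hZ
    rw [hker, PadicInt.maximalIdeal_eq_span_p, Ideal.mem_span_singleton] at this
    exact this
  have hdvd2 : (p : ℤ_[p]) ^ (s + 1) ∣ X ^ k - ((a₀:ℤ_[p])) ^ (p ^ s) := by
    have h := dvd_sub_pow_of_dvd_sub hdvd1 s
    rw [← pow_mul] at h
    rw [hkdef]
    exact_mod_cast h
  have hnorm2 : ‖X ^ k - ((a₀:ℤ_[p])) ^ (p ^ s)‖ ≤ (p:ℝ) ^ (-((s+1:ℕ)) : ℤ) := by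
    exact (PadicInt.norm_le_pow_iff_mem_span_pow (X ^ k - ((a₀:ℤ_[p])) ^ (p ^ s)) (s+1)).mpr
      (by rw [Ideal.mem_span_singleton]; exact hdvd2)
  -- final assembly
  have key : a - (a₀ : ℚ_[p]) ^ (p ^ s) = (ε * f x) + ((X:ℚ_[p]) ^ k - ((a₀:ℚ_[p])) ^ (p ^ s)) := by
    have hXx : (X : ℚ_[p]) = x := rfl
    rw [hXx, hxeq]; ring
  rw [key]
  apply lt_of_le_of_lt (Padic.nonarchimedean _ _)
  apply max_lt hεf
  have : ‖(X:ℚ_[p]) ^ k - ((a₀:ℚ_[p])) ^ (p ^ s)‖ = ‖X ^ k - ((a₀:ℤ_[p])) ^ (p ^ s)‖ := by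
    rw [PadicInt.norm_def]; push_cast; ring_nf
  rw [this]
  apply lt_of_le_of_lt hnorm2
  apply zpow_lt_zpow_right₀ hp1
  push_cast
  omega
end
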